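/- arXiv:2109.05645 — 7 statements merged into one kernel-verified Lean document; each statement's English description precedes it below -/
import Mathlib

section
/- For every p > 0 and every real x > -1, one has (1+x)^{-p/2} ≥ 1 - (p/2)x + (p(p+2)/9)x² - (p(p+2)(p+4)/72)x³. -/
open Real Set

/-- Helper: monotonicity on a convex set from pointwise derivatives. -/
lemma aux_mono {D : Set ℝ} (hD : Convex ℝ D) {f f' : ℝ → ℝ} (hc : ContinuousOn f D)
    (hder : ∀ x ∈ interior D, HasDerivAt f (f' x) x)
    (hpos : ∀ x ∈ interior D, 0 ≤ f' x) : MonotoneOn f D :=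
  monotoneOn_of_hasDerivWithinAt_nonneg hD hc
    (fun x hx => (hder x hx).hasDerivWithinAt) hpos

lemma aux_anti {D : Set ℝ} (hD : Convex ℝ D) {f f' : ℝ → ℝ} (hc : ContinuousOn f D)
    (hder : ∀ x ∈ interior D, HasDerivAt f (f' x) x)
    (hneg : ∀ x ∈ interior D, f' x ≤ 0) : AntitoneOn f D := by
  apply antitoneOn_of_deriv_nonpos hD hc
  · intro x hx
    exact ((hder x hx).differentiableAt.differentiableWithinAt)
  · intro x hx
    rw [(hder x hx).deriv]
    exact hneg x hx

/-- Padé-type bound: `e^{-t} ≥ (2-t)/(2+t)` for `t ≥ 0` (in multiplied form). -/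
lemma exp_pade (t : ℝ) (ht : 0 ≤ t) : 2 - t ≤ Real.exp (-t) * (2 + t) := by
  have key : MonotoneOn (fun u : ℝ => Real.exp (-u) * (2 + u) - (2 - u)) (Ici 0) := by
    apply aux_mono (convex_Ici 0)
      (f' := fun u => Real.exp (-u) * (-1) * (2 + u) + Real.exp (-u) * 1 - (-1))
    · fun_prop
    · intro u _
      have h1 : HasDerivAt (fun u : ℝ => -u) (-1) u := (hasDerivAt_id u).neg
      have h2 : HasDerivAt (fun u : ℝ => Real.exp (-u)) (Real.exp (-u) * (-1)) u :=
        (Real.hasDerivAt_exp (-u)).comp u h1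
      have h3 : HasDerivAt (fun u : ℝ => 2 + u) (1 : ℝ) u := (hasDerivAt_id u).const_add 2
      have h4 : HasDerivAt (fun u : ℝ => 2 - u) (-1 : ℝ) u := (hasDerivAt_id u).const_sub 2
      exact (h2.mul h3).sub h4
    · intro u _
      have h5 : (1 + u) * Real.exp (-u) ≤ 1 := by
        have h6 : 1 + u ≤ Real.exp u := by
          have := Real.add_one_le_exp u; linarith
        have h7 : 0 < Real.exp (-u) := Real.exp_pos _
        calc (1 + u) * Real.exp (-u) ≤ Real.exp u * Real.exp (-u) :=
              mul_le_mul_of_nonneg_right h6 h7.le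
          _ = 1 := by rw [← Real.exp_add]; simp
      nlinarith [Real.exp_pos (-u)]
  have h0 : (0:ℝ) ∈ Ici (0:ℝ) := self_mem_Ici
  have := key h0 (mem_Ici.2 ht) ht
  simp only [neg_zero, Real.exp_zero] at this
  linarith

/-- `e^s ≥ 1 + s + s²/2` for `s ≥ 0`. -/
lemma exp_quad (s : ℝ) (hs : 0 ≤ s) : 1 + s + s ^ 2 / 2 ≤ Real.exp s := by
  have key : MonotoneOn (fun u : ℝ => Real.exp u - (1 + u + u ^ 2 / 2)) (Ici 0) := by
    apply aux_mono (convex_Ici 0) (f' := fun u => Real.exp u - (0 + 1 + 2 * u / 2))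
    · fun_prop
    · intro u _
      exact ((Real.hasDerivAt_exp u).sub
        (((hasDerivAt_const u (1:ℝ)).add (hasDerivAt_id u)).add
          (((hasDerivAt_id u).pow 2).div_const 2))).congr_deriv (by norm_num)
    · intro u hu
      simp only [interior_Ici, mem_Ioi] at hu
      have := Real.add_one_le_exp u
      nlinarith
  have h0 : (0:ℝ) ∈ Ici (0:ℝ) := self_mem_Ici
  have := key h0 (mem_Ici.2 hs) hs
  simp only [Real.exp_zero] at this
  nlinarith

/-- `e^s ≥ 1 + s + s²/2 + s³/6` for `s ≥ 0`. -/
lemma exp_cubic (s : ℝ) (hs : 0 ≤ s) : 1 + s + s ^ 2 / 2 + s ^ 3 / 6 ≤ Real.exp s := by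
  have key : MonotoneOn (fun u : ℝ => Real.exp u - (1 + u + u ^ 2 / 2 + u ^ 3 / 6)) (Ici 0) := by
    apply aux_mono (convex_Ici 0)
      (f' := fun u => Real.exp u - (0 + 1 + 2 * u / 2 + 3 * u ^ 2 / 6))
    · fun_prop
    · intro u _
      exact ((Real.hasDerivAt_exp u).sub
        ((((hasDerivAt_const u (1:ℝ)).add (hasDerivAt_id u)).add
          (((hasDerivAt_id u).pow 2).div_const 2)).add
          (((hasDerivAt_id u).pow 3).div_const 6))).congr_deriv (by norm_num)
    · intro u hu
      simp only [interior_Ici, mem_Ioi] at hu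
      have := exp_quad u hu.le
      nlinarith
  have h0 : (0:ℝ) ∈ Ici (0:ℝ) := self_mem_Ici
  have := key h0 (mem_Ici.2 hs) hs
  simp only [Real.exp_zero] at this
  nlinarith

/-- `log (1+x) ≤ x - 4x²/9 + 2x³/9` for `x ≥ 0`. -/
lemma log_le_cubic (x : ℝ) (hx : 0 ≤ x) :
    Real.log (1 + x) ≤ x - 4 * x ^ 2 / 9 + 2 * x ^ 3 / 9 := by
  have key : MonotoneOn
      (fun u : ℝ => u - 4 * u ^ 2 / 9 + 2 * u ^ 3 / 9 - Real.log (1 + u)) (Ici 0) := by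
    apply aux_mono (convex_Ici 0)
      (f' := fun u => 1 - 4 * (2 * u) / 9 + 2 * (3 * u ^ 2) / 9 - (1 + u)⁻¹ * 1)
    · apply ContinuousOn.sub
      · fun_prop
      · apply ContinuousOn.log
        · fun_prop
        · intro u hu
          simp only [mem_Ici] at hu
          positivity
    · intro u hu
      simp only [interior_Ici, mem_Ioi] at hu
      have hne : (1 : ℝ) + u ≠ 0 := by positivity
      have hlog : HasDerivAt (fun u : ℝ => Real.log (1 + u)) ((1 + u)⁻¹ * 1) u :=
        (Real.hasDerivAt_log hne).comp u ((hasDerivAt_id u).const_add 1)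
      exact ((((hasDerivAt_id u).sub
        ((((hasDerivAt_id u).pow 2).const_mul 4).div_const 9)).add
        ((((hasDerivAt_id u).pow 3).const_mul 2).div_const 9)).sub hlog).congr_deriv
        (by norm_num)
    · intro u hu
      simp only [interior_Ici, mem_Ioi] at hu
      have h1 : (0:ℝ) < 1 + u := by linarith
      have hz : (1 + u) * (1 + u)⁻¹ = 1 := mul_inv_cancel₀ (by positivity)
      nlinarith [sq_nonneg (6 * u - 1), mul_pos hu (mul_pos hu hu),
        inv_pos.2 h1, mul_pos hu (inv_pos.2 h1)]
  have h0 : (0:ℝ) ∈ Ici (0:ℝ) := self_mem_Ici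
  have := key h0 (mem_Ici.2 hx) hx
  simp only [add_zero, Real.log_one] at this
  linarith

/-- `log (1+x) ≤ x - x²/2 + x³/3` for `-1 < x ≤ 0`. -/
lemma log_le_cubic_neg (x : ℝ) (hx1 : -1 < x) (hx0 : x ≤ 0) :
    Real.log (1 + x) ≤ x - x ^ 2 / 2 + x ^ 3 / 3 := by
  have key : AntitoneOn
      (fun u : ℝ => u - u ^ 2 / 2 + u ^ 3 / 3 - Real.log (1 + u)) (Ioc (-1) 0) := by
    apply aux_anti (convex_Ioc (-1) 0)
      (f' := fun u => 1 - 2 * u / 2 + 3 * u ^ 2 / 3 - (1 + u)⁻¹ * 1)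
    · apply ContinuousOn.sub
      · fun_prop
      · apply ContinuousOn.log
        · fun_prop
        · intro u hu
          simp only [mem_Ioc] at hu
          have : (0:ℝ) < 1 + u := by linarith [hu.1]
          exact ne_of_gt this
    · intro u hu
      rw [interior_Ioc] at hu
      simp only [mem_Ioo] at hu
      have hne : (1 : ℝ) + u ≠ 0 := by
        have : (0:ℝ) < 1 + u := by linarith [hu.1]
        exact ne_of_gt this
      have hlog : HasDerivAt (fun u : ℝ => Real.log (1 + u)) ((1 + u)⁻¹ * 1) u :=
        (Real.hasDerivAt_log hne).comp u ((hasDerivAt_id u).const_add 1)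
      exact ((((hasDerivAt_id u).sub (((hasDerivAt_id u).pow 2).div_const 2)).add
        (((hasDerivAt_id u).pow 3).div_const 3)).sub hlog).congr_deriv (by norm_num)
    · intro u hu
      rw [interior_Ioc] at hu
      simp only [mem_Ioo] at hu
      have h1 : (0:ℝ) < 1 + u := by linarith [hu.1]
      have hz : (1 + u) * (1 + u)⁻¹ = 1 := mul_inv_cancel₀ (ne_of_gt h1)
      -- (1+u)(1 - u + u²) = 1 + u³ ≤ 1 since u < 0
      nlinarith [inv_pos.2 h1, mul_pos (mul_pos h1 h1) (inv_pos.2 h1),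
        mul_nonneg (sq_nonneg u) (neg_nonneg.2 hu.2.le)]
  have h0 : (0:ℝ) ∈ Ioc (-1:ℝ) 0 := by constructor <;> norm_num
  have hxm : x ∈ Ioc (-1:ℝ) 0 := ⟨hx1, hx0⟩
  have := key hxm h0 hx0
  simp only [add_zero, Real.log_one] at this
  linarith

theorem stmt_0 (p x : ℝ) (hp : 0 < p) (hx : -1 < x) :
    (1 + x) ^ (-(p / 2)) ≥
      1 - (p / 2) * x + (p * (p + 2) / 9) * x ^ 2 - (p * (p + 2) * (p + 4) / 72) * x ^ 3 := by
  have hx1 : (0:ℝ) < 1 + x := by linarith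
  have hL : (1 + x) ^ (-(p / 2)) = Real.exp (Real.log (1 + x) * (-(p / 2))) :=
    Real.rpow_def_of_pos hx1 _
  set L := Real.log (1 + x) with hLdef
  rcases lt_trichotomy x 0 with hx0 | hx0 | hx0
  · -- Case x < 0
    have hlog := log_le_cubic_neg x hx hx0.le
    set σ := p / 2 * (-x + x ^ 2 / 2 - x ^ 3 / 3) with hσ
    have hcube : 0 ≤ -x + x ^ 2 / 2 - x ^ 3 / 3 := by
      nlinarith [mul_nonneg (sq_nonneg x) (neg_nonneg.2 hx0.le)]
    have hσ0 : 0 ≤ σ := mul_nonneg (by linarith) hcube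
    have hσL : σ ≤ L * (-(p / 2)) := by nlinarith [hlog]
    have hexp : Real.exp σ ≤ (1 + x) ^ (-(p / 2)) := by
      rw [hL]; exact Real.exp_le_exp.2 hσL
    have hcub := exp_cubic σ hσ0
    have hfinal : 1 - p / 2 * x + p * (p + 2) / 9 * x ^ 2 - p * (p + 2) * (p + 4) / 72 * x ^ 3 ≤
        1 + σ + σ ^ 2 / 2 + σ ^ 3 / 6 := by
      have hu : (0:ℝ) ≤ -x := by linarith
      have hp' := hp.le
      have m12 : 0 ≤ p ^ 1 * (-x) ^ 2 := by positivity
      have m13 : 0 ≤ p ^ 1 * (-x) ^ 3 := by positivity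
      have m22 : 0 ≤ p ^ 2 * (-x) ^ 2 := by positivity
      have m23 : 0 ≤ p ^ 2 * (-x) ^ 3 := by positivity
      have m24 : 0 ≤ p ^ 2 * (-x) ^ 4 := by positivity
      have m25 : 0 ≤ p ^ 2 * (-x) ^ 5 := by positivity
      have m26 : 0 ≤ p ^ 2 * (-x) ^ 6 := by positivity
      have m33 : 0 ≤ p ^ 3 * (-x) ^ 3 := by positivity
      have m34 : 0 ≤ p ^ 3 * (-x) ^ 4 := by positivity
      have m35 : 0 ≤ p ^ 3 * (-x) ^ 5 := by positivity
      have m36 : 0 ≤ p ^ 3 * (-x) ^ 6 := by positivity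
      have m37 : 0 ≤ p ^ 3 * (-x) ^ 7 := by positivity
      have m38 : 0 ≤ p ^ 3 * (-x) ^ 8 := by positivity
      have m39 : 0 ≤ p ^ 3 * (-x) ^ 9 := by positivity
      rw [hσ]
      linarith [m12, m13, m22, m23, m24, m25, m26, m33, m34, m35, m36, m37, m38, m39]
    linarith [hexp, hcub, hfinal]
  · -- Case x = 0
    subst hx0
    simp [Real.one_rpow]
  · -- Case x > 0
    have hLx : L ≤ x := by
      have := Real.log_le_sub_one_of_pos hx1
      rw [← hLdef] at this; linarith
    rcases le_or_gt 8 ((p + 4) * x) with hbig | hsmall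
    · -- Bernoulli case
      have bern : 1 - p / 2 * x ≤ (1 + x) ^ (-(p / 2)) := by
        rw [hL]
        have h2 := Real.add_one_le_exp (L * (-(p / 2)))
        have h3 : p / 2 * (x - L) ≥ 0 := mul_nonneg (by linarith) (by linarith)
        nlinarith
      have key : 0 ≤ p * (p + 2) * x ^ 2 * ((p + 4) * x - 8) :=
        mul_nonneg (by positivity) (by linarith)
      nlinarith [bern, key]
    · -- Padé case
      have hg0 : 0 ≤ x - 4 * x ^ 2 / 9 + 2 * x ^ 3 / 9 := by
        nlinarith [sq_nonneg (x - 1), hx0.le, mul_nonneg hx0.le (sq_nonneg (x - 1))]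
      set t := p / 2 * (x - 4 * x ^ 2 / 9 + 2 * x ^ 3 / 9) with htdef
      have ht0 : 0 ≤ t := mul_nonneg (by linarith) hg0
      have hLg := log_le_cubic x hx0.le
      have hexp : Real.exp (-t) ≤ (1 + x) ^ (-(p / 2)) := by
        rw [hL]
        apply Real.exp_le_exp.2
        rw [htdef]
        nlinarith [hLg]
      have hpade := exp_pade t ht0
      have hx2 : x < 2 := by nlinarith [mul_pos hp hx0]
      -- polynomial certificate
      have hE : 0 ≤ 756 - 337 * x + 384 * x ^ 2 - 100 * x ^ 3 + 48 * x ^ 4 - 4 * x ^ 5 := by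
        have h1 : 0 ≤ x ^ 4 * (2 - x) := mul_nonneg (by positivity) (by linarith)
        have h2 : 0 ≤ x ^ 2 * (2 - x) := mul_nonneg (by positivity) (by linarith)
        have h3 := sq_nonneg (368 * x - 337)
        have h4 : 0 ≤ x ^ 4 := by positivity
        linarith
      have hA : 0 < x ^ 2 * (2 * x ^ 2 - 4 * x + 9) := by nlinarith [sq_nonneg (x - 1), sq_nonneg x, mul_pos hx0 hx0]
      set r := 1 - p / 2 * x + p * (p + 2) / 9 * x ^ 2 - p * (p + 2) * (p + 4) / 72 * x ^ 3 with hrdef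
      have hAG : 0 ≤ 1296 * (x ^ 2 * (2 * x ^ 2 - 4 * x + 9)) * ((2 - t) - r * (2 + t)) := by
        have hid : 1296 * (x ^ 2 * (2 * x ^ 2 - 4 * x + 9)) * ((2 - t) - r * (2 + t)) =
            x ^ 2 * p ^ 2 * ((x ^ 2 * (2 * x ^ 2 - 4 * x + 9)) * p
              + x * (6 * x ^ 3 - 20 * x ^ 2 + 43 * x - 18)) ^ 2
            + x ^ 5 * p ^ 2 *
              (756 - 337 * x + 384 * x ^ 2 - 100 * x ^ 3 + 48 * x ^ 4 - 4 * x ^ 5) := by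
          rw [htdef, hrdef]; ring
        have hsq : 0 ≤ x ^ 2 * p ^ 2 * ((x ^ 2 * (2 * x ^ 2 - 4 * x + 9)) * p
            + x * (6 * x ^ 3 - 20 * x ^ 2 + 43 * x - 18)) ^ 2 := by positivity
        have hxE : 0 ≤ x ^ 5 * p ^ 2 *
            (756 - 337 * x + 384 * x ^ 2 - 100 * x ^ 3 + 48 * x ^ 4 - 4 * x ^ 5) :=
          mul_nonneg (by positivity) hE
        linarith
      have hG : 0 ≤ (2 - t) - r * (2 + t) :=
        nonneg_of_mul_nonneg_right hAG (by linarith)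
      have h2t : (0:ℝ) < 2 + t := by linarith
      have hr2t : r * (2 + t) ≤ (1 + x) ^ (-(p / 2)) * (2 + t) := by
        calc r * (2 + t) ≤ 2 - t := by linarith
          _ ≤ Real.exp (-t) * (2 + t) := hpade
          _ ≤ (1 + x) ^ (-(p / 2)) * (2 + t) := mul_le_mul_of_nonneg_right hexp h2t.le
      have := le_of_mul_le_mul_right hr2t h2t
      rw [hrdef] at this
      linarith
end

section
/- The function ψ(x) = sin(x)/(cos x)^{1/3} is strictly convex on [0, π/2). -/
open Real Set

private lemma cube_root_eqs {x : ℝ} (hc : 0 < Real.cos x) :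
    Real.cos x = (Real.cos x ^ ((1:ℝ)/3)) ^ 3 ∧
    Real.cos x ^ ((2:ℝ)/3) = (Real.cos x ^ ((1:ℝ)/3)) ^ 2 ∧
    Real.cos x ^ (-(4:ℝ)/3) = ((Real.cos x ^ ((1:ℝ)/3)) ^ 4)⁻¹ ∧
    Real.cos x ^ ((1:ℝ)/3 - 1) = ((Real.cos x ^ ((1:ℝ)/3)) ^ 2)⁻¹ ∧
    Real.cos x ^ ((2:ℝ)/3 - 1) = (Real.cos x ^ ((1:ℝ)/3))⁻¹ ∧
    Real.cos x ^ (-(4:ℝ)/3 - 1) = ((Real.cos x ^ ((1:ℝ)/3)) ^ 7)⁻¹ ∧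
    Real.cos x ^ (-(7:ℝ)/3) = ((Real.cos x ^ ((1:ℝ)/3)) ^ 7)⁻¹ := by
  have h0 : (0:ℝ) ≤ Real.cos x := hc.le
  refine ⟨?_, ?_, ?_, ?_, ?_, ?_, ?_⟩
  · rw [← Real.rpow_natCast (Real.cos x ^ ((1:ℝ)/3)), ← Real.rpow_mul h0]; norm_num
  · rw [← Real.rpow_natCast (Real.cos x ^ ((1:ℝ)/3)), ← Real.rpow_mul h0]; norm_num
  · rw [← Real.rpow_natCast (Real.cos x ^ ((1:ℝ)/3)), ← Real.rpow_mul h0, ← Real.rpow_neg h0]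
    norm_num
  · rw [← Real.rpow_natCast (Real.cos x ^ ((1:ℝ)/3)), ← Real.rpow_mul h0, ← Real.rpow_neg h0]
    norm_num
  · rw [← Real.rpow_neg h0]; norm_num
  · rw [← Real.rpow_natCast (Real.cos x ^ ((1:ℝ)/3)), ← Real.rpow_mul h0, ← Real.rpow_neg h0]
    norm_num
  · rw [← Real.rpow_natCast (Real.cos x ^ ((1:ℝ)/3)), ← Real.rpow_mul h0, ← Real.rpow_neg h0]
    norm_num

private lemma deriv1 {x : ℝ} (hc : 0 < Real.cos x) :
    HasDerivAt (fun x => Real.sin x / (Real.cos x) ^ ((1 : ℝ) / 3))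
      (Real.cos x ^ ((2:ℝ)/3) + Real.sin x ^ 2 * Real.cos x ^ (-(4:ℝ)/3) / 3) x := by
  have hc' : Real.cos x ≠ 0 := hc.ne'
  have hv : HasDerivAt (fun x => Real.cos x ^ ((1:ℝ)/3))
      (-Real.sin x * ((1:ℝ)/3) * Real.cos x ^ ((1:ℝ)/3 - 1)) x :=
    (Real.hasDerivAt_cos x).rpow_const (Or.inl hc')
  have hcp : (0:ℝ) < Real.cos x ^ ((1:ℝ)/3) := Real.rpow_pos_of_pos hc _
  have hd := (Real.hasDerivAt_sin x).div hv hcp.ne'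
  refine hd.congr_deriv ?_
  obtain ⟨h1, h2, h3, h4, -⟩ := cube_root_eqs hc
  have hcp : (0:ℝ) < Real.cos x ^ ((1:ℝ)/3) := Real.rpow_pos_of_pos hc _
  rw [h2, h3, h4]
  set c := Real.cos x ^ ((1:ℝ)/3) with hcdef
  rw [h1]
  field_simp
  ring

private lemma deriv2 {x : ℝ} (hc : 0 < Real.cos x) :
    HasDerivAt (fun x => Real.cos x ^ ((2:ℝ)/3) + Real.sin x ^ 2 * Real.cos x ^ (-(4:ℝ)/3) / 3)
      (4/9 * Real.sin x ^ 3 * Real.cos x ^ (-(7:ℝ)/3)) x := by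
  have hc' : Real.cos x ≠ 0 := hc.ne'
  have h1 : HasDerivAt (fun x => Real.cos x ^ ((2:ℝ)/3))
      (-Real.sin x * ((2:ℝ)/3) * Real.cos x ^ ((2:ℝ)/3 - 1)) x :=
    (Real.hasDerivAt_cos x).rpow_const (Or.inl hc')
  have h2 : HasDerivAt (fun x => Real.cos x ^ (-(4:ℝ)/3))
      (-Real.sin x * (-(4:ℝ)/3) * Real.cos x ^ (-(4:ℝ)/3 - 1)) x :=
    (Real.hasDerivAt_cos x).rpow_const (Or.inl hc')
  have h3 : HasDerivAt (fun x => Real.sin x ^ 2) (2 * Real.sin x * Real.cos x) x := by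
    have := ((Real.hasDerivAt_sin x).pow 2)
    exact this.congr_deriv (by norm_num)
  have hd := h1.add (((h3.mul h2).div_const 3))
  refine hd.congr_deriv ?_
  obtain ⟨hce, -, h34, -, h5, h6, h7⟩ := cube_root_eqs hc
  have hcp : (0:ℝ) < Real.cos x ^ ((1:ℝ)/3) := Real.rpow_pos_of_pos hc _
  rw [h34, h5, h6, h7]
  set c := Real.cos x ^ ((1:ℝ)/3) with hcdef
  rw [hce]
  field_simp
  ring

theorem stmt_1 :
    StrictConvexOn ℝ (Ico (0 : ℝ) (π / 2)) (fun x => Real.sin x / (Real.cos x) ^ ((1 : ℝ) / 3)) := by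
  have hcos : ∀ x ∈ Ico (0:ℝ) (π/2), 0 < Real.cos x := by
    intro x hx
    exact Real.cos_pos_of_mem_Ioo ⟨by linarith [Real.pi_pos, hx.1], hx.2⟩
  apply strictConvexOn_of_deriv2_pos (convex_Ico _ _)
  · apply ContinuousOn.div Real.continuous_sin.continuousOn
    · exact (Real.continuous_cos.rpow_const (fun x => Or.inr (by norm_num))).continuousOn
    · intro x hx
      exact (Real.rpow_pos_of_pos (hcos x hx) _).ne'
  · intro x hx
    rw [interior_Ico] at hx
    have hc : 0 < Real.cos x := hcos x ⟨hx.1.le, hx.2⟩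
    have hopen : IsOpen {y : ℝ | 0 < Real.cos y} := isOpen_lt continuous_const Real.continuous_cos
    have hmem : {y : ℝ | 0 < Real.cos y} ∈ nhds x := hopen.mem_nhds hc
    have hev : deriv (fun x => Real.sin x / (Real.cos x) ^ ((1 : ℝ) / 3)) =ᶠ[nhds x]
        (fun x => Real.cos x ^ ((2:ℝ)/3) + Real.sin x ^ 2 * Real.cos x ^ (-(4:ℝ)/3) / 3) := by
      filter_upwards [hmem] with y hy
      exact (deriv1 hy).deriv
    have : deriv^[2] (fun x => Real.sin x / (Real.cos x) ^ ((1 : ℝ) / 3)) x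
        = 4/9 * Real.sin x ^ 3 * Real.cos x ^ (-(7:ℝ)/3) := by
      rw [Function.iterate_succ, Function.iterate_one, Function.comp_apply]
      rw [hev.deriv_eq]
      exact (deriv2 hc).deriv
    rw [this]
    have hs : 0 < Real.sin x := Real.sin_pos_of_pos_of_lt_pi hx.1 (hx.2.trans (by linarith [Real.pi_pos]))
    have := Real.rpow_pos_of_pos hc (-(7:ℝ)/3)
    positivity
end

section
/- Let X be a random vector in ℝᵏ with density f such that ‖f‖_∞ = f(0) and f is lower semicontinuous at 0. Let ‖·‖ be a norm on ℝᵏ with closed unit ball K. Then f(0) = lim_{q → k⁻} ((k-q)/(k·vol_k(K)))·E‖X‖^{-q}. -/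
open MeasureTheory Set Filter

private def Esyn (k : ℕ) (_N : (Fin k → ℝ) → ℝ) : Type := Fin k → ℝ

private lemma exists_norm_bounds (k : ℕ) (N : (Fin k → ℝ) → ℝ)
    (hN0 : ∀ x, N x = 0 ↔ x = 0)
    (hNhom : ∀ (a : ℝ) x, N (a • x) = |a| * N x)
    (hNtri : ∀ x y, N (x + y) ≤ N x + N y) :
    ∃ C₁ C₂ : ℝ, 0 < C₁ ∧ 0 < C₂ ∧ ∀ x, C₁ * ‖x‖ ≤ N x ∧ N x ≤ C₂ * ‖x‖ := by
  letI : AddCommGroup (Esyn k N) := Pi.addCommGroup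
  letI : Module ℝ (Esyn k N) := Pi.module _ _ _
  letI : NormedAddCommGroup (Esyn k N) := AddGroupNorm.toNormedAddCommGroup
    { toFun := N
      map_zero' := (hN0 0).2 rfl
      add_le' := hNtri
      neg' := fun x => by
        have := hNhom (-1) x
        rw [abs_neg, abs_one, one_mul] at this
        convert this using 2
        exact congrArg N (neg_one_smul ℝ (x : Fin k → ℝ)).symm
      eq_zero_of_map_eq_zero' := fun x hx => (hN0 x).1 hx }
  letI : NormedSpace ℝ (Esyn k N) :=
    { norm_smul_le := fun a x => le_of_eq (hNhom a x) }
  let e : (Fin k → ℝ) ≃ₗ[ℝ] Esyn k N :=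
    { toFun := fun x => x
      invFun := fun x => x
      map_add' := fun _ _ => rfl
      map_smul' := fun _ _ => rfl
      left_inv := fun _ => rfl
      right_inv := fun _ => rfl }
  haveI : FiniteDimensional ℝ (Esyn k N) := e.finiteDimensional
  have hnorm : ∀ x : Esyn k N, ‖x‖ = N x := fun _ => rfl
  let L1 : (Fin k → ℝ) →L[ℝ] Esyn k N := LinearMap.toContinuousLinearMap e.toLinearMap
  let L2 : Esyn k N →L[ℝ] (Fin k → ℝ) := LinearMap.toContinuousLinearMap e.symm.toLinearMap
  obtain ⟨C₂, hC₂, hC₂le⟩ := L1.bound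
  obtain ⟨C₃, hC₃, hC₃le⟩ := L2.bound
  refine ⟨C₃⁻¹, C₂, inv_pos.2 hC₃, hC₂, fun x => ⟨?_, ?_⟩⟩
  · have := hC₃le (e x)
    rw [hnorm] at this
    have hx : ‖x‖ ≤ C₃ * N x := this
    rw [inv_mul_le_iff₀ hC₃]
    exact hx
  · have := hC₂le x
    rw [hnorm] at this
    exact this

set_option maxHeartbeats 1000000 in
theorem stmt_7 (k : ℕ) (hk : 0 < k)
    (N : (Fin k → ℝ) → ℝ)
    (hN0 : ∀ x, N x = 0 ↔ x = 0)
    (hNhom : ∀ (a : ℝ) x, N (a • x) = |a| * N x)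
    (hNtri : ∀ x y, N (x + y) ≤ N x + N y)
    (K : Set (Fin k → ℝ)) (hK : K = {x | N x ≤ 1})
    (f : (Fin k → ℝ) → ℝ)
    (hf_nonneg : ∀ x, 0 ≤ f x) (hf_meas : Measurable f)
    (hf_prob : ∫ x, f x = 1)
    (hf_max : ∀ x, f x ≤ f 0)
    (hf_lsc : LowerSemicontinuousAt f 0) :
    Tendsto (fun q : ℝ => ((k - q) / (k * (volume K).toReal)) * ∫ x, (N x) ^ (-q) * f x)
      (nhdsWithin (k : ℝ) (Iio (k : ℝ))) (nhds (f 0)) := by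
  classical
  open Real Pointwise in
  obtain ⟨C₁, C₂, hC₁, hC₂, hbd⟩ := exists_norm_bounds k N hN0 hNhom hNtri
  haveI : Nonempty (Fin k) := ⟨⟨0, hk⟩⟩
  -- basic facts about N
  have hNnn : ∀ x, 0 ≤ N x := fun x => le_trans (by positivity) ((hbd x).1)
  have hNcont : Continuous N := by
    have : LipschitzWith (Real.toNNReal C₂) N := by
      apply LipschitzWith.of_dist_le_mul
      intro x y
      rw [Real.dist_eq, Real.coe_toNNReal _ hC₂.le, dist_eq_norm]
      have h1 : N x ≤ N y + N (x - y) := by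
        have := hNtri y (x - y); simpa using this
      have h2 : N y ≤ N x + N (x - y) := by
        have := hNtri x (y - x)
        have hxy : N (y - x) = N (x - y) := by
          have := hNhom (-1) (x - y); simpa [neg_one_smul, neg_sub] using this
        rw [hxy] at this; simpa using this
      have h3 : N (x - y) ≤ C₂ * ‖x - y‖ := (hbd (x - y)).2
      rw [abs_sub_le_iff]; constructor <;> linarith
    exact this.continuous
  have hNmeas : Measurable N := hNcont.measurable
  have hrpm : ∀ c : ℝ, Measurable (fun y : ℝ => y ^ c) := by
    intro c
    apply measurable_of_continuousOn_compl_singleton (0 : ℝ)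
    intro y hy
    exact (Real.continuousAt_rpow_const y c (Or.inl hy)).continuousWithinAt
  have hNq : ∀ c : ℝ, Measurable (fun x => N x ^ c) := fun c => (hrpm c).comp hNmeas
  have hsetm : ∀ r : ℝ, MeasurableSet {x | N x ≤ r} := fun r =>
    hNmeas measurableSet_Iic
  -- K has finite positive volume
  have hKfin : volume K ≠ ⊤ := by
    have hsub : K ⊆ Metric.closedBall 0 C₁⁻¹ := by
      intro x hx
      rw [hK] at hx
      simp only [Metric.mem_closedBall, dist_zero_right]
      have h1 := (hbd x).1
      have hx1 : N x ≤ 1 := hx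
      nlinarith [norm_nonneg x, mul_inv_cancel₀ hC₁.ne']
    exact ne_top_of_le_ne_top (IsCompact.measure_ne_top (isCompact_closedBall 0 C₁⁻¹))
      (measure_mono hsub)
  have hKpos : 0 < volume K := by
    have hsub : Metric.closedBall 0 C₂⁻¹ ⊆ K := by
      intro x hx
      rw [hK]
      simp only [Metric.mem_closedBall, dist_zero_right] at hx
      have h2 := (hbd x).2
      have : N x ≤ C₂ * C₂⁻¹ := le_trans h2 (by nlinarith)
      simpa [mul_inv_cancel₀ hC₂.ne'] using this
    calc 0 < volume (Metric.closedBall (0 : Fin k → ℝ) C₂⁻¹) :=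
          Metric.measure_closedBall_pos _ _ (inv_pos.2 hC₂)
      _ ≤ volume K := measure_mono hsub
  have hc : 0 < (volume K).toReal := ENNReal.toReal_pos hKpos.ne' hKfin
  -- scaling of sublevel sets
  have hscale : ∀ r : ℝ, 0 < r →
      volume {x | N x ≤ r} = ENNReal.ofReal (r ^ (k : ℝ)) * volume K := by
    intro r hr
    have hset : {x | N x ≤ r} = r • K := by
      ext x
      rw [mem_smul_set_iff_inv_smul_mem₀ hr.ne']
      rw [hK]
      simp only [mem_setOf_eq, hNhom, abs_inv, abs_of_pos hr]
      rw [inv_mul_le_one₀ hr]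
    rw [hset, Measure.addHaar_smul_of_nonneg volume hr.le K,
      Module.finrank_fin_fun, Real.rpow_natCast]
  -- layer cake computation
  have hkpos : (0:ℝ) < k := by exact_mod_cast hk
  have hIr : ∀ r q : ℝ, 0 < r → 0 < q → q < k →
      ∫⁻ x in {x | N x ≤ r}, ENNReal.ofReal (N x ^ (-q))
        = ENNReal.ofReal (r ^ ((k : ℝ) - q) * (k / ((k : ℝ) - q))) * volume K := by
    intro r q hr hq hqk
    have hkq : (0:ℝ) < (k:ℝ) - q := by linarith
    have h0 : volume ({(0 : Fin k → ℝ)}) = 0 := measure_singleton _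
    rw [lintegral_eq_lintegral_meas_le _
      (Eventually.of_forall fun x => rpow_nonneg (hNnn x) _) ((hNq (-q)).aemeasurable)]
    have hset : ∀ t : ℝ, 0 < t →
        (volume.restrict {x | N x ≤ r}) {a | t ≤ N a ^ (-q)}
          = ENNReal.ofReal (min (t ^ (-q⁻¹)) r ^ (k : ℝ)) * volume K := by
      intro t ht
      have hmbl : MeasurableSet {a | t ≤ N a ^ (-q)} :=
        measurableSet_le measurable_const (hNq (-q))
      rw [Measure.restrict_apply hmbl]
      have heq : {a | t ≤ N a ^ (-q)} ∩ {a | N a ≤ r}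
          = {a | N a ≤ min (t ^ (-q⁻¹)) r} \ {(0 : Fin k → ℝ)} := by
        ext a
        simp only [mem_inter_iff, mem_setOf_eq, mem_diff, mem_singleton_iff, le_min_iff]
        constructor
        · rintro ⟨h1, h2⟩
          have hNa : 0 < N a := by
            rcases lt_or_eq_of_le (hNnn a) with h | h
            · exact h
            · exfalso
              rw [← h, Real.zero_rpow (neg_ne_zero.2 hq.ne')] at h1; linarith
          refine ⟨⟨?_, h2⟩, fun h => by simp [(hN0 a).2 h] at hNa⟩
          have := rpow_le_rpow_of_nonpos ht h1 (neg_nonpos.2 (inv_pos.2 hq).le)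
          rwa [← Real.rpow_mul (hNnn a), neg_mul_neg, mul_inv_cancel₀ hq.ne',
            Real.rpow_one] at this
        · rintro ⟨⟨h1, h2⟩, h3⟩
          have hNa : 0 < N a := lt_of_le_of_ne (hNnn a) fun h => h3 ((hN0 a).1 h.symm)
          refine ⟨?_, h2⟩
          have := rpow_le_rpow_of_nonpos hNa h1 (neg_nonpos.2 hq.le)
          rwa [← Real.rpow_mul ht.le, neg_mul_neg, inv_mul_cancel₀ hq.ne',
            Real.rpow_one] at this
      rw [heq, measure_diff_null h0, hscale _ (lt_min (rpow_pos_of_pos ht _) hr)]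
    rw [setLIntegral_congr_fun measurableSet_Ioi
      (fun t (ht : t ∈ Ioi 0) => hset t ht)]
    set b := r ^ (-q) with hb
    have hbpos : 0 < b := rpow_pos_of_pos hr _
    have hbr : b ^ (-q⁻¹) = r := by
      rw [hb, ← Real.rpow_mul hr.le, neg_mul_neg, mul_inv_cancel₀ hq.ne', Real.rpow_one]
    rw [← Ioc_union_Ioi_eq_Ioi hbpos.le,
      lintegral_union measurableSet_Ioi (Ioc_disjoint_Ioi le_rfl)]
    have h1 : ∫⁻ t in Ioc 0 b, ENNReal.ofReal (min (t ^ (-q⁻¹)) r ^ (k : ℝ)) * volume K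
        = ENNReal.ofReal (r ^ ((k : ℝ) - q)) * volume K := by
      rw [setLIntegral_congr_fun measurableSet_Ioc
        (g := fun _ => ENNReal.ofReal (r ^ (k : ℝ)) * volume K)
        (fun t ht => ?_)]
      · rw [setLIntegral_const, Real.volume_Ioc, sub_zero]
        rw [mul_comm (ENNReal.ofReal (r ^ (k : ℝ))) (volume K), mul_assoc,
          ← ENNReal.ofReal_mul (rpow_nonneg hr.le _), ← Real.rpow_add hr, ← sub_eq_add_neg,
          mul_comm]
      · have hmin : min (t ^ (-q⁻¹)) r = r := by
          apply min_eq_right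
          rw [← hbr]
          exact rpow_le_rpow_of_nonpos ht.1 ht.2 (neg_nonpos.2 (inv_pos.2 hq).le)
        rw [hmin]
    have he : -((k : ℝ) / q) < -1 := by
      rw [neg_lt_neg_iff]
      exact (one_lt_div hq).2 hqk
    have h2 : ∫⁻ t in Ioi b, ENNReal.ofReal (min (t ^ (-q⁻¹)) r ^ (k : ℝ)) * volume K
        = ENNReal.ofReal (r ^ ((k : ℝ) - q) * (q / ((k : ℝ) - q))) * volume K := by
      rw [setLIntegral_congr_fun measurableSet_Ioi
        (g := fun t => ENNReal.ofReal (t ^ (-((k : ℝ) / q))) * volume K)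
        (fun t (ht : t ∈ Ioi b) => ?_)]
      · rw [lintegral_mul_const _ ((hrpm _).ennreal_ofReal),
          ← ofReal_integral_eq_lintegral_ofReal (integrableOn_Ioi_rpow_of_lt he hbpos)
            ((ae_restrict_iff' measurableSet_Ioi).2 (ae_of_all _ fun t ht =>
              rpow_nonneg (le_of_lt (lt_trans hbpos ht)) _)),
          integral_Ioi_rpow_of_lt he hbpos]
        have hb1 : b ^ (-((k : ℝ) / q) + 1) = r ^ ((k : ℝ) - q) := by
          rw [hb, ← Real.rpow_mul hr.le]
          congr 1
          field_simp
          ring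
        have hreal : -(b ^ (-((k : ℝ) / q) + 1)) / (-((k : ℝ) / q) + 1)
            = r ^ ((k : ℝ) - q) * (q / ((k : ℝ) - q)) := by
          rw [hb1]
          have hne : -((k : ℝ) / q) + 1 ≠ 0 := by linarith
          rw [div_eq_iff hne]
          field_simp
          ring
        rw [neg_div, ← hreal, neg_div]
      · have hmin : min (t ^ (-q⁻¹)) r = t ^ (-q⁻¹) := by
          apply min_eq_left
          rw [← hbr]
          exact rpow_le_rpow_of_nonpos hbpos (le_of_lt ht) (neg_nonpos.2 (inv_pos.2 hq).le)
        rw [hmin, ← Real.rpow_mul (le_of_lt (lt_trans hbpos ht))]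
        congr 2
        field_simp
    rw [h1, h2, ← add_mul, ← ENNReal.ofReal_add (rpow_nonneg hr.le _) (by positivity)]
    congr 2
    field_simp
    ring
  -- integrability and value of the model integrals
  have hIOn : ∀ r q : ℝ, 0 < r → 0 < q → q < k →
      IntegrableOn (fun x => N x ^ (-q)) {x | N x ≤ r} := by
    intro r q hr hq hqk
    refine ⟨((hNq (-q)).aestronglyMeasurable), ?_⟩
    rw [hasFiniteIntegral_iff_ofReal (Eventually.of_forall fun x => rpow_nonneg (hNnn x) _),
      hIr r q hr hq hqk]
    exact ENNReal.mul_lt_top ENNReal.ofReal_lt_top hKfin.lt_top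
  have hIval : ∀ r q : ℝ, 0 < r → 0 < q → q < k →
      ∫ x in {x | N x ≤ r}, N x ^ (-q)
        = r ^ ((k : ℝ) - q) * (k / ((k : ℝ) - q)) * (volume K).toReal := by
    intro r q hr hq hqk
    have hkq : (0:ℝ) < (k:ℝ) - q := by linarith
    rw [integral_eq_lintegral_of_nonneg_ae
      (Eventually.of_forall fun x => rpow_nonneg (hNnn x) _) ((hNq (-q)).aestronglyMeasurable),
      hIr r q hr hq hqk, ENNReal.toReal_mul, ENNReal.toReal_ofReal (by positivity)]
  -- basic facts about f
  have hf_int : Integrable f := by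
    by_contra h
    rw [integral_undef h] at hf_prob
    exact one_ne_zero hf_prob.symm
  have hf0pos : 0 < f 0 := by
    by_contra h
    push_neg at h
    have hz : ∀ x, f x = 0 := fun x => le_antisymm (le_trans (hf_max x) h) (hf_nonneg x)
    simp [hz] at hf_prob
  -- final assembly
  set c := (volume K).toReal with hcdef
  have hk1 : (1:ℝ) ≤ k := by exact_mod_cast hk
  have hevq : ∀ᶠ q : ℝ in nhdsWithin (k : ℝ) (Iio (k : ℝ)), 0 < q ∧ q < k := by
    filter_upwards [self_mem_nhdsWithin,
      eventually_nhdsWithin_of_eventually_nhds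
        (eventually_gt_nhds (show (k:ℝ) - 1 < k by linarith))] with q h1 h2
    exact ⟨by linarith, h1⟩
  have hA : ∀ q : ℝ, 0 < q → q < k → Integrable (fun x => N x ^ (-q) * f x) := by
    intro q hq hqk
    have hS : IntegrableOn (fun x => N x ^ (-q) * f x) {x | N x ≤ 1} := by
      apply Integrable.mono ((hIOn 1 q one_pos hq hqk).const_mul (f 0))
        (((hNq (-q)).mul hf_meas).aestronglyMeasurable.restrict)
      refine Eventually.of_forall fun x => ?_
      have h1 : 0 ≤ N x ^ (-q) := rpow_nonneg (hNnn x) _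
      rw [Pi.mul_apply, norm_mul, norm_of_nonneg h1, norm_of_nonneg (hf_nonneg x), norm_mul,
        norm_of_nonneg hf0pos.le, norm_of_nonneg h1]
      calc N x ^ (-q) * f x ≤ N x ^ (-q) * f 0 :=
            mul_le_mul_of_nonneg_left (hf_max x) h1
        _ = f 0 * N x ^ (-q) := mul_comm _ _
    have hSc : IntegrableOn (fun x => N x ^ (-q) * f x) {x | N x ≤ 1}ᶜ := by
      apply Integrable.mono hf_int.integrableOn
        (((hNq (-q)).mul hf_meas).aestronglyMeasurable.restrict)
      rw [ae_restrict_iff' (hsetm 1).compl]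
      refine Eventually.of_forall fun x hx => ?_
      have hx1 : 1 < N x := by simpa [mem_compl_iff, mem_setOf_eq, not_le] using hx
      have h1 : 0 ≤ N x ^ (-q) := rpow_nonneg (hNnn x) _
      rw [Pi.mul_apply, norm_mul, norm_of_nonneg h1, norm_of_nonneg (hf_nonneg x)]
      have : N x ^ (-q) ≤ 1 := rpow_le_one_of_one_le_of_nonpos hx1.le (neg_nonpos.2 hq.le)
      nlinarith [hf_nonneg x]
    have := hS.union hSc
    rwa [union_compl_self, integrableOn_univ] at this
  rw [tendsto_order]
  constructor
  · intro l hl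
    have hml : l ≤ max l 0 := le_max_left _ _
    have h0m : (0:ℝ) ≤ max l 0 := le_max_right _ _
    have hmf : max l 0 < f 0 := max_lt hl hf0pos
    set c' := (max l 0 + f 0) / 2 with hc'def
    have hc'pos : 0 < c' := by simp only [hc'def]; linarith
    have hc'l : l < c' := by simp only [hc'def]; linarith
    have hc'f : c' < f 0 := by simp only [hc'def]; linarith
    obtain ⟨ε, hε, hball⟩ := Metric.eventually_nhds_iff_ball.1 (hf_lsc c' hc'f)
    set δ := min 1 (C₁ * ε / 2) with hδdef
    have hδpos : 0 < δ := lt_min one_pos (by positivity)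
    have hsub : ∀ x, N x ≤ δ → c' ≤ f x := by
      intro x hx
      have h1 : C₁ * ‖x‖ ≤ δ := le_trans ((hbd x).1) hx
      have h2 : δ ≤ C₁ * ε / 2 := min_le_right _ _
      have h3 : ‖x‖ < ε := by nlinarith
      exact le_of_lt (hball x (by simpa [Metric.mem_ball] using h3))
    have hbound : ∀ᶠ q in nhdsWithin (k : ℝ) (Iio (k : ℝ)),
        c' * δ ^ ((k : ℝ) - q) ≤ ((k - q) / (k * c)) * ∫ x, (N x) ^ (-q) * f x := by
      filter_upwards [hevq] with q hq
      obtain ⟨hq0, hqk⟩ := hq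
      have hkq : (0:ℝ) < (k:ℝ) - q := by linarith
      have step1 : ∫ x in {x | N x ≤ δ}, c' * N x ^ (-q)
          ≤ ∫ x in {x | N x ≤ δ}, N x ^ (-q) * f x := by
        apply setIntegral_mono_on ((hIOn δ q hδpos hq0 hqk).const_mul c')
          ((hA q hq0 hqk).integrableOn) (hsetm δ)
        intro x hx
        have := hsub x hx
        have h1 : 0 ≤ N x ^ (-q) := rpow_nonneg (hNnn x) _
        calc c' * N x ^ (-q) ≤ f x * N x ^ (-q) := by nlinarith
          _ = N x ^ (-q) * f x := mul_comm _ _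
      have step2 : ∫ x in {x | N x ≤ δ}, N x ^ (-q) * f x ≤ ∫ x, N x ^ (-q) * f x := by
        apply setIntegral_le_integral (hA q hq0 hqk)
        exact Eventually.of_forall fun x => mul_nonneg (rpow_nonneg (hNnn x) _) (hf_nonneg x)
      have hval : ∫ x in {x | N x ≤ δ}, c' * N x ^ (-q)
          = c' * (δ ^ ((k : ℝ) - q) * (k / ((k : ℝ) - q)) * c) := by
        rw [integral_const_mul, hIval δ q hδpos hq0 hqk]
      have hfactor : (0:ℝ) < (k - q) / (k * c) := by positivity
      have : c' * (δ ^ ((k : ℝ) - q) * (k / ((k : ℝ) - q)) * c) ≤ ∫ x, N x ^ (-q) * f x := by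
        rw [← hval]; exact le_trans step1 step2
      calc c' * δ ^ ((k : ℝ) - q)
          = ((k - q) / (k * c)) * (c' * (δ ^ ((k : ℝ) - q) * (k / ((k : ℝ) - q)) * c)) := by
            field_simp
        _ ≤ ((k - q) / (k * c)) * ∫ x, N x ^ (-q) * f x :=
            mul_le_mul_of_nonneg_left this hfactor.le
    have htend : Tendsto (fun q : ℝ => c' * δ ^ ((k : ℝ) - q))
        (nhdsWithin (k : ℝ) (Iio (k : ℝ))) (nhds c') := by
      have heq : (fun q : ℝ => c' * δ ^ ((k : ℝ) - q))
          = fun q : ℝ => c' * Real.exp (Real.log δ * ((k : ℝ) - q)) := by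
        funext q; rw [Real.rpow_def_of_pos hδpos]
      rw [heq]
      have hcont : Continuous fun q : ℝ => c' * Real.exp (Real.log δ * ((k : ℝ) - q)) :=
        continuous_const.mul (Real.continuous_exp.comp
          (continuous_const.mul (continuous_const.sub continuous_id)))
      have := (hcont.tendsto (k : ℝ)).mono_left
        (nhdsWithin_le_nhds (s := Iio (k : ℝ)))
      simpa using this
    filter_upwards [hbound, htend.eventually_const_lt hc'l] with q h1 h2
    exact lt_of_lt_of_le h2 h1
  · intro u hu
    have hbound : ∀ᶠ q in nhdsWithin (k : ℝ) (Iio (k : ℝ)),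
        ((k - q) / (k * c)) * ∫ x, (N x) ^ (-q) * f x ≤ f 0 + (k - q) / (k * c) := by
      filter_upwards [hevq] with q hq
      obtain ⟨hq0, hqk⟩ := hq
      have hkq : (0:ℝ) < (k:ℝ) - q := by linarith
      have hAq := hA q hq0 hqk
      have hsplit : ∫ x, N x ^ (-q) * f x
          = (∫ x in {x | N x ≤ 1}, N x ^ (-q) * f x)
            + ∫ x in {x | N x ≤ 1}ᶜ, N x ^ (-q) * f x :=
        (integral_add_compl (hsetm 1) hAq).symm
      have hb1 : ∫ x in {x | N x ≤ 1}, N x ^ (-q) * f x ≤ f 0 * (k / ((k : ℝ) - q)) * c := by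
        have : ∫ x in {x | N x ≤ 1}, N x ^ (-q) * f x
            ≤ ∫ x in {x | N x ≤ 1}, f 0 * N x ^ (-q) := by
          apply setIntegral_mono_on (hAq.integrableOn)
            ((hIOn 1 q one_pos hq0 hqk).const_mul (f 0)) (hsetm 1)
          intro x _
          have h1 : 0 ≤ N x ^ (-q) := rpow_nonneg (hNnn x) _
          calc N x ^ (-q) * f x ≤ N x ^ (-q) * f 0 := mul_le_mul_of_nonneg_left (hf_max x) h1
            _ = f 0 * N x ^ (-q) := mul_comm _ _
        rw [integral_const_mul, hIval 1 q one_pos hq0 hqk, Real.one_rpow, one_mul] at this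
        linarith [this]
      have hb2 : ∫ x in {x | N x ≤ 1}ᶜ, N x ^ (-q) * f x ≤ 1 := by
        have h1 : ∫ x in {x | N x ≤ 1}ᶜ, N x ^ (-q) * f x ≤ ∫ x in {x | N x ≤ 1}ᶜ, f x := by
          apply setIntegral_mono_on (hAq.integrableOn) (hf_int.integrableOn) (hsetm 1).compl
          intro x hx
          have hx1 : 1 < N x := by simpa [mem_compl_iff, mem_setOf_eq, not_le] using hx
          have h1 : 0 ≤ N x ^ (-q) := rpow_nonneg (hNnn x) _
          have h2 : N x ^ (-q) ≤ 1 :=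
            rpow_le_one_of_one_le_of_nonpos hx1.le (neg_nonpos.2 hq0.le)
          nlinarith [hf_nonneg x]
        have h2 : ∫ x in {x | N x ≤ 1}ᶜ, f x ≤ ∫ x, f x :=
          setIntegral_le_integral hf_int (Eventually.of_forall hf_nonneg)
        rw [hf_prob] at h2
        linarith
      have hfactor : (0:ℝ) < (k - q) / (k * c) := by positivity
      calc ((k - q) / (k * c)) * ∫ x, (N x) ^ (-q) * f x
          ≤ ((k - q) / (k * c)) * (f 0 * (k / ((k : ℝ) - q)) * c + 1) := by
            apply mul_le_mul_of_nonneg_left _ hfactor.le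
            rw [hsplit]; linarith
        _ = f 0 + (k - q) / (k * c) := by
            field_simp
    have htend : Tendsto (fun q : ℝ => f 0 + (k - q) / (k * c))
        (nhdsWithin (k : ℝ) (Iio (k : ℝ))) (nhds (f 0)) := by
      have hcont : Continuous fun q : ℝ => f 0 + (k - q) / (k * c) := by
        apply continuous_const.add
        exact (continuous_const.sub continuous_id).div_const _
      have := (hcont.tendsto (k : ℝ)).mono_left
        (nhdsWithin_le_nhds (s := Iio (k : ℝ)))
      simpa using this
    filter_upwards [hbound, htend.eventually_lt_const hu] with q h1 h2
    exact lt_of_le_of_lt h1 h2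
end

section
/- Let Y be a nonnegative, non-almost-surely-constant random variable, and define Λ(u) = log E e^{-uY} for u ≥ 0. Then Λ is convex, and for any nonnegative reals b₁, ..., bₙ with sum B and L = max bⱼ, one has Σⱼ Λ(bⱼ) ≥ n·Λ(B/n) + c·Σⱼ (bⱼ - B/n)², where c = (1/4)·sup over 0 < α < β < γ of e^{-L(α+γ)}(β-α)² P(Y < α) P(β < Y < γ). -/
open MeasureTheory Set

lemma aux_log_one_add {x : ℝ} (h0 : 0 ≤ x) (h1 : x ≤ 1) : x / 2 ≤ Real.log (1 + x) := by
  rw [Real.le_log_iff_exp_le (by linarith)]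
  have h2 := Real.add_one_le_exp (-(x/2))
  have h3 := Real.exp_pos (x/2)
  have h4 : Real.exp (-(x/2)) * Real.exp (x/2) = 1 := by rw [← Real.exp_add]; simp
  nlinarith

lemma aux_texp {t : ℝ} (h : 0 ≤ t) : t^2 * Real.exp (-t) ≤ 4 * Real.exp (-2 : ℝ) := by
  have h1 := Real.add_one_le_exp (t/2 - 1)
  have h2 : Real.exp (t/2 - 1) * Real.exp (-(t/2) + 1) = 1 := by rw [← Real.exp_add]; simp
  have h3 := Real.exp_pos (-(t/2) + 1)
  have h5 : Real.exp (-(t/2)+1) * Real.exp (-(t/2)+1) * Real.exp (-2 : ℝ) = Real.exp (-t) := by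
    rw [← Real.exp_add, ← Real.exp_add]; ring_nf
  have h6 := Real.exp_pos (-2 : ℝ)
  have h7 : t * Real.exp (-(t/2)+1) ≤ 2 := by nlinarith
  have h8 : 0 ≤ t * Real.exp (-(t/2)+1) := by positivity
  have h9 : t^2 * (Real.exp (-(t/2)+1) * Real.exp (-(t/2)+1)) ≤ 4 := by nlinarith
  calc t^2 * Real.exp (-t) = t^2 * (Real.exp (-(t/2)+1) * Real.exp (-(t/2)+1)) * Real.exp (-2:ℝ) := by
        rw [← h5]; ring
    _ ≤ 4 * Real.exp (-2:ℝ) := by nlinarith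

lemma aux_expdiff {s t K : ℝ} (hs : s ≤ K) (ht : t ≤ K) :
    Real.exp (-(2*K)) * (s - t)^2 ≤ (Real.exp (-s) - Real.exp (-t))^2 := by
  have key : ∀ a b : ℝ, a ≤ b → b ≤ K →
      Real.exp (-(2*K)) * (a-b)^2 ≤ (Real.exp (-a) - Real.exp (-b))^2 := by
    intro a b hab hbK
    have h1 : Real.exp (-a) - Real.exp (-b) = Real.exp (-b) * (Real.exp (b - a) - 1) := by
      rw [mul_sub, ← Real.exp_add]; ring_nf
    have h2 := Real.add_one_le_exp (b - a)
    have h3 : Real.exp (-K) ≤ Real.exp (-b) := Real.exp_le_exp.2 (by linarith)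
    have h4 : Real.exp (-K) * (b - a) ≤ Real.exp (-b) * (Real.exp (b-a) - 1) := by
      have := Real.exp_pos (-b)
      have := Real.exp_pos (-K)
      nlinarith
    have h5 : 0 ≤ Real.exp (-K) * (b - a) :=
      mul_nonneg (Real.exp_pos _).le (by linarith)
    have h6 : Real.exp (-(2*K)) = Real.exp (-K) * Real.exp (-K) := by
      rw [← Real.exp_add]; ring_nf
    nlinarith
  rcases le_total s t with h | h
  · have := key s t h ht; nlinarith [this]
  · have := key t s h hs; nlinarith [this]

lemma aux_sumsq {ι : Type*} (s : Finset ι) (g : ι → ℝ) (a : ℝ) :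
    ∑ j ∈ s, (g j - a)^2 = ∑ j ∈ s, (g j)^2 - 2*a*(∑ j ∈ s, g j) + s.card * a^2 := by
  have : ∀ j ∈ s, (g j - a)^2 = (g j)^2 - 2*a*(g j) + a^2 := fun j _ => by ring
  rw [Finset.sum_congr rfl this, Finset.sum_add_distrib, Finset.sum_sub_distrib,
    ← Finset.mul_sum, Finset.sum_const, nsmul_eq_mul]

lemma aux_mean_mem {ι : Type*} {L : ℝ} (s : Finset ι) (g : ι → ℝ)
    (hg : ∀ j ∈ s, g j ∈ Icc (0:ℝ) L)
    {N : ℝ} (hN : 0 < N) (hcard : (s.card : ℝ) = N) : (∑ j ∈ s, g j) / N ∈ Icc (0:ℝ) L := by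
  have h1 : (0:ℝ) ≤ ∑ j ∈ s, g j := Finset.sum_nonneg fun j hj => (hg j hj).1
  have h2 : ∑ j ∈ s, g j ≤ N * L := by
    calc ∑ j ∈ s, g j ≤ ∑ _j ∈ s, L := Finset.sum_le_sum fun j hj => (hg j hj).2
      _ = N * L := by rw [Finset.sum_const, nsmul_eq_mul, hcard]
  exact ⟨by positivity, by rw [div_le_iff₀ hN]; linarith⟩

lemma aux_jensen {ι : Type*} [DecidableEq ι] (f : ℝ → ℝ) (L c : ℝ)
    (MP : ∀ u v : ℝ, u ∈ Icc (0:ℝ) L → v ∈ Icc (0:ℝ) L →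
      2 * f ((u+v)/2) + (c/2)*(u-v)^2 ≤ f u + f v) :
    ∀ (k : ℕ) (s : Finset ι) (g : ι → ℝ), s.card = 2^k → (∀ j ∈ s, g j ∈ Icc (0:ℝ) L) →
      (2:ℝ)^k * f ((∑ j ∈ s, g j)/(2:ℝ)^k) + c * ∑ j ∈ s, (g j - (∑ j ∈ s, g j)/(2:ℝ)^k)^2
        ≤ ∑ j ∈ s, f (g j) := by
  intro k
  induction k with
  | zero =>
    intro s g hcard hg
    obtain ⟨j, hj⟩ := Finset.card_eq_one.1 hcard
    subst hj
    simp [Finset.sum_singleton]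
  | succ k ih =>
    intro s g hcard hg
    have hNle : (2:ℕ)^k ≤ s.card := by rw [hcard, pow_succ]; omega
    obtain ⟨t, hts, htcard⟩ := Finset.exists_subset_card_eq hNle
    set t' := s \ t with ht'
    have ht'card : t'.card = 2^k := by
      rw [ht', Finset.card_sdiff_of_subset hts, hcard, htcard, pow_succ]; omega
    have hsplit : ∀ F : ι → ℝ, ∑ j ∈ s, F j = ∑ j ∈ t, F j + ∑ j ∈ t', F j := by
      intro F; rw [ht', eq_comm, add_comm, Finset.sum_sdiff hts]
    have hg1 : ∀ j ∈ t, g j ∈ Icc (0:ℝ) L := fun j hj => hg j (hts hj)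
    have hg2 : ∀ j ∈ t', g j ∈ Icc (0:ℝ) L := fun j hj => hg j (Finset.sdiff_subset hj)
    have hNpos : (0:ℝ) < 2^k := by positivity
    have hNr : (((2:ℕ)^k : ℕ) : ℝ) = (2:ℝ)^k := by push_cast; ring
    have h1 := ih t g htcard hg1
    have h2 := ih t' g ht'card hg2
    set m₁ := (∑ j ∈ t, g j) / (2:ℝ)^k with hm₁
    set m₂ := (∑ j ∈ t', g j) / (2:ℝ)^k with hm₂
    have hm₁mem : m₁ ∈ Icc (0:ℝ) L := aux_mean_mem t g hg1 hNpos (by rw [htcard, hNr])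
    have hm₂mem : m₂ ∈ Icc (0:ℝ) L := aux_mean_mem t' g hg2 hNpos (by rw [ht'card, hNr])
    have hmp := MP m₁ m₂ hm₁mem hm₂mem
    have hS₁eq : ∑ j ∈ t, g j = 2^k * m₁ := by rw [hm₁]; field_simp
    have hS₂eq : ∑ j ∈ t', g j = 2^k * m₂ := by rw [hm₂]; field_simp
    have hScast : ∑ j ∈ s, g j = 2^k * m₁ + 2^k * m₂ := by
      rw [hsplit g, hS₁eq, hS₂eq]
    have hm : (∑ j ∈ s, g j) / (2:ℝ)^(k+1) = (m₁ + m₂)/2 := by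
      rw [hScast]; field_simp; ring
    have q1 := aux_sumsq t g m₁
    have q2 := aux_sumsq t' g m₂
    have qs := aux_sumsq s g ((m₁+m₂)/2)
    rw [htcard, hNr] at q1
    rw [ht'card, hNr] at q2
    rw [hcard] at qs
    have hNr2 : (((2:ℕ)^(k+1) : ℕ) : ℝ) = 2 * (2:ℝ)^k := by push_cast; ring
    rw [hNr2] at qs
    have hq1sum : ∑ j ∈ s, (g j)^2 = ∑ j ∈ t, (g j)^2 + ∑ j ∈ t', (g j)^2 :=
      hsplit (fun j => (g j)^2)
    have hfsum : ∑ j ∈ s, f (g j) = ∑ j ∈ t, f (g j) + ∑ j ∈ t', f (g j) :=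
      hsplit (fun j => f (g j))
    rw [hm, hfsum]
    have hquad : ∑ j ∈ s, (g j - (m₁+m₂)/2)^2
        = ∑ j ∈ t, (g j - m₁)^2 + ∑ j ∈ t', (g j - m₂)^2 + ((2:ℝ)^k/2) * (m₁ - m₂)^2 := by
      rw [qs, q1, q2, hq1sum, hScast, hS₁eq, hS₂eq]; ring
    rw [hquad]
    have hpow : (2:ℝ)^(k+1) = 2 * 2^k := by ring
    rw [hpow]
    nlinarith [mul_le_mul_of_nonneg_left hmp (le_of_lt hNpos)]

lemma aux_ptoReal {Ω : Type*} [MeasurableSpace Ω] (P : Measure Ω) [IsProbabilityMeasure P]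
    (s : Set Ω) : (P s).toReal ≤ 1 := by
  have h : P s ≤ 1 := prob_le_one
  calc (P s).toReal ≤ (1:ENNReal).toReal := ENNReal.toReal_mono ENNReal.one_ne_top h
    _ = 1 := by simp

section Main
variable {Ω : Type*} [MeasurableSpace Ω] (P : Measure Ω) [IsProbabilityMeasure P] (Y : Ω → ℝ)

def auxS (P : Measure Ω) (Y : Ω → ℝ) (L : ℝ) : Set ℝ :=
  {x : ℝ | ∃ α β γ : ℝ, 0 < α ∧ α < β ∧ β < γ ∧
      x = Real.exp (-L * (α + γ)) * (β - α) ^ 2 * (P {ω | Y ω < α}).toReal *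
        (P {ω | β < Y ω ∧ Y ω < γ}).toReal}

omit [IsProbabilityMeasure P] in
lemma auxS_nonneg (L : ℝ) : ∀ x ∈ auxS P Y L, 0 ≤ x := by
  rintro x ⟨α, β, γ, hα, hαβ, hβγ, rfl⟩
  positivity

lemma auxS_bdd {L : ℝ} (hL : 0 < L) : ∀ x ∈ auxS P Y L, x ≤ 4 * Real.exp (-2:ℝ) / L^2 := by
  rintro x ⟨α, β, γ, hα, hαβ, hβγ, rfl⟩
  have hγ : 0 < γ := by linarith
  have hp1 : (P {ω | Y ω < α}).toReal ≤ 1 := aux_ptoReal P _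
  have hp2 : (P {ω | β < Y ω ∧ Y ω < γ}).toReal ≤ 1 := aux_ptoReal P _
  have hp1' : 0 ≤ (P {ω | Y ω < α}).toReal := ENNReal.toReal_nonneg
  have hp2' : 0 ≤ (P {ω | β < Y ω ∧ Y ω < γ}).toReal := ENNReal.toReal_nonneg
  have hexple : Real.exp (-L * (α + γ)) ≤ Real.exp (-(L*γ)) :=
    Real.exp_le_exp.2 (by nlinarith)
  have hsq : (β - α)^2 ≤ γ^2 := by nlinarith
  have h1 : Real.exp (-L * (α + γ)) * (β - α) ^ 2 ≤ Real.exp (-(L*γ)) * γ^2 := by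
    have := Real.exp_pos (-L * (α + γ))
    nlinarith [sq_nonneg (β - α)]
  have h2 : Real.exp (-(L*γ)) * γ^2 ≤ 4 * Real.exp (-2:ℝ) / L^2 := by
    have ht := aux_texp (t := L*γ) (by positivity)
    rw [le_div_iff₀ (by positivity)]
    calc Real.exp (-(L*γ)) * γ^2 * L^2 = (L*γ)^2 * Real.exp (-(L*γ)) := by ring
      _ ≤ 4 * Real.exp (-2:ℝ) := ht
  calc Real.exp (-L * (α + γ)) * (β - α) ^ 2 * (P {ω | Y ω < α}).toReal *
        (P {ω | β < Y ω ∧ Y ω < γ}).toReal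
      ≤ Real.exp (-L * (α + γ)) * (β - α) ^ 2 * 1 * 1 := by
        apply mul_le_mul (mul_le_mul_of_nonneg_left hp1 (by positivity)) hp2 hp2' (by positivity)
    _ = Real.exp (-L * (α + γ)) * (β - α) ^ 2 := by ring
    _ ≤ Real.exp (-(L*γ)) * γ^2 := h1
    _ ≤ 4 * Real.exp (-2:ℝ) / L^2 := h2

lemma aux_int (hYm : Measurable Y) (hYnn : ∀ᵐ ω ∂P, 0 ≤ Y ω) {u : ℝ} (hu : 0 ≤ u) :
    Integrable (fun ω => Real.exp (-u * Y ω)) P := by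
  apply (integrable_const (1:ℝ)).mono'
  · exact (Real.measurable_exp.comp (measurable_const.mul hYm)).aestronglyMeasurable
  · filter_upwards [hYnn] with ω hω
    rw [Real.norm_eq_abs, abs_of_pos (Real.exp_pos _)]
    exact Real.exp_le_one_iff.2 (by nlinarith)

lemma aux_pos (hYm : Measurable Y) (hYnn : ∀ᵐ ω ∂P, 0 ≤ Y ω) {u : ℝ} (hu : 0 ≤ u) :
    0 < ∫ ω, Real.exp (-u * Y ω) ∂P := by
  rw [integral_pos_iff_support_of_nonneg (fun ω => (Real.exp_pos _).le) (aux_int P Y hYm hYnn hu)]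
  have : (Function.support fun ω => Real.exp (-u * Y ω)) = univ := by
    ext ω; simp [Function.support, (Real.exp_pos _).ne']
  rw [this]
  simp

lemma aux_le_one (hYm : Measurable Y) (hYnn : ∀ᵐ ω ∂P, 0 ≤ Y ω) {u : ℝ} (hu : 0 ≤ u) :
    ∫ ω, Real.exp (-u * Y ω) ∂P ≤ 1 := by
  have h := integral_mono_ae (aux_int P Y hYm hYnn hu) (integrable_const (1:ℝ)) ?_
  · simpa using h
  · filter_upwards [hYnn] with ω hω
    exact Real.exp_le_one_iff.2 (by nlinarith)

lemma aux_convex (hYm : Measurable Y) (hYnn : ∀ᵐ ω ∂P, 0 ≤ Y ω)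
    (Λ : ℝ → ℝ) (hΛ : ∀ u, Λ u = Real.log (∫ ω, Real.exp (-u * Y ω) ∂P)) :
    ConvexOn ℝ (Ici (0:ℝ)) Λ := by
  refine ⟨convex_Ici 0, fun x hx y hy a b ha hb hab => ?_⟩
  rcases eq_or_lt_of_le ha with ha0 | ha
  · simp [← ha0, show b = 1 by linarith]
  rcases eq_or_lt_of_le hb with hb0 | hb
  · simp [← hb0, show a = 1 by linarith]
  simp only [smul_eq_mul]
  set Ix := ∫ ω, Real.exp (-x * Y ω) ∂P with hIx
  set Iy := ∫ ω, Real.exp (-y * Y ω) ∂P with hIy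
  have hx0 : (0:ℝ) ≤ x := hx
  have hy0 : (0:ℝ) ≤ y := hy
  have hw0 : (0:ℝ) ≤ a*x + b*y := by positivity
  have hIxpos : 0 < Ix := aux_pos P Y hYm hYnn hx0
  have hIypos : 0 < Iy := aux_pos P Y hYm hYnn hy0
  have hIwpos : 0 < ∫ ω, Real.exp (-(a*x+b*y) * Y ω) ∂P := aux_pos P Y hYm hYnn hw0
  have hpt : ∀ ω : Ω, Real.exp (-(a*x+b*y) * Y ω)
      = (Ix ^ a * Iy ^ b) * ((Real.exp (-x * Y ω)/Ix) ^ a * (Real.exp (-y * Y ω)/Iy) ^ b) := by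
    intro ω
    rw [Real.div_rpow (Real.exp_pos _).le hIxpos.le, Real.div_rpow (Real.exp_pos _).le hIypos.le,
      ← Real.exp_mul, ← Real.exp_mul]
    field_simp
    rw [← Real.exp_add]
    ring_nf
  have hint1 : Integrable
      (fun ω => (Real.exp (-x * Y ω)/Ix) ^ a * (Real.exp (-y * Y ω)/Iy) ^ b) P := by
    have : (fun ω => (Real.exp (-x * Y ω)/Ix) ^ a * (Real.exp (-y * Y ω)/Iy) ^ b)
        = fun ω => (Ix ^ a * Iy ^ b)⁻¹ * Real.exp (-(a*x+b*y) * Y ω) := by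
      ext ω; rw [hpt ω]; field_simp
    rw [this]
    exact (aux_int P Y hYm hYnn hw0).const_mul _
  have hint2 : Integrable
      (fun ω => a * (Real.exp (-x * Y ω)/Ix) + b * (Real.exp (-y * Y ω)/Iy)) P := by
    exact (((aux_int P Y hYm hYnn hx0).div_const Ix).const_mul a).add
      (((aux_int P Y hYm hYnn hy0).div_const Iy).const_mul b)
  have hmono := integral_mono hint1 hint2 (fun ω => by
    exact Real.geom_mean_le_arith_mean2_weighted ha.le hb.le
      (by positivity) (by positivity) hab)
  have hsum : ∫ ω, (a * (Real.exp (-x * Y ω)/Ix) + b * (Real.exp (-y * Y ω)/Iy)) ∂P = 1 := by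
    rw [integral_add (((aux_int P Y hYm hYnn hx0).div_const Ix).const_mul a)
      (((aux_int P Y hYm hYnn hy0).div_const Iy).const_mul b),
      integral_const_mul, integral_const_mul, integral_div, integral_div]
    rw [← hIx, ← hIy]
    field_simp
    linarith
  have hkey : ∫ ω, Real.exp (-(a*x+b*y) * Y ω) ∂P ≤ Ix ^ a * Iy ^ b := by
    have heq : ∫ ω, Real.exp (-(a*x+b*y) * Y ω) ∂P
        = (Ix ^ a * Iy ^ b) *
          ∫ ω, ((Real.exp (-x * Y ω)/Ix) ^ a * (Real.exp (-y * Y ω)/Iy) ^ b) ∂P := by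
      rw [← integral_const_mul]
      exact integral_congr_ae (Filter.Eventually.of_forall fun ω => hpt ω)
    rw [heq]
    calc (Ix ^ a * Iy ^ b) * ∫ ω, ((Real.exp (-x * Y ω)/Ix) ^ a * (Real.exp (-y * Y ω)/Iy) ^ b) ∂P
        ≤ (Ix ^ a * Iy ^ b) * 1 := by
          apply mul_le_mul_of_nonneg_left _ (by positivity)
          rw [← hsum]; exact hmono
      _ = Ix ^ a * Iy ^ b := mul_one _
  rw [hΛ, hΛ, hΛ]
  calc Real.log (∫ ω, Real.exp (-(a*x+b*y) * Y ω) ∂P) ≤ Real.log (Ix ^ a * Iy ^ b) :=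
        Real.log_le_log hIwpos hkey
    _ = a * Real.log Ix + b * Real.log Iy := by
        rw [Real.log_mul (by positivity) (by positivity), Real.log_rpow hIxpos,
          Real.log_rpow hIypos]

set_option maxHeartbeats 1000000 in
lemma aux_gap (hYm : Measurable Y) (hYnn : ∀ᵐ ω ∂P, 0 ≤ Y ω) (L : ℝ)
    {u v : ℝ} (hu : u ∈ Icc (0:ℝ) L) (hv : v ∈ Icc (0:ℝ) L)
    {α β γ : ℝ} (hα : 0 < α) (hαβ : α < β) (hβγ : β < γ) :
    Real.exp (-L*(α+γ)) * (β-α)^2 * (P {ω | Y ω < α}).toReal *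
      (P {ω | β < Y ω ∧ Y ω < γ}).toReal * (u-v)^2 / 4
    ≤ (∫ ω, Real.exp (-u * Y ω) ∂P) * (∫ ω, Real.exp (-v * Y ω) ∂P)
      - (∫ ω, Real.exp (-((u+v)/2) * Y ω) ∂P)^2 := by
  set w := (u+v)/2 with hw
  have hw0 : (0:ℝ) ≤ w := by rw [hw]; linarith [hu.1, hv.1]
  set Q : Measure (Ω × Ω) := P.prod P with hQ
  have : IsProbabilityMeasure Q := by rw [hQ]; infer_instance
  set H : Ω × Ω → ℝ := fun z =>
    (Real.exp (-((u * Y z.1 + v * Y z.2)/2)) - Real.exp (-((u * Y z.2 + v * Y z.1)/2)))^2 with hH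
  have hintu := aux_int P Y hYm hYnn hu.1
  have hintv := aux_int P Y hYm hYnn hv.1
  have hintw := aux_int P Y hYm hYnn hw0
  set F₁ : Ω × Ω → ℝ := fun z => Real.exp (-u * Y z.1) * Real.exp (-v * Y z.2) with hF₁
  set F₂ : Ω × Ω → ℝ := fun z => Real.exp (-v * Y z.1) * Real.exp (-u * Y z.2) with hF₂
  set F₃ : Ω × Ω → ℝ := fun z => Real.exp (-w * Y z.1) * Real.exp (-w * Y z.2) with hF₃
  have hiF₁ : Integrable F₁ Q := hintu.mul_prod hintv
  have hiF₂ : Integrable F₂ Q := hintv.mul_prod hintu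
  have hiF₃ : Integrable F₃ Q := hintw.mul_prod hintw
  have hexp : ∀ p q : ℝ, (Real.exp p - Real.exp q)^2
      = Real.exp (p+p) + Real.exp (q+q) - 2*Real.exp (p+q) := by
    intro p q; rw [Real.exp_add, Real.exp_add, Real.exp_add]; ring
  have hident : ∀ z, H z = F₁ z + F₂ z - 2 * F₃ z := by
    intro z
    show (Real.exp (-((u * Y z.1 + v * Y z.2)/2)) - Real.exp (-((u * Y z.2 + v * Y z.1)/2)))^2
      = Real.exp (-u * Y z.1) * Real.exp (-v * Y z.2)
        + Real.exp (-v * Y z.1) * Real.exp (-u * Y z.2)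
        - 2 * (Real.exp (-w * Y z.1) * Real.exp (-w * Y z.2))
    rw [hexp, ← Real.exp_add, ← Real.exp_add, ← Real.exp_add]
    rw [show -((u * Y z.1 + v * Y z.2)/2) + -((u * Y z.1 + v * Y z.2)/2)
        = -u * Y z.1 + -v * Y z.2 by ring]
    rw [show -((u * Y z.2 + v * Y z.1)/2) + -((u * Y z.2 + v * Y z.1)/2)
        = -v * Y z.1 + -u * Y z.2 by ring]
    rw [show -((u * Y z.1 + v * Y z.2)/2) + -((u * Y z.2 + v * Y z.1)/2)
        = -w * Y z.1 + -w * Y z.2 by rw [hw]; ring]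
  have hiH : Integrable H Q := by
    have heq : H = fun z => F₁ z + F₂ z - 2 * F₃ z := funext hident
    rw [heq]
    have hadd : Integrable (fun z => F₁ z + F₂ z) Q := hiF₁.add hiF₂
    have hc2 : Integrable (fun z => 2 * F₃ z) Q := hiF₃.const_mul 2
    exact hadd.sub hc2
  have hadd : Integrable (fun z => F₁ z + F₂ z) Q := hiF₁.add hiF₂
  have hc2 : Integrable (fun z => 2 * F₃ z) Q := hiF₃.const_mul 2
  have hintH : ∫ z, H z ∂Q
      = 2 * ((∫ ω, Real.exp (-u * Y ω) ∂P) * (∫ ω, Real.exp (-v * Y ω) ∂P)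
        - (∫ ω, Real.exp (-w * Y ω) ∂P)^2) := by
    have h0 : ∫ z, H z ∂Q = ∫ z, (F₁ z + F₂ z - 2 * F₃ z) ∂Q :=
      integral_congr_ae (Filter.Eventually.of_forall hident)
    rw [h0, integral_sub hadd hc2, integral_add hiF₁ hiF₂, integral_const_mul]
    rw [hF₁, hF₂, hF₃, hQ]
    beta_reduce
    rw [integral_prod_mul (fun ω => Real.exp (-u * Y ω)) (fun ω => Real.exp (-v * Y ω)),
      integral_prod_mul (fun ω => Real.exp (-v * Y ω)) (fun ω => Real.exp (-u * Y ω)),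
      integral_prod_mul (fun ω => Real.exp (-w * Y ω)) (fun ω => Real.exp (-w * Y ω))]
    ring
  set A : Set Ω := {ω | Y ω < α} with hA
  set C : Set Ω := {ω | β < Y ω ∧ Y ω < γ} with hC
  have hAm : MeasurableSet A := hYm measurableSet_Iio
  have hCm : MeasurableSet C := (measurableSet_lt measurable_const hYm).inter
    (measurableSet_lt hYm measurable_const)
  set κ : ℝ := Real.exp (-L*(α+γ)) * (β-α)^2 * (u-v)^2 / 4 with hκ
  have hptbound : ∀ (y₁ y₂ : ℝ), y₁ < α → β < y₂ → y₂ < γ →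
      κ ≤ (Real.exp (-((u * y₁ + v * y₂)/2)) - Real.exp (-((u * y₂ + v * y₁)/2)))^2 := by
    intro y₁ y₂ h1 h2 h3
    have hγ0 : (0:ℝ) ≤ γ := by linarith
    have hints1 : 0 ≤ u * (α - y₁) := mul_nonneg hu.1 (by linarith)
    have hints2 : 0 ≤ (L - u) * α := mul_nonneg (by linarith [hu.2]) hα.le
    have hints3 : 0 ≤ v * (γ - y₂) := mul_nonneg hv.1 (by linarith)
    have hints4 : 0 ≤ (L - v) * γ := mul_nonneg (by linarith [hv.2]) hγ0
    have hints5 : 0 ≤ u * (γ - y₂) := mul_nonneg hu.1 (by linarith)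
    have hints6 : 0 ≤ (L - u) * γ := mul_nonneg (by linarith [hu.2]) hγ0
    have hints7 : 0 ≤ v * (α - y₁) := mul_nonneg hv.1 (by linarith)
    have hints8 : 0 ≤ (L - v) * α := mul_nonneg (by linarith [hv.2]) hα.le
    have hKs : (u * y₁ + v * y₂)/2 ≤ L*(α+γ)/2 := by nlinarith
    have hKt : (u * y₂ + v * y₁)/2 ≤ L*(α+γ)/2 := by nlinarith
    have hed := aux_expdiff hKs hKt
    have he : -(2*(L*(α+γ)/2)) = -L*(α+γ) := by ring
    rw [he] at hed
    have hst : ((u * y₁ + v * y₂)/2 - (u * y₂ + v * y₁)/2)^2 = (u-v)^2*(y₁-y₂)^2/4 := by ring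
    rw [hst] at hed
    have hy : (β - α)^2 ≤ (y₁ - y₂)^2 := by nlinarith
    have hexppos := Real.exp_pos (-L*(α+γ))
    have h7 : Real.exp (-L*(α+γ)) * ((u-v)^2 * (β-α)^2)
        ≤ Real.exp (-L*(α+γ)) * ((u-v)^2 * (y₁-y₂)^2) :=
      mul_le_mul_of_nonneg_left (mul_le_mul_of_nonneg_left hy (sq_nonneg _)) hexppos.le
    rw [hκ]
    linarith [h7, hed]
  have hpt1 : ∀ z ∈ A ×ˢ C, κ ≤ H z := by
    rintro z ⟨hz1, hz2⟩
    exact hptbound _ _ hz1 hz2.1 hz2.2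
  have hpt2 : ∀ z ∈ C ×ˢ A, κ ≤ H z := by
    rintro z ⟨hz1, hz2⟩
    have hb := hptbound _ _ hz2 hz1.1 hz1.2
    have heq : H z = (Real.exp (-((u * Y z.2 + v * Y z.1)/2))
        - Real.exp (-((u * Y z.1 + v * Y z.2)/2)))^2 := by
      show (Real.exp (-((u * Y z.1 + v * Y z.2)/2))
        - Real.exp (-((u * Y z.2 + v * Y z.1)/2)))^2 = _
      ring
    rw [heq]
    exact hb
  have hACm : MeasurableSet (A ×ˢ C) := hAm.prod hCm
  have hCAm : MeasurableSet (C ×ˢ A) := hCm.prod hAm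
  have hdisj : Disjoint (A ×ˢ C) (C ×ˢ A) := by
    rw [Set.disjoint_left]
    rintro z ⟨hz1, _⟩ ⟨hz1', _⟩
    rw [hA] at hz1
    rw [hC] at hz1'
    exact absurd hz1 (not_lt.2 (le_of_lt (lt_trans hαβ hz1'.1)))
  have hlow1 : κ * (Q (A ×ˢ C)).toReal ≤ ∫ z in A ×ˢ C, H z ∂Q :=
    setIntegral_ge_of_const_le_real hACm (measure_ne_top Q _) hpt1 hiH.integrableOn
  have hlow2 : κ * (Q (C ×ˢ A)).toReal ≤ ∫ z in C ×ˢ A, H z ∂Q :=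
    setIntegral_ge_of_const_le_real hCAm (measure_ne_top Q _) hpt2 hiH.integrableOn
  have hunion : ∫ z in (A ×ˢ C) ∪ (C ×ˢ A), H z ∂Q
      = ∫ z in A ×ˢ C, H z ∂Q + ∫ z in C ×ˢ A, H z ∂Q :=
    setIntegral_union hdisj hCAm hiH.integrableOn hiH.integrableOn
  have hle : ∫ z in (A ×ˢ C) ∪ (C ×ˢ A), H z ∂Q ≤ ∫ z, H z ∂Q :=
    setIntegral_le_integral hiH (Filter.Eventually.of_forall (fun z => sq_nonneg _))
  have hmeas1 : (Q (A ×ˢ C)).toReal = (P A).toReal * (P C).toReal := by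
    rw [hQ, Measure.prod_prod, ENNReal.toReal_mul]
  have hmeas2 : (Q (C ×ˢ A)).toReal = (P C).toReal * (P A).toReal := by
    rw [hQ, Measure.prod_prod, ENNReal.toReal_mul]
  rw [hmeas1] at hlow1
  rw [hmeas2] at hlow2
  have hgoal : Real.exp (-L*(α+γ)) * (β-α)^2 * (P A).toReal * (P C).toReal * (u-v)^2 / 4
      = κ * ((P A).toReal * (P C).toReal) := by rw [hκ]; ring
  rw [hgoal]
  linarith [hlow1, hlow2, hunion, hle, hintH]

lemma aux_mp (hYm : Measurable Y) (hYnn : ∀ᵐ ω ∂P, 0 ≤ Y ω) {L : ℝ} {c : ℝ}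
    (hc : c = 1/4 * sSup (auxS P Y L))
    (Λ : ℝ → ℝ) (hΛ : ∀ u, Λ u = Real.log (∫ ω, Real.exp (-u * Y ω) ∂P)) :
    ∀ u v : ℝ, u ∈ Icc (0:ℝ) L → v ∈ Icc (0:ℝ) L →
      2 * Λ ((u+v)/2) + (c/2)*(u-v)^2 ≤ Λ u + Λ v := by
  intro u v hu hv
  rcases eq_or_ne u v with rfl | huv
  · rw [show (u+u)/2 = u by ring, show (u-u)^2 = 0 by ring]
    linarith
  have hL : 0 < L := by
    rcases lt_or_ge 0 L with h | h
    · exact h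
    · exact absurd (le_antisymm (hu.2.trans h) hu.1 ▸
        (le_antisymm (hv.2.trans h) hv.1).symm ▸ rfl : u = v) huv
  have huv2 : 0 < (u - v)^2 := by
    have h := sub_ne_zero.2 huv
    rcases h.lt_or_gt with h | h <;> nlinarith
  rw [hΛ u, hΛ v, hΛ ((u+v)/2)]
  set Iu := ∫ ω, Real.exp (-u * Y ω) ∂P with hIu
  set Iv := ∫ ω, Real.exp (-v * Y ω) ∂P with hIv
  set Iw := ∫ ω, Real.exp (-((u+v)/2) * Y ω) ∂P with hIw
  have hIupos : 0 < Iu := aux_pos P Y hYm hYnn hu.1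
  have hIvpos : 0 < Iv := aux_pos P Y hYm hYnn hv.1
  have hIwpos : 0 < Iw := aux_pos P Y hYm hYnn (by linarith [hu.1, hv.1] : (0:ℝ) ≤ (u+v)/2)
  have hIule : Iu ≤ 1 := aux_le_one P Y hYm hYnn hu.1
  have hIvle : Iv ≤ 1 := aux_le_one P Y hYm hYnn hv.1
  have hIwle : Iw ≤ 1 := aux_le_one P Y hYm hYnn (by linarith [hu.1, hv.1] : (0:ℝ) ≤ (u+v)/2)
  have hD0 : 0 ≤ Iu * Iv - Iw^2 := by
    have h := aux_gap P Y hYm hYnn L hu hv (α := 1) (β := 2) (γ := 3)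
      one_pos (by norm_num) (by norm_num)
    refine le_trans ?_ h
    positivity
  have hsup_le : sSup (auxS P Y L) ≤ 4 * (Iu * Iv - Iw^2) / (u-v)^2 := by
    apply Real.sSup_le _ (by positivity)
    rintro x ⟨α, β, γ, hα, hαβ, hβγ, rfl⟩
    have h := aux_gap P Y hYm hYnn L hu hv hα hαβ hβγ
    rw [le_div_iff₀ huv2]
    linarith [h]
  have hcd : c * (u-v)^2 ≤ Iu * Iv - Iw^2 := by
    have h := (le_div_iff₀ huv2).1 hsup_le
    rw [hc]
    linarith
  have hc0 : 0 ≤ c := by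
    rw [hc]
    linarith [Real.sSup_nonneg (auxS_nonneg P Y L)]
  have hct : c * (u-v)^2 ≤ 1 := by
    have hsb := Real.sSup_le (auxS_bdd P Y hL) (by positivity)
    have he1 : Real.exp (-2:ℝ) ≤ 1 := Real.exp_le_one_iff.2 (by norm_num)
    have huvL : (u-v)^2 ≤ L^2 := by nlinarith [hu.1, hu.2, hv.1, hv.2]
    have hcc : c ≤ Real.exp (-2:ℝ) / L^2 := by
      have h4' := mul_le_mul_of_nonneg_left hsb (by norm_num : (0:ℝ) ≤ 1/4)
      rw [hc]
      calc 1/4 * sSup (auxS P Y L) ≤ 1/4 * (4 * Real.exp (-2:ℝ) / L^2) := h4'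
        _ = Real.exp (-2:ℝ)/L^2 := by ring
    have hL2 : (0:ℝ) < L^2 := by positivity
    have h1 : c * (u-v)^2 ≤ (Real.exp (-2:ℝ) / L^2) * L^2 := by
      calc c * (u-v)^2 ≤ c * L^2 := mul_le_mul_of_nonneg_left huvL hc0
        _ ≤ (Real.exp (-2:ℝ) / L^2) * L^2 := mul_le_mul_of_nonneg_right hcc hL2.le
    have h2 : (Real.exp (-2:ℝ) / L^2) * L^2 = Real.exp (-2:ℝ) := by field_simp
    linarith
  set t := c * (u-v)^2 with htdef
  have ht0 : 0 ≤ t := mul_nonneg hc0 (sq_nonneg _)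
  have h1 : 1 + t ≤ Iu * Iv / Iw^2 := by
    rw [le_div_iff₀ (by positivity)]
    have hIw2le : Iw^2 ≤ 1 := by nlinarith
    nlinarith
  have h2 : Real.log (1 + t) ≤ Real.log (Iu * Iv / Iw^2) :=
    Real.log_le_log (by linarith) h1
  have h3 : Real.log (Iu * Iv / Iw^2) = Real.log Iu + Real.log Iv - 2 * Real.log Iw := by
    rw [Real.log_div (by positivity) (by positivity),
      Real.log_mul (by positivity) (by positivity), Real.log_pow]
    push_cast
    ring
  have h4 := aux_log_one_add ht0 hct
  linarith [h2, h3, h4]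

end Main

theorem stmt_13
    {Ω : Type*} [MeasurableSpace Ω] (P : Measure Ω) [IsProbabilityMeasure P]
    (Y : Ω → ℝ) (hYm : Measurable Y)
    (hYnn : ∀ᵐ ω ∂P, 0 ≤ Y ω)
    (hYnc : ¬ ∃ c : ℝ, ∀ᵐ ω ∂P, Y ω = c)
    (Λ : ℝ → ℝ) (hΛ : ∀ u, Λ u = Real.log (∫ ω, Real.exp (-u * Y ω) ∂P))
    (n : ℕ) (hn : 1 ≤ n) (b : Fin n → ℝ) (hb : ∀ j, 0 ≤ b j)
    (B L : ℝ) (hB : B = ∑ j, b j) (hL : IsGreatest (Set.range b) L)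
    (c : ℝ)
    (hc : c = (1 / 4) * sSup {x : ℝ | ∃ α β γ : ℝ, 0 < α ∧ α < β ∧ β < γ ∧
      x = Real.exp (-L * (α + γ)) * (β - α) ^ 2 * (P {ω | Y ω < α}).toReal *
        (P {ω | β < Y ω ∧ Y ω < γ}).toReal}) :
    ConvexOn ℝ (Ici (0 : ℝ)) Λ ∧
    ∑ j, Λ (b j) ≥ n * Λ (B / n) + c * ∑ j, (b j - B / n) ^ 2 := by
  refine ⟨aux_convex P Y hYm hYnn Λ hΛ, ?_⟩
  have hc' : c = 1/4 * sSup (auxS P Y L) := hc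
  have hn0 : (0:ℝ) < n := by exact_mod_cast Nat.pos_of_ne_zero (by omega)
  have hub : ∀ j, b j ≤ L := fun j => hL.2 ⟨j, rfl⟩
  have hbmem : ∀ j, b j ∈ Icc (0:ℝ) L := fun j => ⟨hb j, hub j⟩
  set m := B / (n:ℝ) with hm
  have hmmem : m ∈ Icc (0:ℝ) L := by
    rw [hm, hB]
    exact aux_mean_mem Finset.univ b (fun j _ => hbmem j) hn0 (by simp)
  have hMP := aux_mp P Y hYm hYnn hc' Λ hΛ
  have hc0 : 0 ≤ c := by
    rw [hc']
    linarith [Real.sSup_nonneg (auxS_nonneg P Y L)]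
  have hnle : n ≤ 2^n := Nat.le_of_lt (Nat.lt_two_pow_self (n := n))
  set g : ℕ → ℝ := fun i => if h : i < n then b ⟨i, h⟩ else m with hg
  have hgmem : ∀ i ∈ Finset.range (2^n), g i ∈ Icc (0:ℝ) L := by
    intro i _
    by_cases h : i < n
    · rw [hg]; simp only [dif_pos h]; exact hbmem _
    · rw [hg]; simp only [dif_neg h]; exact hmmem
  have hJ := aux_jensen Λ L c hMP n (Finset.range (2^n)) g (Finset.card_range _) hgmem
  have hsplit : ∀ F : ℕ → ℝ, ∑ i ∈ Finset.range (2^n), F i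
      = ∑ i ∈ Finset.range n, F i + ∑ i ∈ Finset.Ico n (2^n), F i := by
    intro F
    rw [Finset.range_eq_Ico, Finset.range_eq_Ico]
    exact (Finset.sum_Ico_consecutive F (Nat.zero_le n) hnle).symm
  have hsum_b : ∀ G : ℝ → ℝ, ∑ i ∈ Finset.range n, G (g i) = ∑ j : Fin n, G (b j) := by
    intro G
    rw [← Fin.sum_univ_eq_sum_range (fun i => G (g i)) n]
    apply Finset.sum_congr rfl
    intro j _
    rw [hg]
    simp only [Fin.is_lt, dif_pos, Fin.eta]
  have hgm : ∀ i ∈ Finset.Ico n (2^n), g i = m := by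
    intro i hi
    rw [hg]
    simp only [dif_neg (not_lt.2 (Finset.mem_Ico.1 hi).1)]
  have hico_card : (Finset.Ico n (2^n)).card = 2^n - n := Nat.card_Ico n _
  have hsum_m : ∀ G : ℝ → ℝ, ∑ i ∈ Finset.Ico n (2^n), G (g i) = ((2^n - n : ℕ) : ℝ) * G m := by
    intro G
    rw [Finset.sum_congr rfl (fun i hi => by rw [hgm i hi]), Finset.sum_const, hico_card,
      nsmul_eq_mul]
  have hsum_b0 : ∑ i ∈ Finset.range n, g i = ∑ j : Fin n, b j := by
    rw [← Fin.sum_univ_eq_sum_range (fun i => g i) n]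
    apply Finset.sum_congr rfl
    intro j _
    rw [hg]
    simp only [Fin.is_lt, dif_pos, Fin.eta]
  have hsum_m0 : ∑ i ∈ Finset.Ico n (2^n), g i = ((2^n - n : ℕ) : ℝ) * m := by
    rw [Finset.sum_congr rfl (fun i hi => hgm i hi), Finset.sum_const, hico_card, nsmul_eq_mul]
  have hBm : B = n * m := by rw [hm]; field_simp
  have hcast : ((2^n - n : ℕ) : ℝ) = 2^n - n := by
    push_cast [hnle]
    ring
  have htot : ∑ i ∈ Finset.range (2^n), g i = 2^n * m := by
    rw [hsplit g, hsum_b0, ← hB, hBm, hsum_m0, hcast]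
    show (n:ℝ) * m + ((2:ℝ)^n - n) * m = 2^n * m
    ring
  have hmean : (∑ i ∈ Finset.range (2^n), g i) / (2:ℝ)^n = m := by
    rw [htot]
    field_simp
  rw [hmean] at hJ
  have hJ1 : ∑ i ∈ Finset.range (2^n), Λ (g i)
      = ∑ j : Fin n, Λ (b j) + ((2:ℝ)^n - n) * Λ m := by
    rw [hsplit (fun i => Λ (g i)), hsum_b Λ, hsum_m Λ, hcast]
  have hJ2 : ∑ i ∈ Finset.range (2^n), (g i - m)^2 = ∑ j : Fin n, (b j - m)^2 := by
    rw [hsplit (fun i => (g i - m)^2), hsum_b (fun x => (x - m)^2),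
      hsum_m (fun x => (x - m)^2)]
    simp
  rw [hJ1, hJ2] at hJ
  have hfinal : (n:ℝ) * Λ m + c * ∑ j : Fin n, (b j - m)^2 ≤ ∑ j : Fin n, Λ (b j) := by
    linarith [hJ]
  exact hfinal
end

section
/- Let q > 0 and Y₁, ..., Yₙ be i.i.d. copies of a nonnegative, non-constant random variable Y with E Y < ∞. Then there is a constant c > 0, depending only on q and the distribution of Y, such that for all b₁, ..., bₙ ≥ 0 with Σbⱼ = 1, E(Σⱼ bⱼYⱼ)^{-q} ≥ E(Σⱼ Yⱼ/n)^{-q} + c·Σⱼ (bⱼ - 1/n)². -/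
open MeasureTheory Real ProbabilityTheory Set

lemma abs_exp_sub_exp_le' {u v : ℝ} (hu : u ≤ 0) (hv : v ≤ 0) :
    |rexp u - rexp v| ≤ |u - v| := by
  wlog h : v ≤ u generalizing u v
  · rw [abs_sub_comm, abs_sub_comm u v]; exact this hv hu (le_of_not_ge h)
  rw [abs_of_nonneg (by simp [exp_le_exp, h] : (0:ℝ) ≤ rexp u - rexp v),
    abs_of_nonneg (by linarith)]
  have h1 : 1 - rexp (v - u) ≤ u - v := by
    have := add_one_le_exp (v - u); linarith
  have h2 : rexp u - rexp v = rexp u * (1 - rexp (v - u)) := by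
    rw [mul_sub, mul_one, ← exp_add]; ring_nf
  rw [h2]
  calc rexp u * (1 - rexp (v - u)) ≤ 1 * (u - v) := by
        apply mul_le_mul (exp_le_one_iff.2 hu) h1 ?_ zero_le_one
        have := exp_le_one_iff.2 (by linarith : v - u ≤ 0); linarith
    _ = u - v := one_mul _

lemma mul_exp_neg_le_one {u : ℝ} (hu : 0 ≤ u) : u * rexp (-u) ≤ 1 := by
  have h := add_one_le_exp u
  have h2 : u ≤ rexp u := by linarith
  have h3 : rexp (-u) = (rexp u)⁻¹ := by rw [exp_neg]
  rw [h3]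
  rw [mul_inv_le_iff₀ (exp_pos u), one_mul]; exact h2

section core
variable {Ω : Type*} [MeasurableSpace Ω] (P : Measure Ω) [IsProbabilityMeasure P]
  (X : Ω → ℝ)

noncomputable def lap (s : ℝ) : ℝ := ∫ ω, rexp (-(s * X ω)) ∂P
noncomputable def lapM (s : ℝ) : ℝ := ∫ ω, X ω * rexp (-(s * X ω)) ∂P

variable {P X}
variable (hX : Measurable X) (hnn : ∀ᵐ ω ∂P, 0 ≤ X ω) (hint : Integrable X P)

include hX hnn in
lemma lap_integrable {s : ℝ} (hs : 0 ≤ s) :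
    Integrable (fun ω => rexp (-(s * X ω))) P := by
  refine Integrable.mono' (integrable_const 1) ((hX.const_mul s).neg.exp.aestronglyMeasurable) ?_
  filter_upwards [hnn] with ω h
  rw [Real.norm_eq_abs, abs_of_nonneg (exp_pos _).le, exp_le_one_iff]
  have : 0 ≤ s * X ω := mul_nonneg hs h
  linarith

include hX hnn in
lemma lapM_integrable {s : ℝ} (hs : 0 ≤ s) (hint : Integrable X P) :
    Integrable (fun ω => X ω * rexp (-(s * X ω))) P := by
  refine Integrable.mono' hint.abs ((hX.mul (hX.const_mul s).neg.exp).aestronglyMeasurable) ?_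
  filter_upwards [hnn] with ω h
  rw [Real.norm_eq_abs, abs_mul, abs_of_nonneg (exp_pos _).le]
  have h1 : rexp (-(s * X ω)) ≤ 1 := by
    rw [exp_le_one_iff]; have : 0 ≤ s * X ω := mul_nonneg hs h; linarith
  nlinarith [abs_nonneg (X ω)]

include hX hnn in
lemma lap_pos {s : ℝ} (hs : 0 ≤ s) : 0 < lap P X s := by
  have : lap P X s = mgf X P (-s) := by
    simp only [lap, mgf, neg_mul]
  rw [this]
  exact mgf_pos (by simpa [neg_mul] using lap_integrable hX hnn hs)

include hX hnn in
lemma lap_le_one {s : ℝ} (hs : 0 ≤ s) : lap P X s ≤ 1 := by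
  have h := integral_mono_ae (lap_integrable hX hnn hs) (integrable_const 1) ?_
  · simpa [lap] using h
  · filter_upwards [hnn] with ω h
    rw [exp_le_one_iff]
    have : 0 ≤ s * X ω := mul_nonneg hs h; linarith

include hX hnn in
lemma lapM_nonneg {s : ℝ} (hs : 0 ≤ s) (hint : Integrable X P) : 0 ≤ lapM P X s := by
  refine integral_nonneg_of_ae ?_
  filter_upwards [hnn] with ω h
  exact mul_nonneg h (exp_pos _).le

include hX hnn hint in
lemma lap_continuousOn : ContinuousOn (lap P X) (Ici 0) := by
  have EXnn : 0 ≤ ∫ ω, |X ω| ∂P := integral_nonneg fun ω => abs_nonneg _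
  refine (LipschitzOnWith.of_dist_le_mul (K := (∫ ω, |X ω| ∂P).toNNReal) ?_).continuousOn
  intro x hx y hy
  rw [Real.dist_eq, Real.dist_eq, Real.coe_toNNReal _ EXnn]
  have h1 : lap P X x - lap P X y = ∫ ω, (rexp (-(x * X ω)) - rexp (-(y * X ω))) ∂P := by
    rw [integral_sub (lap_integrable hX hnn hx) (lap_integrable hX hnn hy)]; rfl
  rw [h1]
  calc |∫ ω, (rexp (-(x * X ω)) - rexp (-(y * X ω))) ∂P|
      ≤ ∫ ω, |rexp (-(x * X ω)) - rexp (-(y * X ω))| ∂P := by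
        simpa [Real.norm_eq_abs] using
          norm_integral_le_integral_norm (fun ω => rexp (-(x * X ω)) - rexp (-(y * X ω)))
    _ ≤ ∫ ω, |X ω| * |x - y| ∂P := by
        refine integral_mono_ae ((lap_integrable hX hnn hx).sub (lap_integrable hX hnn hy)).abs
          (hint.abs.mul_const _) ?_
        filter_upwards [hnn] with ω h
        have := abs_exp_sub_exp_le' (u := -(x * X ω)) (v := -(y * X ω))
          (by simp [mul_nonneg hx h]) (by simp [mul_nonneg hy h])
        calc |rexp (-(x * X ω)) - rexp (-(y * X ω))| ≤ |(-(x * X ω)) - (-(y * X ω))| := this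
          _ = |X ω| * |y - x| := by
                rw [show (-(x * X ω)) - (-(y * X ω)) = X ω * (y - x) by ring, abs_mul]
          _ = |X ω| * |x - y| := by rw [abs_sub_comm]
    _ = (∫ ω, |X ω| ∂P) * |x - y| := by rw [integral_mul_const]

include hX hnn hint in
lemma lap_hasDerivAt {s : ℝ} (hs : 0 < s) :
    HasDerivAt (lap P X) (-(lapM P X s)) s := by
  have key := hasDerivAt_integral_of_dominated_loc_of_deriv_le (μ := P)
    (F := fun t ω => rexp (-(t * X ω))) (F' := fun t ω => -(X ω * rexp (-(t * X ω))))
    (x₀ := s) (bound := fun _ => 2 / s) (Metric.ball_mem_nhds s (half_pos hs))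
    (Filter.Eventually.of_forall fun t => ((hX.const_mul t).neg.exp).aestronglyMeasurable)
    (lap_integrable hX hnn hs.le)
    ((hX.mul (hX.const_mul s).neg.exp).neg.aestronglyMeasurable) ?_
    (integrable_const _) ?_
  · have h2 : (∫ ω, -(X ω * rexp (-(s * X ω))) ∂P) = -(lapM P X s) := by
      rw [integral_neg]; rfl
    have k2 := key.2
    simp only [h2] at k2
    exact k2
  · filter_upwards [hnn] with ω h
    intro t ht
    rw [Metric.mem_ball, Real.dist_eq] at ht
    have hts : s / 2 < t := by cases abs_sub_lt_iff.1 ht; linarith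
    have h0 : 0 ≤ t * X ω := mul_nonneg (by linarith) h
    rw [norm_neg, Real.norm_eq_abs, abs_mul, abs_of_nonneg h, abs_of_nonneg (exp_pos _).le]
    have hmono : rexp (-(t * X ω)) ≤ rexp (-((s/2) * X ω)) := by
      apply exp_le_exp.2; nlinarith
    calc X ω * rexp (-(t * X ω)) ≤ X ω * rexp (-((s/2) * X ω)) :=
          mul_le_mul_of_nonneg_left hmono h
      _ ≤ 2 / s := by
          have := mul_exp_neg_le_one (mul_nonneg (by positivity : (0:ℝ) ≤ s/2) h)
          have hs' : 0 < s / 2 := by positivity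
          rw [le_div_iff₀ hs]
          nlinarith [exp_pos (-((s/2) * X ω))]
  · filter_upwards [] with ω
    intro t ht
    have : HasDerivAt (fun u : ℝ => -(u * X ω)) (-(X ω)) t := by
      exact ((hasDerivAt_mul_const (X ω)).neg (x := t))
    simpa [mul_comm] using this.exp
end core


section split
variable {Ω : Type*} [MeasurableSpace Ω] {P : Measure Ω} [IsProbabilityMeasure P]
  {X : Ω → ℝ}

lemma exists_split (hX : Measurable X) (hnn : ∀ᵐ ω ∂P, 0 ≤ X ω)
    (hnc : ¬ ∃ c : ℝ, ∀ᵐ ω ∂P, X ω = c) :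
    ∃ r : ℝ, 0 ≤ r ∧ 0 < P {ω | X ω ≤ r} ∧ 0 < P {ω | r < X ω} := by
  by_contra hcon
  push_neg at hcon
  have hneg : ∀ r : ℝ, r < 0 → P {ω | X ω ≤ r} = 0 := by
    intro r hr
    refine measure_mono_null ?_ (ae_iff.1 hnn)
    intro ω (h : X ω ≤ r); simp only [mem_setOf_eq]; push_neg; linarith
  have hdich : ∀ r : ℝ, P {ω | X ω ≤ r} = 0 ∨ P {ω | X ω ≤ r} = 1 := by
    intro r
    rcases lt_or_ge r 0 with hr | hr
    · exact Or.inl (hneg r hr)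
    rcases eq_or_lt_of_le (zero_le : 0 ≤ P {ω | X ω ≤ r}) with h0 | h0
    · exact Or.inl h0.symm
    right
    have hc0 : P {ω | r < X ω} = 0 := le_antisymm (hcon r hr h0) zero_le
    have hcompl : {ω | r < X ω} = {ω | X ω ≤ r}ᶜ := by ext ω; simp [not_le]
    have hmc := measure_compl (μ := P) (s := {ω | X ω ≤ r}) (hX measurableSet_Iic)
      (measure_ne_top P _)
    rw [hcompl, hmc, measure_univ] at hc0
    exact le_antisymm prob_le_one (tsub_eq_zero_iff_le.1 hc0)
  have hTne : ∃ n : ℕ, P {ω | X ω ≤ (n:ℝ)} = 1 := by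
    by_contra hT
    push_neg at hT
    have h0 : ∀ n : ℕ, P {ω | X ω ≤ (n:ℝ)} = 0 := fun n => (hdich n).resolve_right (hT n)
    have hnull : P (⋃ n : ℕ, {ω | X ω ≤ (n:ℝ)}) = 0 := measure_iUnion_null fun n => h0 n
    have huniv : (⋃ n : ℕ, {ω | X ω ≤ (n:ℝ)}) = univ := by
      ext ω; simp only [mem_iUnion, mem_setOf_eq, mem_univ, iff_true]
      exact exists_nat_ge (X ω)
    rw [huniv, measure_univ] at hnull
    exact one_ne_zero hnull
  set T : Set ℝ := {r | P {ω | X ω ≤ r} = 1} with hT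
  have hTmono : ∀ r ∈ T, ∀ r', r ≤ r' → r' ∈ T := by
    intro r hr r' hrr
    have hle : P {ω | X ω ≤ r} ≤ P {ω | X ω ≤ r'} :=
      measure_mono fun ω (h : X ω ≤ r) => le_trans h hrr
    rw [hr] at hle
    exact le_antisymm prob_le_one hle
  have hTne' : T.Nonempty := ⟨(hTne.choose : ℝ), hTne.choose_spec⟩
  have hTbdd : BddBelow T := by
    refine ⟨-1, fun r hr => ?_⟩
    by_contra hlt
    push_neg at hlt
    have h0 := hneg r (by linarith)
    have h1 : P {ω | X ω ≤ r} = 1 := hr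
    rw [h0] at h1
    exact one_ne_zero h1.symm
  set c := sInf T with hc
  have hlt0 : P {ω | X ω < c} = 0 := by
    have hsub : {ω | X ω < c} = ⋃ k : ℕ, {ω | X ω ≤ c - 1/((k:ℝ)+1)} := by
      ext ω; simp only [mem_iUnion, mem_setOf_eq]
      constructor
      · intro h
        obtain ⟨k, hk⟩ := exists_nat_one_div_lt (show 0 < c - X ω by linarith)
        exact ⟨k, by linarith⟩
      · rintro ⟨k, hk⟩
        have hpos : (0:ℝ) < 1/((k:ℝ)+1) := by positivity
        linarith
    rw [hsub]
    refine measure_iUnion_null fun k => ?_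
    refine (hdich _).resolve_right fun h1 => ?_
    have hmem : c - 1/((k:ℝ)+1) ∈ T := h1
    have hge := csInf_le hTbdd hmem
    have hpos : (0:ℝ) < 1/((k:ℝ)+1) := by positivity
    rw [← hc] at hge
    linarith
  have hle1 : P {ω | X ω ≤ c} = 1 := by
    have hsub : {ω | X ω ≤ c} = ⋂ k : ℕ, {ω | X ω ≤ c + 1/((k:ℝ)+1)} := by
      ext ω; simp only [mem_iInter, mem_setOf_eq]
      constructor
      · intro h k
        have hpos : (0:ℝ) < 1/((k:ℝ)+1) := by positivity
        linarith
      · intro h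
        by_contra hlt
        push_neg at hlt
        obtain ⟨k, hk⟩ := exists_nat_one_div_lt (show 0 < X ω - c by linarith)
        have hh := h k
        linarith
    rw [hsub]
    have hone : ∀ k : ℕ, P {ω | X ω ≤ c + 1/((k:ℝ)+1)} = 1 := by
      intro k
      have hpos : (0:ℝ) < 1/((k:ℝ)+1) := by positivity
      obtain ⟨t, ht, htlt⟩ := (csInf_lt_iff hTbdd hTne').1
        (show sInf T < c + 1/((k:ℝ)+1) by rw [← hc]; linarith)
      exact hTmono t ht _ (le_of_lt htlt)
    have hanti : Antitone (fun k : ℕ => {ω | X ω ≤ c + 1/((k:ℝ)+1)}) := by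
      intro i j hij ω hω
      simp only [mem_setOf_eq] at *
      have h1 : 1/((j:ℝ)+1) ≤ 1/((i:ℝ)+1) := by
        apply one_div_le_one_div_of_le (by positivity)
        have := (Nat.cast_le (α := ℝ)).2 hij
        linarith
      linarith
    have hiInf := hanti.measure_iInter (μ := P)
      (fun k => (hX measurableSet_Iic).nullMeasurableSet)
      ⟨0, measure_ne_top P _⟩
    rw [hiInf]
    simp only [one_div] at hone ⊢
    simp [hone]
  apply hnc
  refine ⟨c, ?_⟩
  have hne0 : P {ω | ¬ X ω = c} = 0 := by
    have hsub : {ω | ¬ X ω = c} ⊆ {ω | X ω < c} ∪ {ω | X ω ≤ c}ᶜ := by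
      intro ω h
      rcases lt_or_gt_of_ne (h : X ω ≠ c) with h' | h'
      · exact Or.inl h'
      · exact Or.inr (by simp only [mem_compl_iff, mem_setOf_eq, not_le]; exact h')
    refine measure_mono_null hsub ?_
    refine le_antisymm ?_ zero_le
    calc P ({ω | X ω < c} ∪ {ω | X ω ≤ c}ᶜ) ≤ P {ω | X ω < c} + P {ω | X ω ≤ c}ᶜ :=
          measure_union_le _ _
      _ = 0 := by
          rw [hlt0, measure_compl (μ := P) (s := {ω | X ω ≤ c}) (hX measurableSet_Iic)
            (measure_ne_top P _), measure_univ, hle1]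
          simp
  exact ae_iff.2 hne0

end split

lemma pt_lb {x y u v r b M : ℝ} (hx : 0 ≤ x) (hxy : x ≤ y) (hu : 0 ≤ u) (hur : u ≤ r)
    (hrb : r < b) (hbv : b ≤ v) (hvM : v ≤ M) :
    (b - r)^2 * (y - x) * rexp (-(2*M*y)) ≤
      (u - v) * (rexp (-(x*u) + -(y*v)) - rexp (-(y*u) + -(x*v))) := by
  have hy : 0 ≤ y := le_trans hx hxy
  have huv : u < v := by linarith
  have hd : 0 ≤ (-(y*u) + -(x*v)) - (-(x*u) + -(y*v)) := by nlinarith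
  have h1 : rexp (-(y*u) + -(x*v)) - rexp (-(x*u) + -(y*v)) ≥
      rexp (-(x*u) + -(y*v)) * ((y - x) * (v - u)) := by
    have he := add_one_le_exp ((-(y*u) + -(x*v)) - (-(x*u) + -(y*v)))
    have hsplit : rexp (-(y*u) + -(x*v)) =
        rexp (-(x*u) + -(y*v)) * rexp ((-(y*u) + -(x*v)) - (-(x*u) + -(y*v))) := by
      rw [← exp_add]; ring_nf
    rw [hsplit]
    have hexp0 := exp_pos (-(x*u) + -(y*v))
    have heq : (-(y*u) + -(x*v)) - (-(x*u) + -(y*v)) = (y - x) * (v - u) := by ring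
    nlinarith [exp_pos ((-(y*u) + -(x*v)) - (-(x*u) + -(y*v)))]
  have h2 : rexp (-(2*M*y)) ≤ rexp (-(x*u) + -(y*v)) := by
    apply exp_le_exp.2
    have hxu : x*u ≤ M*y := by nlinarith
    have hyv : y*v ≤ M*y := by nlinarith
    nlinarith
  have h3 : (u - v) * (rexp (-(x*u) + -(y*v)) - rexp (-(y*u) + -(x*v))) =
      (v - u) * (rexp (-(y*u) + -(x*v)) - rexp (-(x*u) + -(y*v))) := by ring
  rw [h3]
  have h4 : (v - u) * (rexp (-(y*u) + -(x*v)) - rexp (-(x*u) + -(y*v))) ≥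
      (v - u) * (rexp (-(x*u) + -(y*v)) * ((y - x) * (v - u))) := by
    apply mul_le_mul_of_nonneg_left h1 (by linarith)
  refine le_trans ?_ h4
  have hbr : 0 < b - r := by linarith
  have hbu : b - r ≤ v - u := by linarith
  have hexp := exp_pos (-(x*u) + -(y*v))
  have hyx : 0 ≤ y - x := by linarith
  have hsq : (b - r)^2 ≤ (v - u)^2 := by nlinarith
  calc (b - r)^2 * (y - x) * rexp (-(2*M*y))
      ≤ (v - u)^2 * (y - x) * rexp (-(x*u) + -(y*v)) := by
        apply mul_le_mul (mul_le_mul_of_nonneg_right hsq hyx) h2 (exp_pos _).le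
          (mul_nonneg (sq_nonneg _) hyx)
    _ = (v - u) * (rexp (-(x*u) + -(y*v)) * ((y - x) * (v - u))) := by ring

lemma pt_nonneg {x y u v : ℝ} (hxy : x ≤ y) :
    0 ≤ (u - v) * (rexp (-(x*u) + -(y*v)) - rexp (-(y*u) + -(x*v))) := by
  rcases le_total v u with h | h
  · apply mul_nonneg (by linarith)
    rw [sub_nonneg, exp_le_exp]
    nlinarith
  · have heq : (u - v) * (rexp (-(x*u) + -(y*v)) - rexp (-(y*u) + -(x*v))) =
        (v - u) * (rexp (-(y*u) + -(x*v)) - rexp (-(x*u) + -(y*v))) := by ring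
    rw [heq]
    apply mul_nonneg (by linarith)
    rw [sub_nonneg, exp_le_exp]
    nlinarith

section kappa
variable {Ω : Type*} [MeasurableSpace Ω] {P : Measure Ω} [IsProbabilityMeasure P] {X : Ω → ℝ}

lemma exists_kappa (hX : Measurable X) (hnn : ∀ᵐ ω ∂P, 0 ≤ X ω) (hint : Integrable X P)
    (hnc : ¬ ∃ c : ℝ, ∀ᵐ ω ∂P, X ω = c) :
    ∃ κ M : ℝ, 0 < κ ∧ 0 < M ∧ ∀ x y : ℝ, 0 ≤ x → x ≤ y →
      κ * rexp (-(2 * M * y)) * (y - x) ≤ lapM P X x * lap P X y - lapM P X y * lap P X x := by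
  obtain ⟨r, hr0, hrle, hrgt⟩ := exists_split hX hnn hnc
  -- find b > r with positive mass of {b ≤ X}
  have hb : ∃ k : ℕ, P {ω | r + 1/((k:ℝ)+1) ≤ X ω} ≠ 0 := by
    by_contra hall
    push_neg at hall
    have : P {ω | r < X ω} = 0 := by
      have hsub : {ω | r < X ω} = ⋃ k : ℕ, {ω | r + 1/((k:ℝ)+1) ≤ X ω} := by
        ext ω; simp only [mem_iUnion, mem_setOf_eq]
        constructor
        · intro h
          obtain ⟨k, hk⟩ := exists_nat_one_div_lt (show 0 < X ω - r by linarith)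
          exact ⟨k, by linarith⟩
        · rintro ⟨k, hk⟩
          have : (0:ℝ) < 1/((k:ℝ)+1) := by positivity
          linarith
      rw [hsub]
      exact measure_iUnion_null hall
    rw [this] at hrgt; exact lt_irrefl _ hrgt
  obtain ⟨k, hk⟩ := hb
  set b := r + 1/((k:ℝ)+1) with hbdef
  have hrb : r < b := by
    have : (0:ℝ) < 1/((k:ℝ)+1) := by positivity
    simp only [hbdef]; linarith
  -- find M with positive mass of Icc b M
  have hM : ∃ m : ℕ, P (X ⁻¹' Icc b m) ≠ 0 := by
    by_contra hall
    push_neg at hall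
    have : P {ω | b ≤ X ω} = 0 := by
      have hsub : {ω | b ≤ X ω} = ⋃ m : ℕ, X ⁻¹' Icc b (m:ℝ) := by
        ext ω; simp only [mem_iUnion, mem_setOf_eq, mem_preimage, mem_Icc]
        constructor
        · intro h
          obtain ⟨m, hm⟩ := exists_nat_ge (X ω)
          exact ⟨m, h, hm⟩
        · rintro ⟨m, hm1, _⟩; exact hm1
      rw [hsub]
      exact measure_iUnion_null hall
    exact hk this
  obtain ⟨m, hm⟩ := hM
  set A : Set Ω := X ⁻¹' Icc 0 r with hAdef
  set B : Set Ω := X ⁻¹' Icc b (m:ℝ) with hBdef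
  have hAm : MeasurableSet A := hX measurableSet_Icc
  have hBm : MeasurableSet B := hX measurableSet_Icc
  have hAp : 0 < P A := by
    rcases eq_or_lt_of_le (zero_le : 0 ≤ P A) with h0 | h0
    · exfalso
      have hsub : {ω | X ω ≤ r} ⊆ A ∪ {ω | ¬ (0 ≤ X ω)} := by
        intro ω (hω : X ω ≤ r)
        by_cases h : 0 ≤ X ω
        · exact Or.inl ⟨h, hω⟩
        · exact Or.inr h
      have : P {ω | X ω ≤ r} = 0 := by
        refine measure_mono_null hsub ?_
        refine le_antisymm ?_ zero_le
        calc P (A ∪ {ω | ¬ (0 ≤ X ω)}) ≤ P A + P {ω | ¬ (0 ≤ X ω)} := measure_union_le _ _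
          _ = 0 := by rw [← h0, ae_iff.1 hnn]; simp
      rw [this] at hrle; exact lt_irrefl _ hrle
    · exact h0
  have hBp : 0 < P B := (zero_le : 0 ≤ P B).lt_of_ne (Ne.symm hm)
  have hbm : b ≤ (m:ℝ) := by
    by_contra hlt
    push_neg at hlt
    have : B = ∅ := by
      ext ω; simp only [hBdef, mem_preimage, mem_Icc, mem_empty_iff_false, iff_false, not_and]
      intro h1; linarith
    rw [this] at hBp; simp at hBp
  have hM0 : 0 < (m:ℝ) := by linarith
  refine ⟨(b - r)^2/2 * (P A).toReal * (P B).toReal, m, ?_, hM0, ?_⟩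
  · have h1 : 0 < (P A).toReal := ENNReal.toReal_pos hAp.ne' (measure_ne_top _ _)
    have h2 : 0 < (P B).toReal := ENNReal.toReal_pos hBp.ne' (measure_ne_top _ _)
    have h3 : 0 < (b-r)^2/2 := by
      have : 0 < b - r := by linarith
      positivity
    exact mul_pos (mul_pos h3 h1) h2
  intro x y hx hxy
  have hy : 0 ≤ y := le_trans hx hxy
  -- product-space functions
  set g : Ω × Ω → ℝ := fun p => X p.1 * rexp (-(x * X p.1)) * rexp (-(y * X p.2))
    - X p.1 * rexp (-(y * X p.1)) * rexp (-(x * X p.2)) with hgdef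
  set gsw : Ω × Ω → ℝ := fun p => rexp (-(y * X p.1)) * (X p.2 * rexp (-(x * X p.2)))
    - rexp (-(x * X p.1)) * (X p.2 * rexp (-(y * X p.2))) with hgswdef
  set h : Ω × Ω → ℝ := fun p => (1/2) * ((X p.1 - X p.2) *
    (rexp (-(x * X p.1) + -(y * X p.2)) - rexp (-(y * X p.1) + -(x * X p.2)))) with hhdef
  have hfe : ∀ p, h p = (1/2) * (g p + gsw p) := by
    intro p
    simp only [hhdef, hgdef, hgswdef, exp_add]
    ring
  have hg_int : Integrable g (P.prod P) :=
    ((lapM_integrable hX hnn hx hint).mul_prod (lap_integrable hX hnn hy)).sub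
      ((lapM_integrable hX hnn hy hint).mul_prod (lap_integrable hX hnn hx))
  have hgsw_int : Integrable gsw (P.prod P) :=
    ((lap_integrable hX hnn hy).mul_prod (lapM_integrable hX hnn hx hint)).sub
      ((lap_integrable hX hnn hx).mul_prod (lapM_integrable hX hnn hy hint))
  have hh_int : Integrable h (P.prod P) := by
    have := (hg_int.add hgsw_int).const_mul (1/2 : ℝ)
    exact this.congr (Filter.Eventually.of_forall fun p => (hfe p).symm)
  have hg_eq : ∫ p, g p ∂(P.prod P) = lapM P X x * lap P X y - lapM P X y * lap P X x := by
    have hs : ∫ p, g p ∂(P.prod P) =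
        (∫ p : Ω × Ω, X p.1 * rexp (-(x * X p.1)) * rexp (-(y * X p.2)) ∂(P.prod P)) -
        ∫ p : Ω × Ω, X p.1 * rexp (-(y * X p.1)) * rexp (-(x * X p.2)) ∂(P.prod P) :=
      integral_sub ((lapM_integrable hX hnn hx hint).mul_prod (lap_integrable hX hnn hy))
        ((lapM_integrable hX hnn hy hint).mul_prod (lap_integrable hX hnn hx))
    have e1 : ∫ p : Ω × Ω, X p.1 * rexp (-(x * X p.1)) * rexp (-(y * X p.2)) ∂(P.prod P)
        = lapM P X x * lap P X y :=
      integral_prod_mul (fun ω => X ω * rexp (-(x * X ω))) (fun ω => rexp (-(y * X ω)))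
    have e2 : ∫ p : Ω × Ω, X p.1 * rexp (-(y * X p.1)) * rexp (-(x * X p.2)) ∂(P.prod P)
        = lapM P X y * lap P X x :=
      integral_prod_mul (fun ω => X ω * rexp (-(y * X ω))) (fun ω => rexp (-(x * X ω)))
    rw [hs, e1, e2]
  have hgsw_eq : ∫ p, gsw p ∂(P.prod P) = lap P X y * lapM P X x - lap P X x * lapM P X y := by
    have hs : ∫ p, gsw p ∂(P.prod P) =
        (∫ p : Ω × Ω, rexp (-(y * X p.1)) * (X p.2 * rexp (-(x * X p.2))) ∂(P.prod P)) -
        ∫ p : Ω × Ω, rexp (-(x * X p.1)) * (X p.2 * rexp (-(y * X p.2))) ∂(P.prod P) :=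
      integral_sub ((lap_integrable hX hnn hy).mul_prod (lapM_integrable hX hnn hx hint))
        ((lap_integrable hX hnn hx).mul_prod (lapM_integrable hX hnn hy hint))
    have e1 : ∫ p : Ω × Ω, rexp (-(y * X p.1)) * (X p.2 * rexp (-(x * X p.2))) ∂(P.prod P)
        = lap P X y * lapM P X x :=
      integral_prod_mul (fun ω => rexp (-(y * X ω))) (fun ω => X ω * rexp (-(x * X ω)))
    have e2 : ∫ p : Ω × Ω, rexp (-(x * X p.1)) * (X p.2 * rexp (-(y * X p.2))) ∂(P.prod P)
        = lap P X x * lapM P X y :=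
      integral_prod_mul (fun ω => rexp (-(x * X ω))) (fun ω => X ω * rexp (-(y * X ω)))
    rw [hs, e1, e2]
  have hh_eq : ∫ p, h p ∂(P.prod P) = lapM P X x * lap P X y - lapM P X y * lap P X x := by
    calc ∫ p, h p ∂(P.prod P) = ∫ p, (1/2) * (g p + gsw p) ∂(P.prod P) :=
          integral_congr_ae (Filter.Eventually.of_forall hfe)
      _ = (1/2) * ∫ p, (g p + gsw p) ∂(P.prod P) := by rw [integral_const_mul]
      _ = (1/2) * (∫ p, g p ∂(P.prod P) + ∫ p, gsw p ∂(P.prod P)) := by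
          rw [integral_add hg_int hgsw_int]
      _ = lapM P X x * lap P X y - lapM P X y * lap P X x := by
          rw [hg_eq, hgsw_eq]; ring
  rw [← hh_eq]
  -- lower bound the integral by the set integral over A ×ˢ B
  set S : Set (Ω × Ω) := A ×ˢ B with hSdef
  have hSm : MeasurableSet S := hAm.prod hBm
  have hstep1 : ∫ p in S, h p ∂(P.prod P) ≤ ∫ p, h p ∂(P.prod P) := by
    apply setIntegral_le_integral hh_int
    filter_upwards [] with p
    have := pt_nonneg (u := X p.1) (v := X p.2) hxy
    simp only [hhdef, Pi.zero_apply]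
    linarith
  have hstep2 : ((b - r)^2 * (y - x) * rexp (-(2*(m:ℝ)*y)))/2 * ((P.prod P) S).toReal ≤
      ∫ p in S, h p ∂(P.prod P) := by
    apply setIntegral_ge_of_const_le_real hSm (measure_ne_top _ _)
    · rintro p ⟨⟨hp1, hp2⟩, ⟨hp3, hp4⟩⟩
      have := pt_lb (u := X p.1) (v := X p.2) hx hxy hp1 hp2 hrb hp3 hp4
      simp only [hhdef]
      linear_combination this / 2
    · exact hh_int.integrableOn
  have hmeas : ((P.prod P) S).toReal = (P A).toReal * (P B).toReal := by
    rw [hSdef, Measure.prod_prod, ENNReal.toReal_mul]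
  refine le_trans (le_of_eq ?_) (le_trans hstep2 hstep1)
  rw [hmeas]
  ring
end kappa

section convex
variable {Ω : Type*} [MeasurableSpace Ω] {P : Measure Ω} [IsProbabilityMeasure P] {X : Ω → ℝ}

lemma lap_ge_exp (hX : Measurable X) (hnn : ∀ᵐ ω ∂P, 0 ≤ X ω) (hint : Integrable X P)
    {s : ℝ} (hs : 0 ≤ s) :
    rexp (-(s * ∫ ω, X ω ∂P)) ≤ lap P X s := by
  have hJ := ConvexOn.map_average_le (μ := P) (f := fun ω => -(s * X ω)) (g := rexp)
    convexOn_exp continuous_exp.continuousOn isClosed_univ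
    (Filter.Eventually.of_forall fun ω => mem_univ _) ((hint.const_mul s).neg)
    (by exact lap_integrable hX hnn hs)
  rw [average_eq_integral, average_eq_integral] at hJ
  have h1 : ∫ ω, -(s * X ω) ∂P = -(s * ∫ ω, X ω ∂P) := by
    rw [integral_neg, integral_const_mul]
  rw [h1] at hJ
  exact hJ

lemma convexOn_log_lap_sub (hX : Measurable X) (hnn : ∀ᵐ ω ∂P, 0 ≤ X ω)
    (hint : Integrable X P) {κ M T : ℝ} (hT : 0 < T) (hκ0 : 0 ≤ κ) (hM : 0 < M)
    (hκ : ∀ x y : ℝ, 0 ≤ x → x ≤ y →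
      κ * rexp (-(2*M*y)) * (y-x) ≤ lapM P X x * lap P X y - lapM P X y * lap P X x) :
    ConvexOn ℝ (Icc 0 T)
      (fun s => Real.log (lap P X s) - (κ * rexp (-(2*M*T)))/2 * s^2) := by
  set m := κ * rexp (-(2*M*T)) with hm
  have hd : ∀ u : ℝ, 0 < u → HasDerivAt (fun s => Real.log (lap P X s) - m/2 * s^2)
      (-(lapM P X u) / lap P X u - m * u) u := by
    intro u hu
    have h1 : HasDerivAt (fun s => Real.log (lap P X s)) (-(lapM P X u) / lap P X u) u :=
      (lap_hasDerivAt hX hnn hint hu).log (lap_pos hX hnn hu.le).ne'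
    have h2 : HasDerivAt (fun s : ℝ => m/2 * s^2) (m * u) u := by
      have := (hasDerivAt_pow 2 u).const_mul (m/2)
      refine this.congr_deriv ?_
      simp [pow_one]
      ring
    exact h1.sub h2
  apply MonotoneOn.convexOn_of_deriv (convex_Icc 0 T)
  · apply ContinuousOn.sub
    · apply ContinuousOn.log
      · exact (lap_continuousOn hX hnn hint).mono (fun u hu => hu.1)
      · intro u hu; exact (lap_pos hX hnn hu.1).ne'
    · exact (continuous_const.mul (continuous_pow 2)).continuousOn
  · rw [interior_Icc]
    intro u hu
    exact (hd u hu.1).differentiableAt.differentiableWithinAt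
  · rw [interior_Icc]
    have hderiv : ∀ u ∈ Ioo (0:ℝ) T,
        deriv (fun s => Real.log (lap P X s) - m/2 * s^2) u
          = -(lapM P X u) / lap P X u - m * u := fun u hu => (hd u hu.1).deriv
    intro x hx y hy hxy
    rw [hderiv x hx, hderiv y hy]
    have hφx := lap_pos hX hnn hx.1.le
    have hφy := lap_pos hX hnn hy.1.le
    have hφx1 := lap_le_one hX hnn hx.1.le
    have hφy1 := lap_le_one hX hnn hy.1.le
    have hgap := hκ x y hx.1.le hxy
    have hexp : rexp (-(2*M*T)) ≤ rexp (-(2*M*y)) := by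
      apply exp_le_exp.2
      nlinarith [hy.2]
    have hnum0 : 0 ≤ m * (y - x) := by
      apply mul_nonneg (mul_nonneg hκ0 (exp_pos _).le)
      linarith
    have hnum1 : m * (y - x) ≤ lapM P X x * lap P X y - lapM P X y * lap P X x := by
      refine le_trans ?_ hgap
      rw [hm]
      have hyx : (0:ℝ) ≤ y - x := by linarith
      have := mul_le_mul_of_nonneg_left hexp hκ0
      nlinarith
    have hdiv : lapM P X x * lap P X y - lapM P X y * lap P X x ≤
        lapM P X x / lap P X x - lapM P X y / lap P X y := by
      rw [div_sub_div _ _ hφx.ne' hφy.ne']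
      rw [le_div_iff₀ (mul_pos hφx hφy)]
      have hnum : 0 ≤ lapM P X x * lap P X y - lapM P X y * lap P X x := le_trans hnum0 hnum1
      have hd1 : lap P X x * lap P X y ≤ 1 := by nlinarith
      nlinarith
    have key : m * (y - x) ≤ lapM P X x / lap P X x - lapM P X y / lap P X y :=
      le_trans hnum1 hdiv
    have hnegdiv : ∀ a c : ℝ, -a / c = -(a/c) := fun a c => neg_div c a
    rw [hnegdiv, hnegdiv]
    linarith
end convex

section jensen
variable {Ω : Type*} [MeasurableSpace Ω] {P : Measure Ω} [IsProbabilityMeasure P] {X : Ω → ℝ}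

lemma sum_sq_identity {n : ℕ} (hn : 0 < n) (b : Fin n → ℝ) (hsum : ∑ j, b j = 1) :
    ∑ j, (b j - 1/(n:ℝ))^2 = (∑ j, (b j)^2) - 1/(n:ℝ) := by
  have hn' : (n:ℝ) ≠ 0 := Nat.cast_ne_zero.2 hn.ne'
  have h1 : ∀ j : Fin n, (b j - 1/(n:ℝ))^2 = (b j)^2 - (2/n) * b j + 1/(n:ℝ)^2 := by
    intro j; field_simp; ring
  rw [Finset.sum_congr rfl (fun j _ => h1 j)]
  rw [Finset.sum_add_distrib, Finset.sum_sub_distrib, ← Finset.mul_sum, hsum,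
    Finset.sum_const, Finset.card_univ, Fintype.card_fin, nsmul_eq_mul]
  field_simp
  ring

lemma alg_gap {n : ℕ} (hn : 0 < n) {L S Q m t : ℝ}
    (h : L - m/2*(t/(n:ℝ))^2 ≤ (1/(n:ℝ)) * S - (1/(n:ℝ))*(m/2)*t^2*Q) :
    (n:ℝ)*L + m/2*t^2*Q - m/2*t^2/(n:ℝ) ≤ S := by
  have hnpos : (0:ℝ) < n := Nat.cast_pos.2 hn
  have hn' : (n:ℝ) ≠ 0 := hnpos.ne'
  have h2 := mul_le_mul_of_nonneg_left h hnpos.le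
  have e1 : (n:ℝ)*(L - m/2*(t/(n:ℝ))^2) = (n:ℝ)*L - m/2*t^2/(n:ℝ) := by
    field_simp
  have e2 : (n:ℝ)*((1/(n:ℝ)) * S - (1/(n:ℝ))*(m/2)*t^2*Q) = S - m/2*t^2*Q := by
    field_simp
  rw [e1, e2] at h2
  linarith

lemma prod_lap_ge (hX : Measurable X) (hnn : ∀ᵐ ω ∂P, 0 ≤ X ω) (hint : Integrable X P)
    {κ M : ℝ} (hκ0 : 0 < κ) (hM : 0 < M)
    (hκ : ∀ x y : ℝ, 0 ≤ x → x ≤ y →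
      κ * rexp (-(2*M*y)) * (y-x) ≤ lapM P X x * lap P X y - lapM P X y * lap P X x)
    {t : ℝ} (ht : 0 < t) {n : ℕ} (hn : 0 < n) (b : Fin n → ℝ)
    (hb : ∀ j, 0 ≤ b j) (hsum : ∑ j, b j = 1) :
    lap P X (t/n) ^ n +
      κ/2 * t^2 * rexp (-(((∫ ω, X ω ∂P) + 2*M)*t)) * (∑ j, (b j - 1/(n:ℝ))^2)
      ≤ ∏ j, lap P X (t * b j) := by
  have hn' : (n:ℝ) ≠ 0 := Nat.cast_ne_zero.2 hn.ne'
  have hnpos : (0:ℝ) < n := Nat.cast_pos.2 hn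
  set EX := ∫ ω, X ω ∂P with hEX
  have hEX0 : 0 ≤ EX := integral_nonneg_of_ae hnn
  set D := ∑ j, (b j - 1/(n:ℝ))^2 with hD
  have hD0 : 0 ≤ D := Finset.sum_nonneg fun j _ => sq_nonneg _
  have hbj1 : ∀ j, b j ≤ 1 := by
    intro j
    rw [← hsum]
    exact Finset.single_le_sum (fun i _ => hb i) (Finset.mem_univ j)
  -- Jensen for the strongly convex function
  have hconv := convexOn_log_lap_sub hX hnn hint ht hκ0.le hM hκ
  have hmem : ∀ j : Fin n, j ∈ Finset.univ → t * b j ∈ Icc 0 t := by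
    intro j _
    constructor
    · exact mul_nonneg ht.le (hb j)
    · nlinarith [hb j, hbj1 j]
  have hw1 : ∑ _j : Fin n, 1/(n:ℝ) = 1 := by
    rw [Finset.sum_const, Finset.card_univ, Fintype.card_fin, nsmul_eq_mul]
    field_simp
  have hJ := hconv.map_sum_le (fun j _ => by positivity) hw1 hmem
  set m := κ * rexp (-(2*M*t)) with hm
  have hpt : ∑ j : Fin n, (1/(n:ℝ)) • (t * b j) = t/n := by
    simp only [smul_eq_mul]
    rw [← Finset.mul_sum, ← Finset.mul_sum, hsum]
    field_simp
  rw [hpt] at hJ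
  simp only [smul_eq_mul] at hJ
  -- expand
  have hterm : ∀ j : Fin n, (1/(n:ℝ)) * (Real.log (lap P X (t * b j)) - m/2 * (t * b j)^2)
      = (1/(n:ℝ)) * Real.log (lap P X (t * b j)) - (1/(n:ℝ)) * (m/2) * t^2 * (b j)^2 := by
    intro j; ring
  rw [Finset.sum_congr rfl (fun j _ => hterm j), Finset.sum_sub_distrib,
    ← Finset.mul_sum] at hJ
  have hrw2 : ∑ j : Fin n, (1/(n:ℝ)) * (m/2) * t^2 * (b j)^2
      = (1/(n:ℝ)) * (m/2) * t^2 * ∑ j, (b j)^2 := by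
    rw [Finset.mul_sum]
  rw [hrw2] at hJ
  have hsq := sum_sq_identity hn b hsum
  have hDQ : D = (∑ j, (b j)^2) - 1/(n:ℝ) := hsq
  have halg := alg_gap hn hJ
  have e4 : m/2*t^2*D = m/2*t^2*(∑ j, (b j)^2) - m/2*t^2/(n:ℝ) := by
    rw [hDQ]; ring
  -- key log-sum bound
  have hlogsum : (n:ℝ) * Real.log (lap P X (t/n)) + m/2 * t^2 * D
      ≤ ∑ j, Real.log (lap P X (t * b j)) := by
    linarith
  -- exponentiate
  have hφpos : 0 < lap P X (t/n) := lap_pos hX hnn (div_pos ht hnpos).le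
  have hE0 : rexp ((n:ℝ) * Real.log (lap P X (t/n))) = lap P X (t/n) ^ n := by
    rw [exp_nat_mul, exp_log hφpos]
  have hE0ge : rexp (-(t*EX)) ≤ lap P X (t/n) ^ n := by
    rw [← hE0]
    apply exp_le_exp.2
    have hlg : -(t/n * EX) ≤ Real.log (lap P X (t/n)) := by
      rw [← Real.log_exp (-(t/n * EX))]
      apply Real.log_le_log (exp_pos _)
      exact lap_ge_exp hX hnn hint (div_pos ht hnpos).le
    calc -(t*EX) = (n:ℝ) * -((t/n) * EX) := by
          field_simp
      _ ≤ (n:ℝ) * Real.log (lap P X (t/n)) := by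
          apply mul_le_mul_of_nonneg_left hlg hnpos.le
  have hprod : ∏ j, lap P X (t * b j) = rexp (∑ j, Real.log (lap P X (t * b j))) := by
    rw [exp_sum]
    apply Finset.prod_congr rfl
    intro j _
    rw [exp_log (lap_pos hX hnn (mul_nonneg ht.le (hb j)))]
  rw [hprod]
  set δ := m/2 * t^2 * D with hδ
  have hδ0 : 0 ≤ δ := by
    apply mul_nonneg (mul_nonneg ?_ (sq_nonneg _)) hD0
    exact div_nonneg (mul_nonneg hκ0.le (exp_pos _).le) (by norm_num)
  calc lap P X (t/n) ^ n + κ/2 * t^2 * rexp (-((EX + 2*M)*t)) * D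
      = lap P X (t/n) ^ n + rexp (-(t*EX)) * δ := by
        rw [hδ, hm]
        have : rexp (-((EX + 2*M)*t)) = rexp (-(t*EX)) * rexp (-(2*M*t)) := by
          rw [← exp_add]; ring_nf
        rw [this]
        ring
    _ ≤ lap P X (t/n) ^ n + lap P X (t/n) ^ n * δ := by
        have := mul_le_mul_of_nonneg_right hE0ge hδ0
        linarith
    _ = lap P X (t/n) ^ n * (1 + δ) := by ring
    _ ≤ rexp ((n:ℝ) * Real.log (lap P X (t/n))) * rexp δ := by
        rw [hE0]
        apply mul_le_mul_of_nonneg_left ?_ (pow_nonneg hφpos.le n)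
        have := add_one_le_exp δ
        linarith
    _ = rexp ((n:ℝ) * Real.log (lap P X (t/n)) + δ) := by rw [← exp_add]
    _ ≤ rexp (∑ j, Real.log (lap P X (t * b j))) := by
        apply exp_le_exp.2
        linarith [hlogsum]
end jensen

lemma gamma_repr {q : ℝ} (hq : 0 < q) {x : ℝ} (hx : 0 ≤ x) :
    (ENNReal.ofReal x) ^ (-q) * ENNReal.ofReal (Real.Gamma q)
      = ∫⁻ t in Ioi (0:ℝ), ENNReal.ofReal (t ^ (q-1) * rexp (-(x * t))) := by
  rcases eq_or_lt_of_le hx with h0 | hpos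
  · rw [← h0]
    simp only [zero_mul, neg_zero, exp_zero, mul_one, ENNReal.ofReal_zero]
    rw [ENNReal.zero_rpow_of_neg (by linarith : -q < 0)]
    rw [ENNReal.top_mul (ne_of_gt (ENNReal.ofReal_pos.2 (Real.Gamma_pos_of_pos hq)))]
    symm
    by_contra hfin
    have hlt : ∫⁻ t in Ioi (0:ℝ), ENNReal.ofReal (t^(q-1)) < ⊤ := lt_top_iff_ne_top.2 hfin
    have hmono : ∫⁻ t in Ioi (1:ℝ), ENNReal.ofReal (t^(q-1)) < ⊤ :=
      lt_of_le_of_lt (lintegral_mono_set (Ioi_subset_Ioi zero_le_one)) hlt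
    have hIble : IntegrableOn (fun t : ℝ => t^(q-1)) (Ioi 1) := by
      constructor
      · exact (by measurability : Measurable (fun t : ℝ => t^(q-1))).aestronglyMeasurable
      · rw [hasFiniteIntegral_iff_ofReal ?_]
        · exact hmono
        · filter_upwards [self_mem_ae_restrict measurableSet_Ioi] with t ht
          have h1 : (0:ℝ) < t := lt_trans zero_lt_one ht
          positivity
    rw [integrableOn_Ioi_rpow_iff zero_lt_one] at hIble
    linarith
  · have hInt : IntegrableOn (fun t : ℝ => t ^ (q-1) * rexp (-(x * t))) (Ioi 0) := by
      have h := integrableOn_rpow_mul_exp_neg_mul_rpow (s := q-1) (p := 1) (b := x)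
        (by linarith) zero_lt_one hpos
      apply (h.congr_fun ?_ measurableSet_Ioi)
      intro t ht
      simp [Real.rpow_one]
    rw [← ofReal_integral_eq_lintegral_ofReal hInt ?_]
    · rw [integral_rpow_mul_exp_neg_mul_Ioi hq hpos]
      rw [ENNReal.ofReal_rpow_of_pos hpos, ← ENNReal.ofReal_mul (by positivity)]
      congr 1
      rw [one_div, Real.inv_rpow hx, ← Real.rpow_neg hx]
    · filter_upwards [self_mem_ae_restrict measurableSet_Ioi] with t ht
      have h1 : (0:ℝ) < t := ht
      positivity

section transform
variable {Ω : Type*} [MeasurableSpace Ω] (P : Measure Ω) [IsProbabilityMeasure P]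

lemma transform {q : ℝ} (hq : 0 < q) {W : Ω → ℝ} (hW : Measurable W)
    (hWnn : ∀ᵐ ω ∂P, 0 ≤ W ω) :
    (∫⁻ ω, (ENNReal.ofReal (W ω)) ^ (-q) ∂P) * ENNReal.ofReal (Real.Gamma q)
      = ∫⁻ t in Ioi (0:ℝ), ENNReal.ofReal (t ^ (q-1)) * ENNReal.ofReal (lap P W t) := by
  have hmeasW : Measurable fun ω => (ENNReal.ofReal (W ω)) ^ (-q) :=
    (hW.ennreal_ofReal).pow_const _
  rw [← lintegral_mul_const' _ _ ENNReal.ofReal_ne_top]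
  have hstep1 : ∫⁻ ω, (ENNReal.ofReal (W ω)) ^ (-q) * ENNReal.ofReal (Real.Gamma q) ∂P
      = ∫⁻ ω, (∫⁻ t in Ioi (0:ℝ), ENNReal.ofReal (t ^ (q-1) * rexp (-(W ω * t))) ∂volume) ∂P := by
    apply lintegral_congr_ae
    filter_upwards [hWnn] with ω hω
    exact gamma_repr hq hω
  rw [hstep1]
  have hjoint : AEMeasurable (Function.uncurry fun (ω : Ω) (t : ℝ) =>
      ENNReal.ofReal (t ^ (q-1) * rexp (-(W ω * t))))
      (P.prod ((volume : Measure ℝ).restrict (Ioi 0))) := by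
    apply Measurable.aemeasurable
    apply Measurable.ennreal_ofReal
    apply Measurable.mul
    · exact (by measurability : Measurable (fun t : ℝ => t^(q-1))).comp measurable_snd
    · exact (((hW.comp measurable_fst).mul measurable_snd).neg).exp
  rw [lintegral_lintegral_swap hjoint]
  apply setLIntegral_congr_fun measurableSet_Ioi
  intro t ht
  have ht' : (0:ℝ) < t := ht
  have hsplit : ∀ ω : Ω, ENNReal.ofReal (t ^ (q-1) * rexp (-(W ω * t)))
      = ENNReal.ofReal (t ^ (q-1)) * ENNReal.ofReal (rexp (-(t * W ω))) := by
    intro ω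
    rw [← ENNReal.ofReal_mul (by positivity)]
    rw [mul_comm (W ω) t]
  calc ∫⁻ ω, ENNReal.ofReal (t ^ (q-1) * rexp (-(W ω * t))) ∂P
      = ∫⁻ ω, ENNReal.ofReal (t ^ (q-1)) * ENNReal.ofReal (rexp (-(t * W ω))) ∂P :=
        lintegral_congr fun ω => hsplit ω
    _ = ENNReal.ofReal (t ^ (q-1)) * ∫⁻ ω, ENNReal.ofReal (rexp (-(t * W ω))) ∂P :=
        lintegral_const_mul' _ _ ENNReal.ofReal_ne_top
    _ = ENNReal.ofReal (t ^ (q-1)) * ENNReal.ofReal (lap P W t) := by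
        congr 1
        rw [← ofReal_integral_eq_lintegral_ofReal (lap_integrable hW hWnn ht'.le)
          (Filter.Eventually.of_forall fun ω => (exp_pos _).le)]
        rfl
end transform

set_option maxHeartbeats 1000000 in
theorem stmt_15
    {Ω : Type*} [MeasurableSpace Ω] (P : Measure Ω) [IsProbabilityMeasure P]
    (q : ℝ) (hq : 0 < q)
    (Y : ℕ → Ω → ℝ) (hYm : ∀ i, Measurable (Y i))
    (hindep : ProbabilityTheory.iIndepFun Y P)
    (hident : ∀ i, Measure.map (Y i) P = Measure.map (Y 0) P)
    (hYnn : ∀ᵐ ω ∂P, 0 ≤ Y 0 ω)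
    (hYnc : ¬ ∃ c : ℝ, ∀ᵐ ω ∂P, Y 0 ω = c)
    (hYint : Integrable (Y 0) P) :
    ∃ c : ℝ, 0 < c ∧ ∀ n : ℕ, 0 < n → ∀ b : Fin n → ℝ,
      (∀ j, 0 ≤ b j) → ∑ j, b j = 1 →
      ∫⁻ ω, (ENNReal.ofReal (∑ j : Fin n, b j * Y j ω)) ^ (-q) ∂P ≥
        ∫⁻ ω, (ENNReal.ofReal (∑ j : Fin n, Y j ω / n)) ^ (-q) ∂P +
          ENNReal.ofReal (c * ∑ j, (b j - 1 / n) ^ 2) := by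
  -- basic facts about the common law
  have hYnn_j : ∀ j : ℕ, ∀ᵐ ω ∂P, 0 ≤ Y j ω := by
    intro j
    have hset : ∀ i : ℕ, {ω | ¬ 0 ≤ Y i ω} = (Y i) ⁻¹' (Iio 0) := by
      intro i; ext ω; simp [not_le]
    have h1 : P ((Y 0) ⁻¹' (Iio 0)) = 0 := by
      rw [← hset]; exact ae_iff.1 hYnn
    rw [ae_iff, hset j, ← Measure.map_apply (hYm j) measurableSet_Iio, hident j,
      Measure.map_apply (hYm 0) measurableSet_Iio]
    exact h1
  have hmgf_ident : ∀ (j : ℕ) (u : ℝ), mgf (Y j) P u = mgf (Y 0) P u := by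
    intro j u
    have hexp : ∀ i : ℕ, mgf (Y i) P u = ∫ x, rexp (u * x) ∂(Measure.map (Y i) P) := by
      intro i
      rw [integral_map (f := fun x : ℝ => rexp (u * x)) (hYm i).aemeasurable
        (Measurable.aestronglyMeasurable (by exact (measurable_id.const_mul u).exp))]
      rfl
    rw [hexp j, hexp 0, hident j]
  -- lap of a weighted sum is a product
  have hlapprod : ∀ (n : ℕ) (c : ℕ → ℝ) (t : ℝ),
      lap P (fun ω => ∑ j ∈ Finset.range n, c j * Y j ω) t
        = ∏ j ∈ Finset.range n, lap P (Y 0) (t * c j) := by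
    intro n c t
    have hXind : iIndepFun (fun j => fun ω => c j * Y j ω) P := by
      have := hindep.comp (fun j (x : ℝ) => c j * x) (fun j => measurable_id.const_mul _)
      exact this
    have hmeas : ∀ j, Measurable (fun ω => c j * Y j ω) := fun j => (hYm j).const_mul _
    have hmgf := hXind.mgf_sum hmeas (Finset.range n) (t := -t)
    have hW : lap P (fun ω => ∑ j ∈ Finset.range n, c j * Y j ω) t
        = mgf (∑ j ∈ Finset.range n, fun ω => c j * Y j ω) P (-t) := by
      simp only [lap, mgf, neg_mul]
      congr 1
      funext ω
      rw [Finset.sum_apply]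
    rw [hW, hmgf]
    apply Finset.prod_congr rfl
    intro j _
    have h1 : mgf (fun ω => c j * Y j ω) P (-t) = mgf (Y j) P (-(t * c j)) := by
      simp only [mgf]
      congr 1
      funext ω
      congr 1
      ring
    rw [h1, hmgf_ident j]
    simp only [lap, mgf, neg_mul]
  -- constants
  obtain ⟨κ, M, hκpos, hMpos, hκ⟩ := exists_kappa (hYm 0) hYnn hYint hYnc
  set EX := ∫ ω, Y 0 ω ∂P with hEXdef
  have hEX0 : 0 ≤ EX := integral_nonneg_of_ae hYnn
  set β := EX + 2*M with hβdef
  have hβ : 0 < β := by simp only [hβdef]; linarith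
  set c0 : ℝ := κ/2 * ((1/β)^(q+2) * Real.Gamma (q+2)) / Real.Gamma q with hc0def
  have hc0 : 0 < c0 := by
    apply div_pos
    · apply mul_pos (by linarith)
      exact mul_pos (rpow_pos_of_pos (by positivity) _) (Real.Gamma_pos_of_pos (by linarith))
    · exact Real.Gamma_pos_of_pos hq
  refine ⟨c0, hc0, ?_⟩
  intro n hn b hb hsum
  have hnR : (0:ℝ) < n := Nat.cast_pos.2 hn
  -- weight functions on ℕ
  set cb : ℕ → ℝ := fun j => if h : j < n then b ⟨j, h⟩ else 0 with hcbdef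
  set W : Ω → ℝ := fun ω => ∑ j ∈ Finset.range n, cb j * Y j ω with hWdef
  set U : Ω → ℝ := fun ω => ∑ j ∈ Finset.range n, (1/(n:ℝ)) * Y j ω with hUdef
  have hWmeas : Measurable W := by
    apply Finset.measurable_sum
    intro j _
    exact (hYm j).const_mul _
  have hUmeas : Measurable U := by
    apply Finset.measurable_sum
    intro j _
    exact (hYm j).const_mul _
  have hallnn : ∀ᵐ ω ∂P, ∀ j : ℕ, 0 ≤ Y j ω := ae_all_iff.2 hYnn_j
  have hcbnn : ∀ j, 0 ≤ cb j := by
    intro j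
    simp only [hcbdef]
    split
    · exact hb _
    · exact le_refl 0
  have hWnn : ∀ᵐ ω ∂P, 0 ≤ W ω := by
    filter_upwards [hallnn] with ω hω
    exact Finset.sum_nonneg fun j _ => mul_nonneg (hcbnn j) (hω j)
  have hUnn : ∀ᵐ ω ∂P, 0 ≤ U ω := by
    filter_upwards [hallnn] with ω hω
    exact Finset.sum_nonneg fun j _ => mul_nonneg (by positivity) (hω j)
  -- rewrite goal's integrands
  have hWeq : ∀ ω, (∑ j : Fin n, b j * Y j ω) = W ω := by
    intro ω
    simp only [hWdef]
    rw [← Fin.sum_univ_eq_sum_range (fun j => cb j * Y j ω) n]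
    apply Finset.sum_congr rfl
    intro j _
    congr 1
    simp only [hcbdef]
    rw [dif_pos j.isLt]
  have hUeq : ∀ ω, (∑ j : Fin n, Y j ω / (n:ℝ)) = U ω := by
    intro ω
    simp only [hUdef]
    rw [← Fin.sum_univ_eq_sum_range (fun j => (1/(n:ℝ)) * Y j ω) n]
    apply Finset.sum_congr rfl
    intro j _
    rw [one_div, inv_mul_eq_div]
  rw [show (∫⁻ ω, (ENNReal.ofReal (∑ j : Fin n, b j * Y j ω)) ^ (-q) ∂P)
      = ∫⁻ ω, (ENNReal.ofReal (W ω)) ^ (-q) ∂P from lintegral_congr fun ω => by rw [hWeq ω]]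
  rw [show (∫⁻ ω, (ENNReal.ofReal (∑ j : Fin n, Y j ω / (n:ℝ))) ^ (-q) ∂P)
      = ∫⁻ ω, (ENNReal.ofReal (U ω)) ^ (-q) ∂P from lintegral_congr fun ω => by rw [hUeq ω]]
  -- set D
  set D : ℝ := ∑ j, (b j - 1/(n:ℝ))^2 with hDdef
  have hD0 : 0 ≤ D := Finset.sum_nonneg fun j _ => sq_nonneg _
  -- transform on both sides
  have hTW := transform P hq hWmeas hWnn
  have hTU := transform P hq hUmeas hUnn
  -- product formulas
  have hlapW : ∀ t : ℝ, lap P W t = ∏ j : Fin n, lap P (Y 0) (t * b j) := by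
    intro t
    simp only [hWdef]
    rw [hlapprod n cb t, ← Fin.prod_univ_eq_prod_range (fun j => lap P (Y 0) (t * cb j)) n]
    apply Finset.prod_congr rfl
    intro j _
    congr 1
    simp only [hcbdef]
    rw [dif_pos j.isLt]
  have hlapU : ∀ t : ℝ, lap P U t = lap P (Y 0) (t/(n:ℝ)) ^ n := by
    intro t
    simp only [hUdef]
    rw [hlapprod n (fun _ => 1/(n:ℝ)) t]
    rw [Finset.prod_const, Finset.card_range]
    congr 1
    rw [mul_one_div]
  -- the pointwise core inequality on Ioi 0
  have hcore : ∀ t : ℝ, t ∈ Ioi (0:ℝ) →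
      ENNReal.ofReal (t ^ (q-1)) * ENNReal.ofReal (lap P U t) +
        ENNReal.ofReal (κ/2 * D) * ENNReal.ofReal (t ^ ((q+2)-1) * rexp (-(β * t)))
      ≤ ENNReal.ofReal (t ^ (q-1)) * ENNReal.ofReal (lap P W t) := by
    intro t ht
    have ht' : (0:ℝ) < t := ht
    have hgap := prod_lap_ge (hYm 0) hYnn hYint hκpos hMpos hκ ht' hn b hb hsum
    rw [← hlapU t, ← hlapW t] at hgap
    have htq : (0:ℝ) ≤ t ^ (q-1) := (rpow_pos_of_pos ht' _).le
    have hmul := mul_le_mul_of_nonneg_left hgap htq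
    have hrw : t ^ (q-1) * (lap P U t + κ/2 * t^2 * rexp (-(β*t)) * D)
        = t ^ (q-1) * lap P U t + (κ/2 * D) * (t ^ ((q+2)-1) * rexp (-(β*t))) := by
      have hpow : t ^ ((q+2)-1) = t ^ (q-1) * t^2 := by
        rw [← Real.rpow_natCast t 2, ← Real.rpow_add ht']
        congr 1
        push_cast
        ring
      rw [hpow]
      ring
    calc ENNReal.ofReal (t ^ (q-1)) * ENNReal.ofReal (lap P U t) +
          ENNReal.ofReal (κ/2 * D) * ENNReal.ofReal (t ^ ((q+2)-1) * rexp (-(β * t)))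
        = ENNReal.ofReal (t ^ (q-1) * lap P U t +
            (κ/2 * D) * (t ^ ((q+2)-1) * rexp (-(β*t)))) := by
          have hkD : (0:ℝ) ≤ κ/2 * D := mul_nonneg (by linarith) hD0
          rw [← ENNReal.ofReal_mul htq, ← ENNReal.ofReal_mul hkD,
            ← ENNReal.ofReal_add (mul_nonneg htq (lap_pos hUmeas hUnn ht'.le).le)
              (mul_nonneg hkD (by positivity))]
      _ ≤ ENNReal.ofReal (t ^ (q-1) * lap P W t) := by
          apply ENNReal.ofReal_le_ofReal
          rw [← hrw]
          exact hmul
      _ = ENNReal.ofReal (t ^ (q-1)) * ENNReal.ofReal (lap P W t) := by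
          rw [ENNReal.ofReal_mul htq]
  -- integrability of U and measurability of the uniform integrand
  have hYint_j : ∀ j : ℕ, Integrable (Y j) P := by
    intro j
    have h0 : Integrable (fun x : ℝ => x) (Measure.map (Y 0) P) :=
      (integrable_map_measure (Measurable.aestronglyMeasurable (by exact measurable_id))
        (hYm 0).aemeasurable).2 (by exact hYint)
    have h1 : Integrable (fun x : ℝ => x) (Measure.map (Y j) P) := by
      rw [hident j]; exact h0
    exact (integrable_map_measure (Measurable.aestronglyMeasurable (by exact measurable_id))
      (hYm j).aemeasurable).1 h1
  have hUint : Integrable U P := by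
    have : Integrable (fun ω => ∑ j ∈ Finset.range n, (1/(n:ℝ)) * Y j ω) P :=
      integrable_finset_sum _ (fun j _ => (hYint_j j).const_mul _)
    simpa only [hUdef] using this
  have hAmeas : AEMeasurable
      (fun t : ℝ => ENNReal.ofReal (t ^ (q-1)) * ENNReal.ofReal (lap P U t))
      ((volume : Measure ℝ).restrict (Ioi 0)) := by
    refine AEMeasurable.mul (f := fun t : ℝ => ENNReal.ofReal (t ^ (q-1)))
      (g := fun t : ℝ => ENNReal.ofReal (lap P U t)) ?_ ?_
    · exact ((by measurability : Measurable (fun t : ℝ => t^(q-1))).ennreal_ofReal).aemeasurable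
    · apply AEMeasurable.ennreal_ofReal
      exact ((lap_continuousOn hUmeas hUnn hUint).mono Ioi_subset_Ici_self).aemeasurable
        measurableSet_Ioi
  -- value of the gamma-type integral
  have hIγ : (∫⁻ t in Ioi (0:ℝ), ENNReal.ofReal (t ^ ((q+2)-1) * rexp (-(β * t))) ∂volume)
      = ENNReal.ofReal ((1/β)^(q+2) * Real.Gamma (q+2)) := by
    have hInt : IntegrableOn (fun t : ℝ => t ^ ((q+2)-1) * rexp (-(β * t))) (Ioi 0) := by
      have h := integrableOn_rpow_mul_exp_neg_mul_rpow (s := (q+2)-1) (p := 1) (b := β)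
        (by linarith) zero_lt_one hβ
      apply h.congr_fun ?_ measurableSet_Ioi
      intro t ht
      simp [Real.rpow_one]
    rw [← ofReal_integral_eq_lintegral_ofReal hInt ?_]
    · rw [integral_rpow_mul_exp_neg_mul_Ioi (by linarith) hβ]
    · filter_upwards [self_mem_ae_restrict measurableSet_Ioi] with t ht
      have h1 : (0:ℝ) < t := ht
      positivity
  have hkD : (0:ℝ) ≤ κ/2 * D := mul_nonneg (by linarith) hD0
  -- final chain
  have hGne : (ENNReal.ofReal (Real.Gamma q)) ≠ 0 :=
    (ENNReal.ofReal_pos.2 (Real.Gamma_pos_of_pos hq)).ne'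
  rw [ge_iff_le, ← ENNReal.mul_le_mul_iff_left hGne ENNReal.ofReal_ne_top]
  calc (∫⁻ ω, (ENNReal.ofReal (U ω)) ^ (-q) ∂P + ENNReal.ofReal (c0 * D))
        * ENNReal.ofReal (Real.Gamma q)
      = (∫⁻ ω, (ENNReal.ofReal (U ω)) ^ (-q) ∂P) * ENNReal.ofReal (Real.Gamma q)
        + ENNReal.ofReal (c0 * D) * ENNReal.ofReal (Real.Gamma q) := add_mul _ _ _
    _ = (∫⁻ t in Ioi (0:ℝ), ENNReal.ofReal (t ^ (q-1)) * ENNReal.ofReal (lap P U t))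
        + ENNReal.ofReal (κ/2 * D) * ENNReal.ofReal ((1/β)^(q+2) * Real.Gamma (q+2)) := by
        rw [hTU, ← ENNReal.ofReal_mul (mul_nonneg hc0.le hD0), ← ENNReal.ofReal_mul hkD]
        congr 2
        rw [hc0def]
        field_simp
    _ = (∫⁻ t in Ioi (0:ℝ), ENNReal.ofReal (t ^ (q-1)) * ENNReal.ofReal (lap P U t))
        + ∫⁻ t in Ioi (0:ℝ), ENNReal.ofReal (κ/2 * D)
            * ENNReal.ofReal (t ^ ((q+2)-1) * rexp (-(β * t))) ∂volume := by
        rw [lintegral_const_mul' _ _ ENNReal.ofReal_ne_top, hIγ]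
    _ = ∫⁻ t in Ioi (0:ℝ), (ENNReal.ofReal (t ^ (q-1)) * ENNReal.ofReal (lap P U t)
          + ENNReal.ofReal (κ/2 * D) * ENNReal.ofReal (t ^ ((q+2)-1) * rexp (-(β * t)))) ∂volume :=
        (lintegral_add_left' hAmeas _).symm
    _ ≤ ∫⁻ t in Ioi (0:ℝ), ENNReal.ofReal (t ^ (q-1)) * ENNReal.ofReal (lap P W t) ∂volume := by
        apply lintegral_mono_ae
        filter_upwards [self_mem_ae_restrict measurableSet_Ioi] with t ht
        exact hcore t ht
    _ = (∫⁻ ω, (ENNReal.ofReal (W ω)) ^ (-q) ∂P) * ENNReal.ofReal (Real.Gamma q) := hTW.symm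
end

section
/- Let 2 < p < ∞ and β_p = 2Γ(1+1/p). For every u₀ > 0 there exists c > 0 depending only on p and u₀ such that for all 0 < u < u₀, (1+u)^{1/2}·∫_ℝ exp(-β_p^p·u^{p/2}·|x|^p - πx²) dx ≥ 1 + c·u. -/
open MeasureTheory Real Set

lemma cont_exp_aux {p A B : ℝ} (hp : 0 ≤ p) :
    Continuous fun x : ℝ => exp (-A * |x| ^ p - B * x ^ 2) := by
  fun_prop (disch := intros; first | positivity | simp [hp])

lemma int_absrpow_exp (p A : ℝ) (hp : 0 ≤ p) (hA : 0 ≤ A) :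
    Integrable fun x : ℝ => exp (-A * |x| ^ p - π * x ^ 2) := by
  have hb : Integrable (fun x : ℝ => exp (-π * x ^ 2)) := integrable_exp_neg_mul_sq pi_pos
  refine hb.mono' (cont_exp_aux hp).aestronglyMeasurable (Filter.Eventually.of_forall fun x => ?_)
  rw [Real.norm_eq_abs, Real.abs_exp]
  apply exp_le_exp.2
  have : 0 ≤ A * |x| ^ p := mul_nonneg hA (rpow_nonneg (abs_nonneg x) p)
  nlinarith

lemma int_exp_sq_sq (B : ℝ) (hB : 0 ≤ B) :
    Integrable fun x : ℝ => exp (-B * x ^ 2 - π * x ^ 2) := by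
  have : (fun x : ℝ => exp (-B * x ^ 2 - π * x ^ 2)) = fun x : ℝ => exp (-(B + π) * x ^ 2) := by
    funext x; congr 1; ring
  rw [this]
  exact integrable_exp_neg_mul_sq (by positivity)

lemma int_exp_absrpow (p A : ℝ) (hp : 2 ≤ p) (hA : 0 < A) :
    Integrable fun x : ℝ => exp (-A * |x| ^ p) := by
  have hb : Integrable (fun x : ℝ => exp A * exp (-A * x ^ 2)) :=
    (integrable_exp_neg_mul_sq hA).const_mul (exp A)
  have hp0 : (0:ℝ) ≤ p := by linarith
  have hc : Continuous fun x : ℝ => exp (-A * |x| ^ p) := by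
    fun_prop (disch := intros; first | positivity | simp [hp0])
  refine hb.mono' hc.aestronglyMeasurable (Filter.Eventually.of_forall fun x => ?_)
  rw [Real.norm_eq_abs, Real.abs_exp, ← Real.exp_add]
  apply exp_le_exp.2
  rcases le_or_gt |x| 1 with h | h
  · have h1 : 0 ≤ A * |x| ^ p := mul_nonneg hA.le (rpow_nonneg (abs_nonneg x) p)
    have h2 : x ^ 2 ≤ 1 := by nlinarith [sq_abs x, abs_nonneg x]
    nlinarith
  · have h2 : |x| ^ (2 : ℝ) ≤ |x| ^ p := rpow_le_rpow_of_exponent_le h.le hp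
    have h3 : |x| ^ (2 : ℝ) = x ^ 2 := by
      rw [show (2:ℝ) = ((2:ℕ):ℝ) by norm_num, rpow_natCast, sq_abs]
    nlinarith [exp_pos A]

lemma integral_exp_absrpow (p A : ℝ) (hp : 0 < p) (hA : 0 < A) :
    ∫ x : ℝ, exp (-A * |x| ^ p) = A ^ (-1 / p) * (2 * Real.Gamma (1 / p + 1)) := by
  rw [integral_comp_abs (f := fun y => exp (-A * y ^ p)), integral_exp_neg_mul_rpow hp hA]
  ring

lemma key {p A B : ℝ} (hp : 2 < p) (hA : 0 < A) (hB : 0 < B)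
    (heq : ∫ x : ℝ, exp (-A * |x| ^ p) = ∫ x : ℝ, exp (-B * x ^ 2)) :
    ∫ x : ℝ, exp (-B * x ^ 2 - π * x ^ 2) < ∫ x : ℝ, exp (-A * |x| ^ p - π * x ^ 2) := by
  have hq0 : 0 < p - 2 := by linarith
  set x₀ := (B / A) ^ (1 / (p - 2)) with hx₀def
  have hx₀ : 0 < x₀ := rpow_pos_of_pos (div_pos hB hA) _
  have hx₀q : x₀ ^ (p - 2) = B / A := by
    rw [hx₀def, ← rpow_mul (div_pos hB hA).le, one_div_mul_cancel hq0.ne', rpow_one]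
  have hsplit : ∀ t : ℝ, 0 < t → t ^ p = t ^ (p - 2) * t ^ 2 := by
    intro t ht
    rw [← rpow_natCast t 2, ← rpow_add ht]
    norm_num
  have hcmp : ∀ t : ℝ, 0 ≤ t → t ≤ x₀ → A * t ^ p ≤ B * t ^ 2 := by
    intro t ht htx
    rcases ht.eq_or_lt with rfl | ht'
    · rw [Real.zero_rpow (by positivity : p ≠ 0)]; simp
    · have h2 : t ^ (p - 2) ≤ B / A := hx₀q ▸ rpow_le_rpow ht htx hq0.le
      rw [hsplit t ht']
      have ht2 : (0:ℝ) ≤ t ^ 2 := sq_nonneg t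
      calc A * (t ^ (p - 2) * t ^ 2) ≤ A * ((B / A) * t ^ 2) := by
            exact mul_le_mul_of_nonneg_left (mul_le_mul_of_nonneg_right h2 ht2) hA.le
        _ = B * t ^ 2 := by field_simp
  have hcmp' : ∀ t : ℝ, x₀ ≤ t → B * t ^ 2 ≤ A * t ^ p := by
    intro t htx
    have ht' : 0 < t := lt_of_lt_of_le hx₀ htx
    have h2 : B / A ≤ t ^ (p - 2) := hx₀q ▸ rpow_le_rpow hx₀.le htx hq0.le
    rw [hsplit t ht']
    have ht2 : (0:ℝ) ≤ t ^ 2 := sq_nonneg t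
    calc B * t ^ 2 = A * ((B / A) * t ^ 2) := by field_simp
      _ ≤ A * (t ^ (p - 2) * t ^ 2) :=
          mul_le_mul_of_nonneg_left (mul_le_mul_of_nonneg_right h2 ht2) hA.le
  have hcmps : ∀ t : ℝ, 0 < t → t < x₀ → A * t ^ p < B * t ^ 2 := by
    intro t ht htx
    have h2 : t ^ (p - 2) < B / A := hx₀q ▸ rpow_lt_rpow ht.le htx hq0
    rw [hsplit t ht]
    have ht2 : (0:ℝ) < t ^ 2 := by positivity
    calc A * (t ^ (p - 2) * t ^ 2) < A * ((B / A) * t ^ 2) := by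
          exact mul_lt_mul_of_pos_left (mul_lt_mul_of_pos_right h2 ht2) hA
      _ = B * t ^ 2 := by field_simp
  set h : ℝ → ℝ := fun x => exp (-A * |x| ^ p) - exp (-B * x ^ 2) with hh_def
  set w : ℝ → ℝ := fun x => exp (-π * x ^ 2) - exp (-π * x₀ ^ 2) with hw_def
  have hsign : ∀ x, 0 ≤ h x * w x := by
    intro x
    rcases le_total |x| x₀ with hle | hge
    · have h1 : A * |x| ^ p ≤ B * x ^ 2 := by
        have := hcmp |x| (abs_nonneg x) hle; rwa [sq_abs] at this
      have hhx : 0 ≤ h x := by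
        simp only [hh_def, sub_nonneg, exp_le_exp]; nlinarith
      have hwx : 0 ≤ w x := by
        have : x ^ 2 ≤ x₀ ^ 2 := by
          have := pow_le_pow_left₀ (abs_nonneg x) hle 2; rwa [sq_abs] at this
        simp only [hw_def, sub_nonneg, exp_le_exp]; nlinarith [pi_pos]
      exact mul_nonneg hhx hwx
    · have h1 : B * x ^ 2 ≤ A * |x| ^ p := by
        have := hcmp' |x| hge; rwa [sq_abs] at this
      have hhx : h x ≤ 0 := by
        simp only [hh_def, sub_nonpos, exp_le_exp]; nlinarith
      have hwx : w x ≤ 0 := by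
        have : x₀ ^ 2 ≤ x ^ 2 := by
          have := pow_le_pow_left₀ hx₀.le hge 2; rwa [sq_abs] at this
        simp only [hw_def, sub_nonpos, exp_le_exp]; nlinarith [pi_pos]
      nlinarith [mul_nonneg (neg_nonneg.2 hhx) (neg_nonneg.2 hwx)]
  have ih1 := int_exp_absrpow p A hp.le hA
  have ih2 := integrable_exp_neg_mul_sq hB
  have ig1 := int_absrpow_exp p A (by linarith) hA.le
  have ig2 := int_exp_sq_sq B hB.le
  have hexpand : (fun x => h x * w x) = fun x =>
      (exp (-A * |x| ^ p - π * x ^ 2) - exp (-B * x ^ 2 - π * x ^ 2)) -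
        exp (-π * x₀ ^ 2) * (exp (-A * |x| ^ p) - exp (-B * x ^ 2)) := by
    funext x
    simp only [hh_def, hw_def]
    rw [show -A * |x| ^ p - π * x ^ 2 = (-A * |x| ^ p) + (-π * x ^ 2) by ring, exp_add,
      show -B * x ^ 2 - π * x ^ 2 = (-B * x ^ 2) + (-π * x ^ 2) by ring, exp_add]
    ring
  have ig12 : Integrable (fun x : ℝ =>
      exp (-A * |x| ^ p - π * x ^ 2) - exp (-B * x ^ 2 - π * x ^ 2)) := ig1.sub ig2
  have ih12 : Integrable (fun x : ℝ =>
      exp (-π * x₀ ^ 2) * (exp (-A * |x| ^ p) - exp (-B * x ^ 2))) := (ih1.sub ih2).const_mul _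
  have ihw : Integrable (fun x => h x * w x) := by
    rw [hexpand]
    exact ig12.sub ih12
  have hint : ∫ x : ℝ, h x * w x =
      (∫ x : ℝ, exp (-A * |x| ^ p - π * x ^ 2)) - ∫ x : ℝ, exp (-B * x ^ 2 - π * x ^ 2) := by
    rw [hexpand, integral_sub ig12 ih12, integral_sub ig1 ig2,
      integral_const_mul, integral_sub ih1 ih2, heq, sub_self, mul_zero, sub_zero]
  have hpos : 0 < ∫ x : ℝ, h x * w x := by
    rw [integral_pos_iff_support_of_nonneg hsign ihw]
    have hsub : Ioo 0 x₀ ⊆ Function.support fun x => h x * w x := by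
      intro x hx
      have hax : |x| = x := abs_of_pos hx.1
      have hstrict : A * x ^ p < B * x ^ 2 := hcmps x hx.1 hx.2
      have hhx : 0 < h x := by
        simp only [hh_def, sub_pos, exp_lt_exp, hax]; nlinarith
      have hwx : 0 < w x := by
        have : x ^ 2 < x₀ ^ 2 := by nlinarith [hx.1, hx.2]
        simp only [hw_def, sub_pos, exp_lt_exp]; nlinarith [pi_pos]
      exact ne_of_gt (mul_pos hhx hwx)
    calc (0:ENNReal) < volume (Ioo 0 x₀) := by
          rw [Real.volume_Ioo]; simpa using hx₀
      _ ≤ _ := measure_mono hsub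
  linarith [hint ▸ hpos]

lemma int_absrpow_gauss_mul (p : ℝ) (hp : 0 < p) :
    Integrable fun x : ℝ => |x| ^ p * exp (-π * x ^ 2) := by
  have hb : Integrable (fun x : ℝ => exp (p ^ 2 / (2 * π)) * exp (-(π / 2) * x ^ 2)) :=
    (integrable_exp_neg_mul_sq (by positivity)).const_mul _
  have hc : Continuous fun x : ℝ => |x| ^ p * exp (-π * x ^ 2) := by
    fun_prop (disch := intros; first | positivity | simp [hp.le])
  refine hb.mono' hc.aestronglyMeasurable (Filter.Eventually.of_forall fun x => ?_)
  rw [Real.norm_eq_abs, abs_mul, abs_of_nonneg (rpow_nonneg (abs_nonneg x) p), Real.abs_exp,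
    ← Real.exp_add]
  rcases eq_or_ne x 0 with rfl | hx
  · rw [abs_zero, Real.zero_rpow hp.ne', zero_mul]
    positivity
  · have hx0 : 0 < |x| := abs_pos.2 hx
    have h1 : |x| ^ p = exp (Real.log |x| * p) := Real.rpow_def_of_pos hx0 p
    rw [h1, ← Real.exp_add, Real.exp_le_exp]
    have h2 : Real.log |x| ≤ |x| := (Real.log_le_sub_one_of_pos hx0).trans (by linarith)
    have h3 : Real.log |x| * p ≤ |x| * p := mul_le_mul_of_nonneg_right h2 hp.le
    have h4 : |x| * p ≤ π / 2 * x ^ 2 + p ^ 2 / (2 * π) := by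
      rw [← sq_abs x, ← sub_nonneg]
      have e : π / 2 * |x| ^ 2 + p ^ 2 / (2 * π) - |x| * p = (π * |x| - p) ^ 2 / (2 * π) := by
        field_simp
        ring_nf
      rw [e]
      positivity
    linarith

lemma sqrt_lb (u₀ : ℝ) (hu₀ : 0 < u₀) (u : ℝ) (h0 : 0 ≤ u) (h1 : u ≤ u₀) :
    1 + 1 / (Real.sqrt (1 + u₀) + 1) * u ≤ (1 + u) ^ ((1:ℝ) / 2) := by
  set s := Real.sqrt (1 + u₀) with hs
  set a := 1 / (s + 1) with ha_def
  have hs2 : s ^ 2 = 1 + u₀ := Real.sq_sqrt (by linarith)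
  have hs0 : 0 ≤ s := Real.sqrt_nonneg _
  have hs1 : 1 ≤ s := by nlinarith
  have hsne : s + 1 ≠ 0 := by linarith
  have ha : a * (s + 1) = 1 := by rw [ha_def]; field_simp
  have ha0 : 0 < a := by rw [ha_def]; positivity
  have hkey : 2 * a + a ^ 2 * u₀ = 1 := by
    rw [ha_def]
    field_simp
    nlinarith [hs2]
  rw [← Real.sqrt_eq_rpow]
  rw [Real.le_sqrt (by positivity) (by linarith)]
  nlinarith [hkey, mul_nonneg (mul_nonneg (sq_nonneg a) h0) (sub_nonneg.2 h1)]

lemma norm_eq (p β u : ℝ) (hp : 0 < p) (hβ : 0 < β) (hu : 0 < u)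
    (hnorm : 2 * Real.Gamma (1 / p + 1) = β) :
    ∫ x : ℝ, exp (-(β ^ p * u ^ (p / 2)) * |x| ^ p) = ∫ x : ℝ, exp (-(π * u) * x ^ 2) := by
  rw [integral_exp_absrpow p _ hp (by positivity), hnorm, integral_gaussian]
  rw [mul_rpow (rpow_nonneg hβ.le p) (rpow_nonneg hu.le _), ← rpow_mul hβ.le, ← rpow_mul hu.le]
  rw [show p * (-1 / p) = -1 by field_simp, show p / 2 * (-1 / p) = -(1/2) by
    field_simp]
  rw [show π / (π * u) = u⁻¹ by field_simp, Real.sqrt_inv, Real.sqrt_eq_rpow,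
    Real.rpow_neg_one, Real.rpow_neg hu.le]
  field_simp

lemma gauss_shift (u : ℝ) (hu : 0 < u) :
    ∫ x : ℝ, exp (-(π * u) * x ^ 2 - π * x ^ 2) = ((1 + u) ^ ((1:ℝ) / 2))⁻¹ := by
  have e : (fun x : ℝ => exp (-(π * u) * x ^ 2 - π * x ^ 2)) =
      fun x => exp (-(π * (1 + u)) * x ^ 2) := by
    funext x; congr 1; ring
  rw [e, integral_gaussian, show π / (π * (1 + u)) = (1 + u)⁻¹ by
    field_simp, Real.sqrt_inv, Real.sqrt_eq_rpow]

lemma gauss_one : ∫ x : ℝ, exp (-π * x ^ 2) = 1 := by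
  rw [integral_gaussian, div_self pi_ne_zero, Real.sqrt_one]

set_option maxHeartbeats 1000000 in
theorem stmt_16 (p : ℝ) (hp : 2 < p) (u₀ : ℝ) (hu₀ : 0 < u₀) :
    ∃ c : ℝ, 0 < c ∧ ∀ u : ℝ, 0 < u → u < u₀ →
      (1 + u) ^ ((1 : ℝ) / 2) *
        ∫ x : ℝ, Real.exp (-(2 * Real.Gamma (1 + 1 / p)) ^ p * u ^ (p / 2) * |x| ^ p
          - π * x ^ 2) ≥ 1 + c * u := by
  have hp0 : 0 < p := by linarith
  have hβ : 0 < 2 * Real.Gamma (1 + 1 / p) := by positivity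
  set β := 2 * Real.Gamma (1 + 1 / p) with hβdef
  have hnorm : 2 * Real.Gamma (1 / p + 1) = β := by rw [hβdef, add_comm (1/p) 1]
  set J : ℝ → ℝ := fun u => ∫ x : ℝ, exp (-β ^ p * u ^ (p / 2) * |x| ^ p - π * x ^ 2)
    with hJdef
  have hβp : 0 < β ^ p := rpow_pos_of_pos hβ p
  have hJeq : ∀ u : ℝ, J u = ∫ x : ℝ, exp (-(β ^ p * u ^ (p / 2)) * |x| ^ p - π * x ^ 2) := by
    intro u
    show (∫ x : ℝ, exp (-β ^ p * u ^ (p / 2) * |x| ^ p - π * x ^ 2)) = _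
    congr 1
    funext x
    congr 1
    ring
  have hA : ∀ u : ℝ, 0 < u → 0 < β ^ p * u ^ (p / 2) := fun u hu => by positivity
  have hkey : ∀ u : ℝ, 0 < u → ((1 + u) ^ ((1:ℝ) / 2))⁻¹ < J u := by
    intro u hu
    rw [hJeq u, ← gauss_shift u hu]
    exact key hp (hA u hu) (by positivity) (norm_eq p β u hp0 hβ hu hnorm)
  have hJnn : ∀ u : ℝ, 0 ≤ J u := fun u => integral_nonneg fun x => (exp_pos _).le
  have hMint := int_absrpow_gauss_mul p hp0
  set M := ∫ x : ℝ, |x| ^ p * exp (-π * x ^ 2) with hMdef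
  have hM0 : 0 ≤ M := integral_nonneg fun x => by positivity
  have hlow : ∀ u : ℝ, 0 < u → 1 - β ^ p * M * u ^ (p / 2) ≤ J u := by
    intro u hu
    set c := β ^ p * u ^ (p / 2) with hc
    have hc0 : 0 ≤ c := (hA u hu).le
    have hpt : ∀ x : ℝ, exp (-π * x ^ 2) - c * (|x| ^ p * exp (-π * x ^ 2)) ≤
        exp (-c * |x| ^ p - π * x ^ 2) := by
      intro x
      have h2 : 1 - c * |x| ^ p ≤ exp (-(c * |x| ^ p)) := by
        linarith [Real.add_one_le_exp (-(c * |x| ^ p))]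
      have h3 := mul_le_mul_of_nonneg_right h2 (exp_pos (-π * x ^ 2)).le
      calc exp (-π * x ^ 2) - c * (|x| ^ p * exp (-π * x ^ 2))
          = (1 - c * |x| ^ p) * exp (-π * x ^ 2) := by ring
        _ ≤ exp (-(c * |x| ^ p)) * exp (-π * x ^ 2) := h3
        _ = exp (-c * |x| ^ p - π * x ^ 2) := by rw [← Real.exp_add]; congr 1; ring
    have hi1 : Integrable (fun x : ℝ => exp (-π * x ^ 2) - c * (|x| ^ p * exp (-π * x ^ 2))) :=
      (integrable_exp_neg_mul_sq pi_pos).sub (hMint.const_mul c)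
    have hmono := integral_mono hi1 (int_absrpow_exp p c (by linarith) hc0) hpt
    rw [integral_sub (integrable_exp_neg_mul_sq pi_pos) (hMint.const_mul c),
      integral_const_mul, gauss_one] at hmono
    rw [hJeq u]
    have he : β ^ p * M * u ^ (p / 2) = c * M := by rw [hc]; ring
    linarith
  have hJcont : ∀ v : ℝ, 0 < v → ContinuousAt J v := by
    intro v hv
    apply continuousAt_of_dominated (bound := fun x : ℝ => exp (-π * x ^ 2))
    · apply Filter.Eventually.of_forall
      intro u
      apply Continuous.aestronglyMeasurable
      fun_prop (disch := intros; first | positivity | simp [hp0.le])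
    · filter_upwards [eventually_gt_nhds hv] with u hu
      apply Filter.Eventually.of_forall
      intro x
      rw [Real.norm_eq_abs, Real.abs_exp, Real.exp_le_exp]
      have hh : 0 ≤ β ^ p * u ^ (p / 2) * |x| ^ p := by positivity
      nlinarith
    · exact integrable_exp_neg_mul_sq pi_pos
    · apply Filter.Eventually.of_forall
      intro x
      have h1 : ContinuousAt (fun u : ℝ => u ^ (p / 2)) v :=
        Real.continuousAt_rpow_const _ _ (Or.inl hv.ne')
      have hg : Continuous fun t : ℝ => exp (-β ^ p * t * |x| ^ p - π * x ^ 2) := by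
        fun_prop
      exact hg.continuousAt.comp h1
  set a := 1 / (Real.sqrt (1 + u₀) + 1) with ha_def
  have ha0 : 0 < a := by
    rw [ha_def]
    have := Real.sqrt_nonneg (1 + u₀)
    positivity
  set K := β ^ p * M * (1 + a * u₀) + 1 with hK_def
  have hK0 : 0 < K := by
    rw [hK_def]
    nlinarith [mul_nonneg (mul_nonneg hβp.le hM0) (by nlinarith : (0:ℝ) ≤ 1 + a * u₀)]
  have hq : 0 < p / 2 - 1 := by linarith
  set δ' := (a / (2 * K)) ^ ((p / 2 - 1)⁻¹) with hδ'_def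
  have hδ'pos : 0 < δ' := rpow_pos_of_pos (by positivity) _
  have hδ'q : δ' ^ (p / 2 - 1) = a / (2 * K) := by
    rw [hδ'_def, ← rpow_mul (by positivity : (0:ℝ) ≤ a / (2 * K)),
      inv_mul_cancel₀ hq.ne', rpow_one]
  set δ := min u₀ δ' with hδ_def
  have hδ0 : 0 < δ := lt_min hu₀ hδ'pos
  have hδu₀ : δ ≤ u₀ := min_le_left _ _
  have hsmall : ∀ u : ℝ, 0 < u → u < δ → 1 + a / 2 * u ≤ (1 + u) ^ ((1:ℝ) / 2) * J u := by
    intro u hu hud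
    have huu₀ : u ≤ u₀ := le_trans hud.le hδu₀
    have h1 := sqrt_lb u₀ hu₀ u hu.le huu₀
    rw [← ha_def] at h1
    have h2 := hlow u hu
    have hE0 : 0 ≤ β ^ p * M * u ^ (p / 2) := by positivity
    have h3 : (1 + a * u) * (1 - β ^ p * M * u ^ (p / 2)) ≤ (1 + u) ^ ((1:ℝ) / 2) * J u := by
      rcases le_or_gt (1 - β ^ p * M * u ^ (p / 2)) 0 with hE | hE
      · have hnn : 0 ≤ (1 + u) ^ ((1:ℝ) / 2) * J u :=
          mul_nonneg (rpow_nonneg (by linarith) _) (hJnn u)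
        nlinarith [mul_nonpos_of_nonneg_of_nonpos (show (0:ℝ) ≤ 1 + a * u by nlinarith) hE]
      · calc (1 + a * u) * (1 - β ^ p * M * u ^ (p / 2))
            ≤ (1 + u) ^ ((1:ℝ) / 2) * (1 - β ^ p * M * u ^ (p / 2)) :=
              mul_le_mul_of_nonneg_right h1 hE.le
          _ ≤ (1 + u) ^ ((1:ℝ) / 2) * J u :=
              mul_le_mul_of_nonneg_left h2 (rpow_nonneg (by linarith) _)
    have hup : (0:ℝ) ≤ u ^ (p / 2) := rpow_nonneg hu.le _
    have h4 : K * u ^ (p / 2) ≤ a / 2 * u := by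
      have h5 : u ^ (p / 2) = u ^ (p / 2 - 1) * u := by
        rw [← Real.rpow_add_one hu.ne' (p / 2 - 1)]
        congr 1
        ring
      have h6 : u ^ (p / 2 - 1) ≤ δ' ^ (p / 2 - 1) :=
        Real.rpow_le_rpow hu.le (le_trans hud.le (min_le_right _ _)) hq.le
      rw [h5]
      calc K * (u ^ (p / 2 - 1) * u) ≤ K * (a / (2 * K) * u) := by
            apply mul_le_mul_of_nonneg_left _ hK0.le
            apply mul_le_mul_of_nonneg_right _ hu.le
            rw [← hδ'q]; exact h6
        _ = a / 2 * u := by field_simp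
    have h7 : β ^ p * M * u ^ (p / 2) * (1 + a * u) ≤ K * u ^ (p / 2) := by
      have h8 : 1 + a * u ≤ 1 + a * u₀ := by nlinarith
      calc β ^ p * M * u ^ (p / 2) * (1 + a * u)
          ≤ β ^ p * M * u ^ (p / 2) * (1 + a * u₀) := mul_le_mul_of_nonneg_left h8 hE0
        _ ≤ K * u ^ (p / 2) := by rw [hK_def]; nlinarith [hup]
    nlinarith [h3, h4, h7]
  set ψ : ℝ → ℝ := fun u => (1 + u) ^ ((1:ℝ) / 2) * J u with hψ_def
  have hψcont : ContinuousOn ψ (Icc δ u₀) := by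
    apply ContinuousOn.mul
    · exact ((Real.continuous_rpow_const (by norm_num : (0:ℝ) ≤ 1 / 2)).comp
        (continuous_const.add continuous_id)).continuousOn
    · intro v hv
      exact (hJcont v (lt_of_lt_of_le hδ0 hv.1)).continuousWithinAt
  obtain ⟨v, hvmem, hvmin⟩ := isCompact_Icc.exists_isMinOn (Set.nonempty_Icc.2 hδu₀) hψcont
  have hv0 : 0 < v := lt_of_lt_of_le hδ0 hvmem.1
  have hm : 0 < ψ v - 1 := by
    have hk := hkey v hv0
    have hpos : 0 < (1 + v) ^ ((1:ℝ) / 2) := rpow_pos_of_pos (by linarith) _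
    have h8 : (1 + v) ^ ((1:ℝ) / 2) * ((1 + v) ^ ((1:ℝ) / 2))⁻¹ <
        (1 + v) ^ ((1:ℝ) / 2) * J v := mul_lt_mul_of_pos_left hk hpos
    rw [mul_inv_cancel₀ hpos.ne'] at h8
    simp only [hψ_def]
    linarith
  set m := ψ v - 1 with hm_def
  refine ⟨min (a / 2) (m / u₀), lt_min (by positivity) (div_pos hm hu₀), ?_⟩
  intro u hu huu₀
  rw [ge_iff_le]
  have hcmin : min (a / 2) (m / u₀) ≤ a / 2 := min_le_left _ _
  rcases lt_or_ge u δ with hcase | hcase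
  · have hs := hsmall u hu hcase
    have hcu : min (a / 2) (m / u₀) * u ≤ a / 2 * u :=
      mul_le_mul_of_nonneg_right hcmin hu.le
    calc 1 + min (a / 2) (m / u₀) * u ≤ 1 + a / 2 * u := by linarith
      _ ≤ (1 + u) ^ ((1:ℝ) / 2) * J u := hs
  · have humem : u ∈ Icc δ u₀ := ⟨hcase, huu₀.le⟩
    have h9 : ψ v ≤ ψ u := hvmin humem
    have hcu : min (a / 2) (m / u₀) * u ≤ m := by
      calc min (a / 2) (m / u₀) * u ≤ m / u₀ * u :=
            mul_le_mul_of_nonneg_right (min_le_right _ _) hu.le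
        _ ≤ m / u₀ * u₀ := mul_le_mul_of_nonneg_left huu₀.le (by positivity)
        _ = m := by field_simp
    calc 1 + min (a / 2) (m / u₀) * u ≤ 1 + m := by linarith
      _ ≤ ψ u := by rw [hm_def]; linarith
      _ = (1 + u) ^ ((1:ℝ) / 2) * J u := rfl
end

section
/- For 2 < p < ∞ and any u > 0, ∫_ℝ exp(-β_p^p·u^{p/2}|x|^p - πx²) dx > (1+u)^{-1/2}, where β_p = 2Γ(1+1/p). -/
open MeasureTheory Real

private lemma aux_cont {c p : ℝ} (hp : 0 < p) :
    Continuous fun x : ℝ => Real.exp (-c * |x| ^ p) :=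
  Real.continuous_exp.comp (continuous_const.mul (continuous_abs.rpow_const fun _ => Or.inr hp.le))

private lemma aux_abs_sq (x : ℝ) : |x| ^ (2 : ℝ) = x ^ 2 := by
  rw [show (2:ℝ) = ((2:ℕ):ℝ) by norm_num, Real.rpow_natCast, sq_abs]

private lemma aux_integrable {c p : ℝ} (hc : 0 < c) (hp : 2 ≤ p) :
    Integrable (fun x : ℝ => Real.exp (-c * |x| ^ p)) := by
  have hcont := aux_cont (c := c) (p := p) (by linarith)
  refine Integrable.mono' ((integrable_exp_neg_mul_sq hc).const_mul (Real.exp c))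
    hcont.aestronglyMeasurable (Filter.Eventually.of_forall fun x => ?_)
  rw [Real.norm_eq_abs, abs_of_pos (Real.exp_pos _), ← Real.exp_add]
  apply Real.exp_le_exp.mpr
  have hb : x ^ 2 ≤ 1 + |x| ^ p := by
    rcases le_or_gt |x| 1 with h | h
    · have h1 : |x| ^ (2:ℝ) ≤ 1 := Real.rpow_le_one (abs_nonneg x) h (by norm_num)
      rw [aux_abs_sq x] at h1
      nlinarith [Real.rpow_nonneg (abs_nonneg x) p]
    · have h1 : |x| ^ (2:ℝ) ≤ |x| ^ p := Real.rpow_le_rpow_of_exponent_le h.le hp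
      rw [aux_abs_sq x] at h1
      linarith
  nlinarith

private lemma aux_key {c b p : ℝ} (hc : 0 < c) (hb : 0 < b) (hp : 2 < p)
    (heq : (∫ x : ℝ, Real.exp (-c * |x| ^ p)) = ∫ x : ℝ, Real.exp (-b * x ^ 2)) :
    (∫ x : ℝ, Real.exp (-b * x ^ 2) * Real.exp (-π * x ^ 2)) <
      ∫ x : ℝ, Real.exp (-c * |x| ^ p) * Real.exp (-π * x ^ 2) := by
  have hp0 : (0:ℝ) < p := by linarith
  have hp2 : (0:ℝ) < p - 2 := by linarith
  set r : ℝ := (b / c) ^ (p - 2 : ℝ)⁻¹ with hrdef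
  have hr0 : 0 < r := Real.rpow_pos_of_pos (div_pos hb hc) _
  have hr2 : r ^ (p - 2 : ℝ) = b / c := by
    rw [hrdef, ← Real.rpow_mul (div_pos hb hc).le, inv_mul_cancel₀ hp2.ne', Real.rpow_one]
  have hsplit : ∀ x : ℝ, |x| ^ p = |x| ^ (p - 2 : ℝ) * x ^ 2 := by
    intro x
    have h := Real.rpow_add' (abs_nonneg x) (show (p-2) + 2 ≠ 0 by norm_num; linarith)
    rw [show (p-2) + 2 = p by ring] at h
    rw [h, aux_abs_sq x]
  have hle : ∀ x : ℝ, |x| ≤ r → c * |x| ^ p ≤ b * x ^ 2 := by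
    intro x hx
    rw [hsplit x, ← mul_assoc]
    have h1 : |x| ^ (p-2:ℝ) ≤ b / c := hr2 ▸ Real.rpow_le_rpow (abs_nonneg x) hx hp2.le
    calc c * |x| ^ (p-2:ℝ) * x ^ 2 ≤ (c * (b/c)) * x^2 :=
        mul_le_mul_of_nonneg_right (mul_le_mul_of_nonneg_left h1 hc.le) (sq_nonneg x)
      _ = b * x^2 := by field_simp
  have hge : ∀ x : ℝ, r ≤ |x| → b * x ^ 2 ≤ c * |x| ^ p := by
    intro x hx
    rw [hsplit x, ← mul_assoc]
    have h1 : b / c ≤ |x| ^ (p-2:ℝ) := hr2 ▸ Real.rpow_le_rpow hr0.le hx hp2.le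
    calc b * x^2 = (c * (b/c)) * x^2 := by field_simp
      _ ≤ c * |x| ^ (p-2:ℝ) * x ^ 2 :=
        mul_le_mul_of_nonneg_right (mul_le_mul_of_nonneg_left h1 hc.le) (sq_nonneg x)
  have hstrict : c * |r/2| ^ p < b * (r/2) ^ 2 := by
    have hx0 : (0:ℝ) < r/2 := by linarith
    rw [hsplit (r/2), ← mul_assoc]
    have h1 : |r/2| ^ (p-2:ℝ) < b / c := by
      rw [← hr2]
      exact Real.rpow_lt_rpow (abs_nonneg _) (by rw [abs_of_pos hx0]; linarith) hp2
    have hx2 : (0:ℝ) < (r/2)^2 := by positivity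
    calc c * |r/2| ^ (p-2:ℝ) * (r/2)^2 < (c * (b/c)) * (r/2)^2 :=
        mul_lt_mul_of_pos_right (mul_lt_mul_of_pos_left h1 hc) hx2
      _ = b * (r/2)^2 := by field_simp
  -- pointwise nonnegativity
  have hφ : ∀ x : ℝ, 0 ≤ (Real.exp (-c * |x| ^ p) - Real.exp (-b * x ^ 2)) *
      (Real.exp (-π * x ^ 2) - Real.exp (-π * r ^ 2)) := by
    intro x
    rcases le_total |x| r with hx | hx
    · apply mul_nonneg
      · simp only [sub_nonneg]
        exact Real.exp_le_exp.mpr (by nlinarith [hle x hx])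
      · simp only [sub_nonneg]
        apply Real.exp_le_exp.mpr
        have hxx : x^2 ≤ r^2 := by nlinarith [abs_nonneg x, sq_abs x]
        nlinarith [Real.pi_pos]
    · have h1 : Real.exp (-c * |x| ^ p) - Real.exp (-b * x ^ 2) ≤ 0 := by
        simp only [sub_nonpos]
        exact Real.exp_le_exp.mpr (by nlinarith [hge x hx])
      have h2 : Real.exp (-π * x ^ 2) - Real.exp (-π * r ^ 2) ≤ 0 := by
        simp only [sub_nonpos]
        apply Real.exp_le_exp.mpr
        have hxx : r^2 ≤ x^2 := by nlinarith [abs_nonneg x, sq_abs x, hr0]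
        nlinarith [Real.pi_pos]
      nlinarith [h1, h2]
  have hφpos : 0 < (Real.exp (-c * |r/2| ^ p) - Real.exp (-b * (r/2) ^ 2)) *
      (Real.exp (-π * (r/2) ^ 2) - Real.exp (-π * r ^ 2)) := by
    apply mul_pos
    · simp only [sub_pos]
      exact Real.exp_lt_exp.mpr (by nlinarith [hstrict])
    · simp only [sub_pos]
      apply Real.exp_lt_exp.mpr
      nlinarith [Real.pi_pos, mul_pos hr0 hr0]
  -- integrability
  have hIf : Integrable (fun x : ℝ => Real.exp (-c * |x| ^ p)) := aux_integrable hc hp.le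
  have hIg : Integrable (fun x : ℝ => Real.exp (-b * x ^ 2)) := integrable_exp_neg_mul_sq hb
  have hIw : Integrable (fun x : ℝ => Real.exp (-π * x ^ 2)) := integrable_exp_neg_mul_sq pi_pos
  have hcontg : Continuous fun x : ℝ => Real.exp (-b * x ^ 2) :=
    Real.continuous_exp.comp (continuous_const.mul (continuous_pow 2))
  have hcontw : Continuous fun x : ℝ => Real.exp (-π * x ^ 2) :=
    Real.continuous_exp.comp (continuous_const.mul (continuous_pow 2))
  have hIfw : Integrable (fun x : ℝ => Real.exp (-c * |x| ^ p) * Real.exp (-π * x ^ 2)) := by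
    refine hIw.mono' (((aux_cont (by linarith)).mul hcontw)).aestronglyMeasurable
      (Filter.Eventually.of_forall fun x => ?_)
    rw [Real.norm_eq_abs, abs_of_pos (by positivity)]
    have h1 : Real.exp (-c * |x| ^ p) ≤ 1 := by
      rw [← Real.exp_zero]
      exact Real.exp_le_exp.mpr (by nlinarith [Real.rpow_nonneg (abs_nonneg x) p])
    nlinarith [Real.exp_pos (-π * x ^ 2), Real.exp_pos (-c * |x|^p)]
  have hIgw : Integrable (fun x : ℝ => Real.exp (-b * x ^ 2) * Real.exp (-π * x ^ 2)) := by
    have h : (fun x : ℝ => Real.exp (-b * x ^ 2) * Real.exp (-π * x ^ 2))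
        = fun x : ℝ => Real.exp (-(b + π) * x ^ 2) := by
      funext x; rw [← Real.exp_add]; congr 1; ring
    rw [h]
    exact integrable_exp_neg_mul_sq (by positivity)
  have hsum : (fun x : ℝ => (Real.exp (-c * |x|^p) - Real.exp (-b*x^2)) *
        (Real.exp (-π*x^2) - Real.exp (-π*r^2)))
      = fun x : ℝ => (Real.exp (-c*|x|^p) * Real.exp (-π*x^2)
          - Real.exp (-b*x^2) * Real.exp (-π*x^2))
        - (Real.exp (-c*|x|^p) - Real.exp (-b*x^2)) * Real.exp (-π*r^2) :=
    funext fun x => by ring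
  have hIφ : Integrable (fun x : ℝ => (Real.exp (-c * |x|^p) - Real.exp (-b*x^2)) *
      (Real.exp (-π*x^2) - Real.exp (-π*r^2))) := by
    rw [hsum]
    exact (hIfw.sub hIgw).sub ((hIf.sub hIg).mul_const _)
  have h0 : (∫ x : ℝ, (Real.exp (-c * |x| ^ p) - Real.exp (-b * x ^ 2)) * Real.exp (-π * r ^ 2)) = 0 := by
    rw [integral_mul_const, integral_sub hIf hIg, heq, sub_self, zero_mul]
  have hval : (∫ x : ℝ, (Real.exp (-c*|x|^p) - Real.exp (-b*x^2)) *
        (Real.exp (-π*x^2) - Real.exp (-π*r^2)))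
      = (∫ x : ℝ, Real.exp (-c*|x|^p) * Real.exp (-π*x^2))
        - ∫ x : ℝ, Real.exp (-b*x^2) * Real.exp (-π*x^2) := by
    have hIsub1 : Integrable (fun x : ℝ => Real.exp (-c*|x|^p) * Real.exp (-π*x^2)
        - Real.exp (-b*x^2) * Real.exp (-π*x^2)) := hIfw.sub hIgw
    have hIsub2 : Integrable (fun x : ℝ => (Real.exp (-c*|x|^p) - Real.exp (-b*x^2))
        * Real.exp (-π*r^2)) := (hIf.sub hIg).mul_const _
    rw [hsum, integral_sub hIsub1 hIsub2, integral_sub hIfw hIgw, h0, sub_zero]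
  have hpos : 0 < ∫ x : ℝ, (Real.exp (-c*|x|^p) - Real.exp (-b*x^2)) *
      (Real.exp (-π*x^2) - Real.exp (-π*r^2)) := by
    rw [integral_pos_iff_support_of_nonneg hφ hIφ]
    have hcontφ : Continuous (fun x : ℝ => (Real.exp (-c*|x|^p) - Real.exp (-b*x^2)) *
        (Real.exp (-π*x^2) - Real.exp (-π*r^2))) :=
      (((aux_cont (by linarith)).sub hcontg)).mul (hcontw.sub continuous_const)
    have hopen : IsOpen {x : ℝ | 0 < (Real.exp (-c*|x|^p) - Real.exp (-b*x^2)) *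
        (Real.exp (-π*x^2) - Real.exp (-π*r^2))} := isOpen_lt continuous_const hcontφ
    have h1 : 0 < volume {x : ℝ | 0 < (Real.exp (-c*|x|^p) - Real.exp (-b*x^2)) *
        (Real.exp (-π*x^2) - Real.exp (-π*r^2))} :=
      hopen.measure_pos volume ⟨r/2, hφpos⟩
    exact h1.trans_le (measure_mono fun x hx => ne_of_gt hx)
  linarith [hval ▸ hpos]

theorem stmt_17 (p : ℝ) (hp : 2 < p) (u : ℝ) (hu : 0 < u) :
    (∫ x : ℝ, Real.exp (-(2 * Real.Gamma (1 + 1 / p)) ^ p * u ^ (p / 2) * |x| ^ p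
      - π * x ^ 2)) > (1 + u) ^ (-(1 : ℝ) / 2) := by
  have hp0 : (0:ℝ) < p := by linarith
  have hΓ : 0 < Real.Gamma (1 + 1/p) := Real.Gamma_pos_of_pos (by positivity)
  set β : ℝ := 2 * Real.Gamma (1 + 1/p) with hβdef
  have hβ : 0 < β := by positivity
  have hc : 0 < β ^ p * u ^ (p/2) := by positivity
  have hfval : (∫ x : ℝ, Real.exp (-(β ^ p * u ^ (p/2)) * |x| ^ p)) = u ^ (-(1:ℝ)/2) := by
    rw [show (∫ x : ℝ, Real.exp (-(β ^ p * u ^ (p/2)) * |x| ^ p))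
        = 2 * ∫ x in Set.Ioi (0:ℝ), Real.exp (-(β ^ p * u ^ (p/2)) * x ^ p) from
      integral_comp_abs (f := fun y : ℝ => Real.exp (-(β ^ p * u ^ (p/2)) * y ^ p))]
    rw [integral_exp_neg_mul_rpow hp0 hc]
    have hcpow : (β ^ p * u ^ (p/2) : ℝ) ^ (-1/p : ℝ) = β⁻¹ * u ^ (-(1:ℝ)/2) := by
      rw [Real.mul_rpow (Real.rpow_nonneg hβ.le p) (Real.rpow_nonneg hu.le _),
          ← Real.rpow_mul hβ.le, ← Real.rpow_mul hu.le]
      congr 1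
      · rw [show p * (-1/p) = -1 by field_simp, Real.rpow_neg_one]
      · congr 1
        field_simp
    rw [hcpow, add_comm (1/p) 1, hβdef]
    have h2 : Real.Gamma (1+1/p) ≠ 0 := hΓ.ne'
    field_simp
  have hgval : (∫ x : ℝ, Real.exp (-(π*u) * x ^ 2)) = u ^ (-(1:ℝ)/2) := by
    rw [integral_gaussian, show π / (π * u) = u⁻¹ by field_simp,
      Real.sqrt_inv, Real.sqrt_eq_rpow, show (-(1:ℝ)/2) = -(1/2) by ring,
      Real.rpow_neg hu.le]
  have hgw : (∫ x : ℝ, Real.exp (-(π*u) * x^2) * Real.exp (-π * x^2)) = (1+u) ^ (-(1:ℝ)/2) := by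
    have h : (fun x : ℝ => Real.exp (-(π*u) * x^2) * Real.exp (-π * x^2))
        = fun x : ℝ => Real.exp (-(π*(1+u)) * x^2) := by
      funext x; rw [← Real.exp_add]; congr 1; ring
    rw [h, integral_gaussian, show π / (π*(1+u)) = (1+u)⁻¹ by field_simp,
      Real.sqrt_inv, Real.sqrt_eq_rpow, show (-(1:ℝ)/2) = -(1/2) by ring,
      Real.rpow_neg (by positivity)]
  have hLHS : (∫ x : ℝ, Real.exp (-β ^ p * u ^ (p / 2) * |x| ^ p - π * x ^ 2))
      = ∫ x : ℝ, Real.exp (-(β ^ p * u ^ (p/2)) * |x| ^ p) * Real.exp (-π * x ^ 2) := by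
    congr 1
    funext x
    rw [← Real.exp_add]
    congr 1
    ring
  rw [hLHS, gt_iff_lt, ← hgw]
  exact aux_key hc (by positivity) hp (hfval.trans hgval.symm)
end
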